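/- arXiv:1211.2717 — 5 statements merged into one kernel-verified Lean document; each statement's English description precedes it below -/
import Mathlib

section
/- Let λ > 0, n ≥ 1, γ ≥ 0, and s ∈ [0,1]. Let X ∈ ℝ^{d×k}, let φ : ℝ^k → ℝ be convex with conjugate φ* that is γ-strongly convex with respect to ‖·‖_D on its effective domain, and let g* : ℝ^d → ℝ be differentiable and 1-smooth with respect to ‖·‖_{D'}, i.e. g*(v + Δ) ≤ g*(v) + ∇g*(v)ᵀΔ + ½‖Δ‖_{D'}² for all v, Δ. Let v ∈ ℝ^d, w = ∇g*(v), let u ∈ ℝ^k satisfy −u ∈ ∂φ(Xᵀw), and let α ∈ ℝ^k with φ*(−α) < ∞. Then [−φ*(−(α + s(u − α))) − λn·g*(v + (λn)^{-1} s X(u − α))] − [−φ*(−α) − λn·g*(v)] ≥ s[ φ(Xᵀw) + φ*(−α) + wᵀXα + (γ(1 − s)/2 − s‖X‖²/(2λn)) ‖u − α‖_D² ]. -/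
/-- the key per-coordinate inequality (core of Lemma 1 of the paper):
lower bound on the increase of the (proximal) dual objective produced by the step
`Δα = s(u − α)`. -/
theorem key_coordinate_inequality (d k n : ℕ) (hn : 0 < n)
    (lam γ s : ℝ) (hlam : 0 < lam) (hγ : 0 ≤ γ) (hs : s ∈ Set.Icc (0:ℝ) 1)
    (NP : (Fin k → ℝ) → ℝ)
    (hNP_nonneg : ∀ x, 0 ≤ NP x)
    (hNP_eq_zero : ∀ x, NP x = 0 ↔ x = 0)
    (hNP_add : ∀ x y, NP (x + y) ≤ NP x + NP y)
    (hNP_smul : ∀ (c : ℝ) (x : Fin k → ℝ), NP (c • x) = |c| * NP x)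
    (ND : (Fin k → ℝ) → ℝ)
    (hND : ∀ z, IsLUB {r : ℝ | ∃ x : Fin k → ℝ, NP x = 1 ∧ r = ∑ j, z j * x j} (ND z))
    (ND' : (Fin d → ℝ) → ℝ)
    (hND'_nonneg : ∀ x, 0 ≤ ND' x)
    (hND'_eq_zero : ∀ x, ND' x = 0 ↔ x = 0)
    (hND'_add : ∀ x y, ND' (x + y) ≤ ND' x + ND' y)
    (hND'_smul : ∀ (c : ℝ) (x : Fin d → ℝ), ND' (c • x) = |c| * ND' x)
    (X : Matrix (Fin d) (Fin k) ℝ) (XN : ℝ)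
    (hXN : IsLUB {r : ℝ | ∃ z : Fin k → ℝ, z ≠ 0 ∧ r = ND' (X.mulVec z) / ND z} XN)
    (φ : (Fin k → ℝ) → ℝ) (hφconv : ConvexOn ℝ Set.univ φ)
    (fconj : (Fin k → ℝ) → EReal)
    (hfconj : ∀ z, fconj z = ⨆ x : Fin k → ℝ, ((∑ j, x j * z j - φ x : ℝ) : EReal))
    -- γ-strong convexity of φ* w.r.t. ‖·‖_D (trivially true outside the
    -- effective domain, where the right-hand side is +∞):
    (hsc : ∀ (p q : Fin k → ℝ) (t : ℝ), 0 ≤ t → t ≤ 1 →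
      fconj (t • p + (1 - t) • q) ≤ ((t : ℝ) : EReal) * fconj p
        + ((1 - t : ℝ) : EReal) * fconj q
        - ((γ * t * (1 - t) / 2 * ND (p - q) ^ 2 : ℝ) : EReal))
    -- g* : ℝ^d → ℝ, differentiable with gradient map `Ggrad`, and 1-smooth w.r.t. ‖·‖_{D'}:
    (Gstar : (Fin d → ℝ) → ℝ) (Ggrad : (Fin d → ℝ) → (Fin d → ℝ))
    (hGdiff : ∀ v : Fin d → ℝ,
      HasGradientAt (fun x : EuclideanSpace ℝ (Fin d) => Gstar x)
        (WithLp.toLp 2 (Ggrad v) : EuclideanSpace ℝ (Fin d)) (WithLp.toLp 2 v : EuclideanSpace ℝ (Fin d)))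
    (hGsmooth : ∀ v Δ : Fin d → ℝ,
      Gstar (v + Δ) ≤ Gstar v + (∑ j, Ggrad v j * Δ j) + (1 / 2) * ND' Δ ^ 2)
    (v : Fin d → ℝ) (w : Fin d → ℝ) (hw : w = Ggrad v)
    (u : Fin k → ℝ)
    (hsub : ∀ y : Fin k → ℝ,
      φ (X.transpose.mulVec w) + ∑ j, (-(u j)) * (y j - X.transpose.mulVec w j) ≤ φ y)
    (α : Fin k → ℝ) (hαfin : fconj (-α) ≠ ⊤) :
    (-(fconj (-(α + s • (u - α))))
        - ((lam * n * Gstar (v + (lam * n)⁻¹ • X.mulVec (s • (u - α))) : ℝ) : EReal))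
      - (-(fconj (-α)) - ((lam * n * Gstar v : ℝ) : EReal))
    ≥ ((s : ℝ) : EReal) * ((φ (X.transpose.mulVec w) + (fconj (-α)).toReal
        + (∑ j, w j * X.mulVec α j)
        + (γ * (1 - s) / 2 - s * XN ^ 2 / (2 * lam * n)) * ND (u - α) ^ 2 : ℝ) : EReal) := by
  classical
  -- abbreviation for λ n
  set c : ℝ := lam * (n : ℝ) with hc_def
  have hc : 0 < c := mul_pos hlam (by exact_mod_cast hn)
  -- the unit sphere of NP is nonempty (otherwise hND is contradictory)
  by_cases hk : ∃ x : Fin k → ℝ, NP x = 1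
  swap
  · exfalso
    have h0 := hND 0
    have hempty : {r : ℝ | ∃ x : Fin k → ℝ, NP x = 1 ∧ r = ∑ j, (0 : Fin k → ℝ) j * x j}
        = (∅ : Set ℝ) := by
      ext r
      simp only [Set.mem_setOf_eq, Set.mem_empty_iff_false, iff_false, not_exists]
      rintro x ⟨hx, -⟩
      exact hk ⟨x, hx⟩
    rw [hempty] at h0
    have hub : (ND (0 : Fin k → ℝ) - 1) ∈ upperBounds (∅ : Set ℝ) := by
      intro r hr; exact absurd hr (Set.notMem_empty r)
    have := h0.2 hub
    linarith
  obtain ⟨x₀, hx₀⟩ := hk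
  -- basic facts about ND
  have hub : ∀ (z x : Fin k → ℝ), NP x = 1 → (∑ j, z j * x j) ≤ ND z := by
    intro z x hx
    exact (hND z).1 ⟨x, hx, rfl⟩
  have hNPneg : ∀ x : Fin k → ℝ, NP x = 1 → NP (-x) = 1 := by
    intro x hx
    have hrw : -x = (-1 : ℝ) • x := by funext j; simp
    rw [hrw, hNP_smul]; simp [hx]
  have hND_pos : ∀ z : Fin k → ℝ, z ≠ 0 → 0 < ND z := by
    intro z hz
    have hNPz : 0 < NP z := by
      rcases lt_or_eq_of_le (hNP_nonneg z) with h | h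
      · exact h
      · exact absurd ((hNP_eq_zero z).1 h.symm) hz
    have hx : NP ((NP z)⁻¹ • z) = 1 := by
      rw [hNP_smul, abs_of_pos (inv_pos.2 hNPz)]
      field_simp
    have hsum : (∑ j, z j * ((NP z)⁻¹ • z) j) = (NP z)⁻¹ * ∑ j, z j * z j := by
      rw [Finset.mul_sum]
      refine Finset.sum_congr rfl fun j _ => ?_
      simp [Pi.smul_apply, smul_eq_mul]; ring
    have hzz : 0 < ∑ j, z j * z j := by
      obtain ⟨j, hj⟩ := Function.ne_iff.1 hz
      refine Finset.sum_pos' (fun i _ => mul_self_nonneg _) ⟨j, Finset.mem_univ j, ?_⟩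
      exact mul_self_pos.2 hj
    have h1 := hub z _ hx
    rw [hsum] at h1
    have h2 : 0 < (NP z)⁻¹ * ∑ j, z j * z j := mul_pos (inv_pos.2 hNPz) hzz
    linarith
  -- fconj is never ⊥
  have hfc_nebot : ∀ z : Fin k → ℝ, fconj z ≠ ⊥ := by
    intro z h
    have h0 := le_iSup (fun x : Fin k → ℝ => (((∑ j, x j * z j) - φ x : ℝ) : EReal)) 0
    rw [← hfconj z, h] at h0
    exact (EReal.bot_lt_coe _).not_ge h0
  set A : ℝ := (fconj (-α)).toReal with hA_def
  have hA : fconj (-α) = (A : EReal) := (EReal.coe_toReal hαfin (hfc_nebot _)).symm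
  set Tw := X.transpose.mulVec w with hTw
  set Wu : ℝ := ∑ i, w i * X.mulVec u i with hWu_def
  set Wa : ℝ := ∑ i, w i * X.mulVec α i with hWa_def
  -- transpose / dot product juggling
  have htr : (∑ j, Tw j * u j) = Wu := by
    rw [hWu_def, hTw]
    simp only [Matrix.mulVec, dotProduct, Matrix.transpose_apply, Finset.sum_mul,
      Finset.mul_sum]
    rw [Finset.sum_comm]
    refine Finset.sum_congr rfl fun i _ => Finset.sum_congr rfl fun j _ => ?_
    ring
  have hBneg : (∑ j, Tw j * (-u) j) = -(∑ j, Tw j * u j) := by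
    rw [← Finset.sum_neg_distrib]
    refine Finset.sum_congr rfl fun j _ => ?_
    simp only [Pi.neg_apply]; ring
  -- Fenchel-Young equality at the subgradient point:
  have hB : fconj (-u) = ((-Wu - φ Tw : ℝ) : EReal) := by
    rw [hfconj]
    apply le_antisymm
    · refine iSup_le fun x => ?_
      refine EReal.coe_le_coe_iff.2 ?_
      have h1 := hsub x
      have h2 : (∑ j, (-(u j)) * (x j - Tw j))
          = (∑ j, x j * (-u) j) + (∑ j, Tw j * u j) := by
        rw [← Finset.sum_add_distrib]
        refine Finset.sum_congr rfl fun j _ => ?_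
        simp only [Pi.neg_apply]; ring
      rw [h2, htr] at h1
      linarith
    · have hval : (-Wu - φ Tw : ℝ) = (∑ j, Tw j * (-u) j) - φ Tw := by
        rw [hBneg, htr]
      rw [hval]
      exact le_iSup (fun x : Fin k → ℝ => (((∑ j, x j * (-u) j) - φ x : ℝ) : EReal)) Tw
  -- strong convexity applied at p = -α, q = -u, t = 1 - s
  set N : ℝ := ND (u - α) with hN_def
  have hss : (1 - (1 - s) : ℝ) = s := by ring
  have hsc' := hsc (-α) (-u) (1 - s) (by linarith [hs.2]) (by linarith [hs.1])
  rw [hss] at hsc'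
  have hd : (-α - -u : Fin k → ℝ) = u - α := by funext j; simp; ring
  rw [hd] at hsc'
  have hmid : ((1 - s) • (-α) + s • (-u) : Fin k → ℝ) = -(α + s • (u - α)) := by
    funext j
    simp only [Pi.add_apply, Pi.smul_apply, Pi.neg_apply, Pi.sub_apply, smul_eq_mul]
    ring
  rw [hmid, hA, hB] at hsc'
  have hscR : fconj (-(α + s • (u - α)))
      ≤ (((1 - s) * A + s * (-Wu - φ Tw) - γ * (1 - s) * s / 2 * N ^ 2 : ℝ) : EReal) := by
    refine le_trans hsc' (le_of_eq ?_)
    norm_cast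
  have hM_netop : fconj (-(α + s • (u - α))) ≠ ⊤ := ne_top_of_le_ne_top (EReal.coe_ne_top _) hscR
  set M : ℝ := (fconj (-(α + s • (u - α)))).toReal with hM_def
  have hM : fconj (-(α + s • (u - α))) = (M : EReal) :=
    (EReal.coe_toReal hM_netop (hfc_nebot _)).symm
  have hMR : M ≤ (1 - s) * A + s * (-Wu - φ Tw) - γ * (1 - s) * s / 2 * N ^ 2 := by
    rw [hM] at hscR
    exact_mod_cast hscR
  -- the smooth part
  set XD := X.mulVec (u - α) with hXD
  set P : ℝ := ND' XD with hP_def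
  have harg : c⁻¹ • X.mulVec (s • (u - α)) = (c⁻¹ * s) • XD := by
    rw [hXD, Matrix.mulVec_smul, smul_smul]
  have hts : 0 ≤ c⁻¹ * s := mul_nonneg (inv_nonneg.2 hc.le) hs.1
  have hsum2 : (∑ j, Ggrad v j * ((c⁻¹ * s) • XD) j) = (c⁻¹ * s) * ∑ j, w j * XD j := by
    rw [hw, Finset.mul_sum]
    refine Finset.sum_congr rfl fun j _ => ?_
    simp only [Pi.smul_apply, smul_eq_mul]; ring
  have hndx : ND' ((c⁻¹ * s) • XD) = (c⁻¹ * s) * ND' XD := by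
    rw [hND'_smul, abs_of_nonneg hts]
  have hGs := hGsmooth v ((c⁻¹ * s) • XD)
  rw [hsum2, hndx] at hGs
  -- operator norm bound
  have hXle : P ≤ XN * N := by
    by_cases hDel : u - α = 0
    · have hXD0 : XD = 0 := by rw [hXD, hDel, Matrix.mulVec_zero]
      have hP0 : P = 0 := by rw [hP_def, hXD0]; exact (hND'_eq_zero 0).2 rfl
      have hN0 : N = 0 := by
        rw [hN_def, hDel]
        have hset : {r : ℝ | ∃ x : Fin k → ℝ, NP x = 1 ∧ r = ∑ j, (0 : Fin k → ℝ) j * x j}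
            = {(0 : ℝ)} := by
          ext r
          simp only [Set.mem_setOf_eq, Set.mem_singleton_iff]
          constructor
          · rintro ⟨x, hx, rfl⟩; simp
          · rintro rfl; exact ⟨x₀, hx₀, by simp⟩
        have h0 := hND 0
        rw [hset] at h0
        exact h0.unique isLUB_singleton
      rw [hP0, hN0, mul_zero]
    · have hmem : ND' (X.mulVec (u - α)) / ND (u - α) ≤ XN :=
        hXN.1 ⟨u - α, hDel, rfl⟩
      have hNpos : 0 < ND (u - α) := hND_pos _ hDel
      rw [div_le_iff₀ hNpos] at hmem
      exact hmem
  have hPnn : 0 ≤ P := hND'_nonneg XD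
  have hPsq : P ^ 2 ≤ XN ^ 2 * N ^ 2 := by
    have h := pow_le_pow_left₀ hPnn hXle 2
    calc P ^ 2 ≤ (XN * N) ^ 2 := h
      _ = XN ^ 2 * N ^ 2 := by ring
  have hct : c * c⁻¹ = 1 := mul_inv_cancel₀ hc.ne'
  set W : ℝ := ∑ j, w j * XD j with hW_def
  have hWsplit : W = Wu - Wa := by
    rw [hW_def, hWu_def, hWa_def, ← Finset.sum_sub_distrib]
    refine Finset.sum_congr rfl fun j _ => ?_
    rw [hXD, Matrix.mulVec_sub]
    simp only [Pi.sub_apply]; ring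
  have hGineq : c * Gstar (v + (c⁻¹ * s) • XD)
      ≤ c * Gstar v + s * W + c⁻¹ * s ^ 2 * (XN ^ 2 * N ^ 2) / 2 := by
    have h1 := mul_le_mul_of_nonneg_left hGs hc.le
    have e : c * (Gstar v + c⁻¹ * s * W + 1 / 2 * (c⁻¹ * s * P) ^ 2)
        = c * Gstar v + (c * c⁻¹) * s * W + (c * c⁻¹) * (c⁻¹ * s ^ 2 * P ^ 2 / 2) := by
      ring
    rw [e, hct] at h1
    have h2 : c⁻¹ * s ^ 2 * P ^ 2 / 2 ≤ c⁻¹ * s ^ 2 * (XN ^ 2 * N ^ 2) / 2 := by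
      have := mul_le_mul_of_nonneg_left hPsq
        (mul_nonneg (inv_nonneg.2 hc.le) (sq_nonneg s))
      linarith
    linarith
  rw [hWsplit] at hGineq
  -- put everything together
  have hdiv : s * XN ^ 2 / (2 * lam * (n : ℝ)) = s * XN ^ 2 * c⁻¹ / 2 := by
    rw [show (2 * lam * (n : ℝ)) = 2 * c from by rw [hc_def]; ring, div_eq_mul_inv, mul_inv]
    ring
  rw [ge_iff_le, harg, hM, hA]
  have hgoal : s * (φ Tw + A + Wa + (γ * (1 - s) / 2 - s * XN ^ 2 / (2 * lam * (n : ℝ))) * N ^ 2)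
      ≤ (-M - c * Gstar (v + (c⁻¹ * s) • XD)) - (-A - c * Gstar v) := by
    rw [hdiv]
    nlinarith [hMR, hGineq]
  calc ((s : ℝ) : EReal) * ((φ Tw + A + Wa
        + (γ * (1 - s) / 2 - s * XN ^ 2 / (2 * lam * (n : ℝ))) * N ^ 2 : ℝ) : EReal)
      = ((s * (φ Tw + A + Wa
        + (γ * (1 - s) / 2 - s * XN ^ 2 / (2 * lam * (n : ℝ))) * N ^ 2) : ℝ) : EReal) := by
        norm_cast
    _ ≤ (((-M - c * Gstar (v + (c⁻¹ * s) • XD)) - (-A - c * Gstar v) : ℝ) : EReal) := by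
        exact_mod_cast hgoal
    _ = (-(M : EReal) - ((c * Gstar (v + (c⁻¹ * s) • XD) : ℝ) : EReal))
        - (-((A : ℝ) : EReal) - ((c * Gstar v : ℝ) : EReal)) := by
        norm_cast
end

section
/- Let λ > 0, γ ≥ 0, and s ∈ (0,1]. Assume each conjugate φ_i* is γ-strongly convex with respect to ‖·‖_D on its effective domain, g* is differentiable and 1-smooth with respect to ‖·‖_{D'}, and the Fenchel equality g(∇g*(v)) + g*(v) = vᵀ∇g*(v) holds for all v. Let α ∈ ℝ^{k×n} with each φ_i*(−α_i) finite, let v = v(α), w = ∇g*(v), and for each i let u_i satisfy −u_i ∈ ∂φ_i(X_iᵀw). For each i, let α^{[i]} be obtained from α by adding s(u_i − α_i) to column i only. Then the average dual improvement satisfies (1/n) ∑_{i=1}^n [D(α^{[i]}) − D(α)] ≥ (s/n)(P(w) − D(α)) − (s/n)² G/(2λ), where G = (1/n) ∑_{i=1}^n (‖X_i‖² − γ(1−s)λn/s) ‖u_i − α_i‖_D². -/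
private lemma erealCoeSum {ι : Type*} (t : Finset ι) (f : ι → ℝ) :
    ∑ i ∈ t, ((f i : ℝ) : EReal) = (((∑ i ∈ t, f i) : ℝ) : EReal) := by
  induction t using Finset.cons_induction with
  | empty => simp
  | cons a t ha ih => rw [Finset.sum_cons, Finset.sum_cons, ih, ← EReal.coe_add]

set_option maxHeartbeats 1000000 in
/-- Lemma 1 of the paper (expected dual improvement bound):
averaging the single-coordinate updates `α_i ← α_i + s(u_i − α_i)` gives
`(1/n) ∑_i [D(α^{[i]}) − D(α)] ≥ (s/n)(P(w) − D(α)) − (s/n)² G/(2λ)`. -/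
theorem key_lemma_expected_dual_improvement (d k n : ℕ) (hn : 0 < n)
    (lam γ s : ℝ) (hlam : 0 < lam) (hγ : 0 ≤ γ) (hs0 : 0 < s) (hs1 : s ≤ 1)
    (NP : (Fin k → ℝ) → ℝ)
    (hNP_nonneg : ∀ x, 0 ≤ NP x)
    (hNP_eq_zero : ∀ x, NP x = 0 ↔ x = 0)
    (hNP_add : ∀ x y, NP (x + y) ≤ NP x + NP y)
    (hNP_smul : ∀ (c : ℝ) (x : Fin k → ℝ), NP (c • x) = |c| * NP x)
    (ND : (Fin k → ℝ) → ℝ)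
    (hND : ∀ z, IsLUB {r : ℝ | ∃ x : Fin k → ℝ, NP x = 1 ∧ r = ∑ j, z j * x j} (ND z))
    (ND' : (Fin d → ℝ) → ℝ)
    (hND'_nonneg : ∀ x, 0 ≤ ND' x)
    (hND'_eq_zero : ∀ x, ND' x = 0 ↔ x = 0)
    (hND'_add : ∀ x y, ND' (x + y) ≤ ND' x + ND' y)
    (hND'_smul : ∀ (c : ℝ) (x : Fin d → ℝ), ND' (c • x) = |c| * ND' x)
    (X : Fin n → Matrix (Fin d) (Fin k) ℝ) (XN : Fin n → ℝ)
    (hXN : ∀ i, IsLUB {r : ℝ | ∃ z : Fin k → ℝ, z ≠ 0 ∧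
      r = ND' ((X i).mulVec z) / ND z} (XN i))
    (φ : Fin n → (Fin k → ℝ) → ℝ) (hφconv : ∀ i, ConvexOn ℝ Set.univ (φ i))
    (fconj : Fin n → (Fin k → ℝ) → EReal)
    (hfconj : ∀ i z, fconj i z = ⨆ x : Fin k → ℝ, ((∑ j, x j * z j - φ i x : ℝ) : EReal))
    -- γ-strong convexity of each φ_i* w.r.t. ‖·‖_D (trivially true outside the
    -- effective domain, where the right-hand side is +∞):
    (hsc : ∀ i (p q : Fin k → ℝ) (t : ℝ), 0 ≤ t → t ≤ 1 →
      fconj i (t • p + (1 - t) • q) ≤ ((t : ℝ) : EReal) * fconj i p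
        + ((1 - t : ℝ) : EReal) * fconj i q
        - ((γ * t * (1 - t) / 2 * ND (p - q) ^ 2 : ℝ) : EReal))
    (g : (Fin d → ℝ) → ℝ) (hgconv : ConvexOn ℝ Set.univ g)
    (gconj : (Fin d → ℝ) → EReal)
    (hgconj : ∀ v, gconj v = ⨆ x : Fin d → ℝ, ((∑ j, x j * v j - g x : ℝ) : EReal))
    (hgfin : ∀ v, gconj v ≠ ⊤)
    -- g* is differentiable with gradient map `Ggrad` and 1-smooth w.r.t. ‖·‖_{D'}:
    (Ggrad : (Fin d → ℝ) → (Fin d → ℝ))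
    (hGdiff : ∀ v : Fin d → ℝ,
      HasGradientAt (fun x : EuclideanSpace ℝ (Fin d) => (gconj x).toReal)
        (WithLp.toLp 2 (Ggrad v) : EuclideanSpace ℝ (Fin d)) (WithLp.toLp 2 v : EuclideanSpace ℝ (Fin d)))
    (hGsmooth : ∀ v Δ : Fin d → ℝ,
      (gconj (v + Δ)).toReal ≤ (gconj v).toReal + (∑ j, Ggrad v j * Δ j)
        + (1 / 2) * ND' Δ ^ 2)
    -- Fenchel equality `g(∇g*(v)) + g*(v) = vᵀ∇g*(v)` for all v:
    (hFenchel : ∀ v : Fin d → ℝ, g (Ggrad v) + (gconj v).toReal = ∑ j, Ggrad v j * v j)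
    (P : (Fin d → ℝ) → ℝ)
    (hP : ∀ w, P w = (1 / n) * ∑ i, φ i ((X i).transpose.mulVec w) + lam * g w)
    (vmap : (Fin n → Fin k → ℝ) → (Fin d → ℝ))
    (hvmap : ∀ β, vmap β = (1 / (lam * n)) • ∑ i, (X i).mulVec (β i))
    (D : (Fin n → Fin k → ℝ) → EReal)
    (hD : ∀ β, D β = ((1 / n : ℝ) : EReal) * (∑ i, -(fconj i (-(β i))))
        - ((lam * (gconj (vmap β)).toReal : ℝ) : EReal))
    (α : Fin n → Fin k → ℝ) (hαfin : ∀ i, fconj i (-(α i)) ≠ ⊤)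
    (w : Fin d → ℝ) (hw : w = Ggrad (vmap α))
    (u : Fin n → Fin k → ℝ)
    (hsub : ∀ i (y : Fin k → ℝ),
      φ i ((X i).transpose.mulVec w)
        + ∑ j, (-(u i j)) * (y j - (X i).transpose.mulVec w j) ≤ φ i y)
    (αupd : Fin n → (Fin n → Fin k → ℝ))
    (hαupd : ∀ i, αupd i = Function.update α i (α i + s • (u i - α i)))
    (G : ℝ)
    (hG : G = (1 / n) * ∑ i, (XN i ^ 2 - γ * (1 - s) * lam * n / s) * ND (u i - α i) ^ 2) :
    ((1 / n : ℝ) : EReal) * (∑ i, (D (αupd i) - D α))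
      ≥ ((s / n : ℝ) : EReal) * (((P w : ℝ) : EReal) - D α)
        - (((s / n) ^ 2 * (G / (2 * lam)) : ℝ) : EReal) := by

  classical
  have hnR : (0:ℝ) < n := Nat.cast_pos.mpr hn
  have hnne : (n:ℝ) ≠ 0 := ne_of_gt hnR
  have hsne : s ≠ 0 := ne_of_gt hs0
  have hlamne : lam ≠ 0 := ne_of_gt hlam
  -- abbreviations
  set yw : Fin n → Fin k → ℝ := fun i => (X i).transpose.mulVec w with hyw
  set N : Fin n → ℝ := fun i => ND (u i - α i) with hN
  set Gv : ℝ := (gconj (vmap α)).toReal with hGv0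
  set A : Fin n → ℝ := fun i => ∑ j, (-(u i j)) * yw i j - φ i (yw i) with hA
  set B : Fin n → ℝ := fun i => (fconj i (-(α i))).toReal with hB0
  -- fconj is never ⊥
  have hbot : ∀ i z, fconj i z ≠ ⊥ := by
    intro i z hb
    have h1 : ((∑ j, (0:Fin k → ℝ) j * z j - φ i 0 : ℝ) : EReal) ≤ fconj i z := by
      rw [hfconj]
      exact le_iSup (fun x : Fin k → ℝ => ((∑ j, x j * z j - φ i x : ℝ) : EReal)) 0
    rw [hb, le_bot_iff] at h1
    exact EReal.coe_ne_bot _ h1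
  have hBco : ∀ i, fconj i (-(α i)) = ((B i : ℝ) : EReal) :=
    fun i => (EReal.coe_toReal (hαfin i) (hbot i _)).symm
  -- value of fconj at -(u i)
  have hfu : ∀ i, fconj i (-(u i)) = ((A i : ℝ) : EReal) := by
    intro i
    rw [hfconj]
    apply le_antisymm
    · apply iSup_le
      intro x
      apply EReal.coe_le_coe_iff.mpr
      have h1 : φ i (yw i) + ∑ j, (-(u i j)) * (x j - yw i j) ≤ φ i x := hsub i x
      have h2 : ∑ j, (-(u i j)) * (x j - yw i j)
          = (∑ j, (-(u i j)) * x j) - ∑ j, (-(u i j)) * yw i j := by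
        rw [← Finset.sum_sub_distrib]
        exact Finset.sum_congr rfl fun j _ => by ring
      have h3 : ∑ j, x j * (-(u i)) j = ∑ j, (-(u i j)) * x j :=
        Finset.sum_congr rfl fun j _ => by simp [Pi.neg_apply]; ring
      have hAi : A i = ∑ j, (-(u i j)) * yw i j - φ i (yw i) := rfl
      rw [h3, hAi]
      rw [h2] at h1
      linarith
    · have h1 := le_iSup (fun x : Fin k → ℝ => ((∑ j, x j * (-(u i)) j - φ i x : ℝ) : EReal)) (yw i)
      have h2 : A i = ∑ j, yw i j * (-(u i)) j - φ i (yw i) := by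
        have hAi : A i = ∑ j, (-(u i j)) * yw i j - φ i (yw i) := rfl
        rw [hAi]
        congr 1
        exact Finset.sum_congr rfl fun j _ => by simp [Pi.neg_apply]; ring
      rw [h2]
      exact h1
  -- negation invariance of ND
  have hNDneg : ∀ z, ND (-z) = ND z := by
    intro z
    have hset : {r : ℝ | ∃ x : Fin k → ℝ, NP x = 1 ∧ r = ∑ j, (-z) j * x j}
        = {r : ℝ | ∃ x : Fin k → ℝ, NP x = 1 ∧ r = ∑ j, z j * x j} := by
      ext r
      constructor
      · rintro ⟨x, hx, rfl⟩
        refine ⟨-x, ?_, ?_⟩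
        · have : (-x : Fin k → ℝ) = (-1 : ℝ) • x := by funext j; simp
          rw [this, hNP_smul]; simpa using hx
        · exact Finset.sum_congr rfl fun j _ => by simp
      · rintro ⟨x, hx, rfl⟩
        refine ⟨-x, ?_, ?_⟩
        · have : (-x : Fin k → ℝ) = (-1 : ℝ) • x := by funext j; simp
          rw [this, hNP_smul]; simpa using hx
        · exact Finset.sum_congr rfl fun j _ => by simp
    exact (hND (-z)).unique (hset ▸ hND z)
  -- strong convexity bound: fconj at the updated column
  have hscb : ∀ i, fconj i (-(αupd i i))
      ≤ ((s * A i + (1 - s) * B i - γ * s * (1 - s) / 2 * N i ^ 2 : ℝ) : EReal) := by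
    intro i
    have h := hsc i (-(u i)) (-(α i)) s hs0.le hs1
    have harg : s • (-(u i)) + (1 - s) • (-(α i)) = -(αupd i i) := by
      rw [hαupd, Function.update_self]
      funext j
      simp only [Pi.add_apply, Pi.smul_apply, Pi.neg_apply, Pi.sub_apply, smul_eq_mul]
      ring
    have hnd : ND ((-(u i)) - (-(α i))) = N i := by
      have h1 : (-(u i)) - (-(α i)) = -(u i - α i) := by abel
      rw [h1, hNDneg]
    rw [harg, hnd, hfu i, hBco i] at h
    calc fconj i (-(αupd i i)) ≤ _ := h
      _ = ((s * A i + (1 - s) * B i - γ * s * (1 - s) / 2 * N i ^ 2 : ℝ) : EReal) := by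
          norm_cast
  have hCtop : ∀ i, fconj i (-(αupd i i)) ≠ ⊤ := by
    intro i
    exact ne_top_of_le_ne_top (EReal.coe_ne_top _) (hscb i)
  set C : Fin n → ℝ := fun i => (fconj i (-(αupd i i))).toReal with hC0
  have hCco : ∀ i, fconj i (-(αupd i i)) = ((C i : ℝ) : EReal) :=
    fun i => (EReal.coe_toReal (hCtop i) (hbot i _)).symm
  have hC : ∀ i, C i ≤ s * A i + (1 - s) * B i - γ * s * (1 - s) / 2 * N i ^ 2 := by
    intro i
    have := hscb i
    rw [hCco i] at this
    exact EReal.coe_le_coe_iff.mp this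
  -- transpose-dot identity
  have hdot : ∀ (M : Matrix (Fin d) (Fin k) ℝ) (z : Fin k → ℝ) (wv : Fin d → ℝ),
      ∑ j, wv j * M.mulVec z j = ∑ m, z m * M.transpose.mulVec wv m := by
    intro M z wv
    simp only [Matrix.mulVec, dotProduct, Matrix.transpose_apply, Finset.mul_sum]
    rw [Finset.sum_comm]
    exact Finset.sum_congr rfl fun m _ => Finset.sum_congr rfl fun j _ => by ring
  set T : Fin n → ℝ := fun i => ∑ j, w j * (X i).mulVec (u i - α i) j with hT
  -- bound on ND' of the matrix image
  have hXb : ∀ i, ND' ((X i).mulVec (u i - α i)) ^ 2 ≤ XN i ^ 2 * N i ^ 2 := by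
    intro i
    by_cases h0 : u i - α i = 0
    · rw [h0, Matrix.mulVec_zero, (hND'_eq_zero 0).mpr rfl]
      have : (0:ℝ) ^ 2 = 0 := by norm_num
      rw [this]
      positivity
    · -- ND (u i - α i) > 0
      have hNPz : 0 < NP (u i - α i) := by
        rcases lt_or_eq_of_le (hNP_nonneg (u i - α i)) with h | h
        · exact h
        · exact absurd ((hNP_eq_zero _).mp h.symm) h0
      have hx0 : NP ((NP (u i - α i))⁻¹ • (u i - α i)) = 1 := by
        rw [hNP_smul, abs_inv, abs_of_pos hNPz]
        exact inv_mul_cancel₀ (ne_of_gt hNPz)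
      have hpos : 0 < N i := by
        have hmem : ((NP (u i - α i))⁻¹ * ∑ j, (u i - α i) j ^ 2)
            ∈ {r : ℝ | ∃ x : Fin k → ℝ, NP x = 1 ∧ r = ∑ j, (u i - α i) j * x j} := by
          refine ⟨(NP (u i - α i))⁻¹ • (u i - α i), hx0, ?_⟩
          rw [Finset.mul_sum]
          exact Finset.sum_congr rfl fun j _ => by simp [Pi.smul_apply, smul_eq_mul]; ring
        have hle := (hND (u i - α i)).1 hmem
        have hsq : 0 < ∑ j, (u i - α i) j ^ 2 := by
          rcases Function.ne_iff.mp h0 with ⟨j0, hj0⟩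
          apply Finset.sum_pos' (fun j _ => sq_nonneg _) ⟨j0, Finset.mem_univ j0, ?_⟩
          have : (u i - α i) j0 ≠ 0 := by simpa using hj0
          positivity
        calc (0:ℝ) < (NP (u i - α i))⁻¹ * ∑ j, (u i - α i) j ^ 2 := by positivity
          _ ≤ N i := hle
      have hq : ND' ((X i).mulVec (u i - α i)) / N i ≤ XN i :=
        (hXN i).1 ⟨u i - α i, h0, rfl⟩
      have h1 : ND' ((X i).mulVec (u i - α i)) ≤ XN i * N i := by
        rw [div_le_iff₀ hpos] at hq
        exact hq
      have h2 : 0 ≤ XN i * N i := le_trans (hND'_nonneg _) h1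
      calc ND' ((X i).mulVec (u i - α i)) ^ 2 ≤ (XN i * N i) ^ 2 :=
            pow_le_pow_left₀ (hND'_nonneg _) h1 2
        _ = XN i ^ 2 * N i ^ 2 := by ring
  -- the updated v
  have hvupd : ∀ i, vmap (αupd i) = vmap α + (s / (lam * n)) • (X i).mulVec (u i - α i) := by
    intro i
    rw [hvmap, hvmap]
    have hsum : ∑ i', (X i').mulVec (αupd i i')
        = (∑ i', (X i').mulVec (α i')) + s • (X i).mulVec (u i - α i) := by
      have h1 : ∀ i', (X i').mulVec (αupd i i')
          = (X i').mulVec (α i') + (if i' = i then s • (X i).mulVec (u i - α i) else 0) := by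
        intro i'
        by_cases h : i' = i
        · subst h
          rw [hαupd, Function.update_self, if_pos rfl, Matrix.mulVec_add,
            Matrix.mulVec_smul]
        · rw [hαupd, Function.update_of_ne h, if_neg h, add_zero]
      rw [Finset.sum_congr rfl fun i' _ => h1 i', Finset.sum_add_distrib]
      congr 1
      simp
    rw [hsum, smul_add, smul_smul]
    congr 2
    ring
  -- smoothness bound
  have hGvb : ∀ i, (gconj (vmap (αupd i))).toReal - Gv
      ≤ (s / (lam * n)) * T i + (1/2) * (s / (lam * n)) ^ 2 * (XN i ^ 2 * N i ^ 2) := by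
    intro i
    have h := hGsmooth (vmap α) ((s / (lam * n)) • (X i).mulVec (u i - α i))
    rw [← hvupd i] at h
    have hc : 0 < s / (lam * n) := by positivity
    have hdotΔ : ∑ j, Ggrad (vmap α) j * ((s / (lam * n)) • (X i).mulVec (u i - α i)) j
        = (s / (lam * n)) * T i := by
      rw [hT, Finset.mul_sum]
      refine Finset.sum_congr rfl fun j _ => ?_
      rw [hw]
      simp only [Pi.smul_apply, smul_eq_mul]
      ring
    have hND'Δ : ND' ((s / (lam * n)) • (X i).mulVec (u i - α i))
        = (s / (lam * n)) * ND' ((X i).mulVec (u i - α i)) := by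
      rw [hND'_smul, abs_of_pos hc]
    rw [hdotΔ, hND'Δ] at h
    have h2 : (1/2) * ((s / (lam * n)) * ND' ((X i).mulVec (u i - α i))) ^ 2
        ≤ (1/2) * (s / (lam * n)) ^ 2 * (XN i ^ 2 * N i ^ 2) := by
      have := hXb i
      nlinarith [sq_nonneg (s / (lam * n))]
    linarith
  -- D α as a real coercion
  set Dr : ℝ := (1 / n) * (∑ i, -(B i)) - lam * Gv with hDr
  have hDα : D α = ((Dr : ℝ) : EReal) := by
    rw [hD]
    have h1 : (∑ i, -(fconj i (-(α i)))) = (((∑ i, -(B i)) : ℝ) : EReal) := by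
      rw [Finset.sum_congr rfl fun i _ => by rw [hBco i, ← EReal.coe_neg]]
      exact erealCoeSum _ _
    rw [h1, hDr, hGv0]
    norm_cast
  -- D (αupd i) as a real coercion
  set DU : Fin n → ℝ := fun i =>
    (1 / n) * ((∑ i', -(B i')) + B i - C i) - lam * (gconj (vmap (αupd i))).toReal with hDU
  have hDupd : ∀ i, D (αupd i) = ((DU i : ℝ) : EReal) := by
    intro i
    rw [hD]
    have h1 : (∑ i', -(fconj i' (-(αupd i i'))))
        = (((∑ i', -(B i')) + B i - C i : ℝ) : EReal) := by
      have h2 : ∀ i', -(fconj i' (-(αupd i i')))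
          = (((Function.update (fun i'' => -(B i'')) i (-(C i))) i' : ℝ) : EReal) := by
        intro i'
        by_cases h : i' = i
        · subst h
          rw [Function.update_self, hCco i', EReal.coe_neg]
        · rw [Function.update_of_ne h]
          have : αupd i i' = α i' := by rw [hαupd, Function.update_of_ne h]
          rw [this, hBco i', EReal.coe_neg]
      rw [Finset.sum_congr rfl fun i' _ => h2 i']
      have h3 : ∑ i', (((Function.update (fun i'' => -(B i'')) i (-(C i))) i' : ℝ) : EReal)
          = (((∑ i', (Function.update (fun i'' => -(B i'')) i (-(C i))) i') : ℝ) : EReal) :=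
        erealCoeSum _ _
      rw [h3]
      congr 1
      rw [Finset.sum_update_of_mem (Finset.mem_univ i)]
      rw [show (Finset.univ : Finset (Fin n)) \ {i} = Finset.univ.erase i from by
        ext; simp [Finset.mem_erase, and_comm]]
      rw [← Finset.add_sum_erase Finset.univ (fun i'' => -(B i'')) (Finset.mem_univ i)]
      ring
    rw [h1]
    have hDUi : DU i = (1 / n) * ((∑ i', -(B i')) + B i - C i)
        - lam * (gconj (vmap (αupd i))).toReal := rfl
    rw [hDUi]
    norm_cast
  -- per-index real bound
  set Sa : Fin n → ℝ := fun i => ∑ m, α i m * yw i m with hSa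
  have hAT : ∀ i, A i + T i = -(φ i (yw i)) - Sa i := by
    intro i
    have h1 : T i = ∑ m, (u i - α i) m * yw i m := hdot (X i) (u i - α i) w
    have hAi : A i = ∑ j, (-(u i j)) * yw i j - φ i (yw i) := rfl
    have hSai : Sa i = ∑ m, α i m * yw i m := rfl
    have h3 : (∑ j, (-(u i j)) * yw i j) + (∑ m, (u i - α i) m * yw i m) = -(Sa i) := by
      rw [hSai, ← Finset.sum_neg_distrib, ← Finset.sum_add_distrib]
      refine Finset.sum_congr rfl fun m _ => ?_
      simp only [Pi.sub_apply]
      ring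
    rw [hAi, h1]
    linarith
  set RHSi : Fin n → ℝ := fun i =>
    (s / n) * (B i + φ i (yw i) + Sa i)
      - (s / n) ^ 2 / (2 * lam) * ((XN i ^ 2 - γ * (1 - s) * lam * n / s) * N i ^ 2) with hRHSi
  have hper : ∀ i, DU i - Dr ≥ RHSi i := by
    intro i
    have h1 : DU i - Dr = (1 / n) * (B i - C i) - lam * ((gconj (vmap (αupd i))).toReal - Gv) := by
      have hDUi : DU i = (1 / n) * ((∑ i', -(B i')) + B i - C i)
          - lam * (gconj (vmap (αupd i))).toReal := rfl
      rw [hDUi, hDr]; ring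
    have h2 : (1 / (n:ℝ)) * (B i - C i)
        ≥ (1 / n) * (B i - (s * A i + (1 - s) * B i - γ * s * (1 - s) / 2 * N i ^ 2)) := by
      apply mul_le_mul_of_nonneg_left _ (by positivity : (0:ℝ) ≤ 1 / n)
      linarith [hC i]
    have h3 : lam * ((gconj (vmap (αupd i))).toReal - Gv)
        ≤ lam * ((s / (lam * n)) * T i + (1/2) * (s / (lam * n)) ^ 2 * (XN i ^ 2 * N i ^ 2)) :=
      mul_le_mul_of_nonneg_left (hGvb i) hlam.le
    have hATi := hAT i
    have key : (1 / (n:ℝ)) * (B i - (s * A i + (1 - s) * B i - γ * s * (1 - s) / 2 * N i ^ 2))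
        - lam * ((s / (lam * n)) * T i + (1/2) * (s / (lam * n)) ^ 2 * (XN i ^ 2 * N i ^ 2))
        = RHSi i := by
      have hRi : RHSi i = (s / n) * (B i + φ i (yw i) + Sa i)
          - (s / n) ^ 2 / (2 * lam) * ((XN i ^ 2 - γ * (1 - s) * lam * n / s) * N i ^ 2) := rfl
      rw [hRi]
      have hAi : A i = -(φ i (yw i)) - Sa i - T i := by linarith
      rw [hAi]
      field_simp
      ring
    rw [h1]
    linarith
  -- global real inequality
  have hPD : P w - Dr = (1 / n) * ∑ i, (B i + φ i (yw i) + Sa i) := by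
    have hf := hFenchel (vmap α)
    rw [← hw] at hf
    have hv : ∑ j, w j * vmap α j = (1 / (lam * n)) * ∑ i, Sa i := by
      rw [hvmap]
      have h1 : ∑ j, w j * ((1 / (lam * (n:ℝ))) • ∑ i, (X i).mulVec (α i)) j
          = (1 / (lam * n)) * ∑ j, w j * (∑ i, (X i).mulVec (α i)) j := by
        rw [Finset.mul_sum]
        refine Finset.sum_congr rfl fun j _ => ?_
        simp only [Pi.smul_apply, smul_eq_mul]
        ring
      rw [h1]
      congr 1
      have h2 : ∀ j, w j * (∑ i, (X i).mulVec (α i)) j = ∑ i, w j * (X i).mulVec (α i) j := by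
        intro j
        rw [Finset.sum_apply, Finset.mul_sum]
      rw [Finset.sum_congr rfl fun j _ => h2 j, Finset.sum_comm]
      refine Finset.sum_congr rfl fun i _ => ?_
      have hSai : Sa i = ∑ m, α i m * yw i m := rfl
      rw [hSai]
      exact hdot (X i) (α i) w
    have hf2 : g w + Gv = ∑ j, w j * vmap α j := hf
    have h4 : lam * (g w + Gv) = (1 / n) * ∑ i, Sa i := by
      rw [hf2, hv]
      field_simp
    have hφB : ∑ i, (B i + φ i (yw i) + Sa i)
        = ((∑ i, B i) + ∑ i, φ i (yw i)) + ∑ i, Sa i := by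
      rw [Finset.sum_add_distrib, Finset.sum_add_distrib]
    have hnegB : ∑ i, -(B i) = -∑ i, B i := Finset.sum_neg_distrib _
    have hPw : P w = (1 / n) * ∑ i, φ i (yw i) + lam * g w := hP w
    rw [hPw, hDr, hnegB, hφB]
    linear_combination h4
  have hGsum : G = (1 / n) * ∑ i, (XN i ^ 2 - γ * (1 - s) * lam * n / s) * N i ^ 2 := hG
  have hmain : (1 / (n:ℝ)) * ∑ i, (DU i - Dr)
      ≥ (s / n) * (P w - Dr) - (s / n) ^ 2 * (G / (2 * lam)) := by
    have h1 : ∑ i, (DU i - Dr) ≥ ∑ i, RHSi i := Finset.sum_le_sum fun i _ => hper i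
    have h2 : ∑ i, RHSi i = (s / n) * (∑ i, (B i + φ i (yw i) + Sa i))
        - (s / n) ^ 2 / (2 * lam) * (∑ i, (XN i ^ 2 - γ * (1 - s) * lam * n / s) * N i ^ 2) := by
      have hRi : ∀ i, RHSi i = (s / n) * (B i + φ i (yw i) + Sa i)
          - (s / n) ^ 2 / (2 * lam) * ((XN i ^ 2 - γ * (1 - s) * lam * n / s) * N i ^ 2) :=
        fun i => rfl
      rw [Finset.sum_congr rfl fun i _ => hRi i, Finset.sum_sub_distrib,
        ← Finset.mul_sum, ← Finset.mul_sum]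
    have h3 : (1 / (n:ℝ)) * ∑ i, RHSi i
        = (s / n) * (P w - Dr) - (s / n) ^ 2 * (G / (2 * lam)) := by
      rw [h2, hPD, hGsum]
      field_simp
    have h4 : (1 / (n:ℝ)) * ∑ i, (DU i - Dr) ≥ (1 / (n:ℝ)) * ∑ i, RHSi i :=
      mul_le_mul_of_nonneg_left h1 (by positivity)
    linarith
  -- transfer to EReal
  have hdiff : ∀ i, D (αupd i) - D α = ((DU i - Dr : ℝ) : EReal) := by
    intro i
    rw [hDupd i, hDα]
    norm_cast
  rw [Finset.sum_congr rfl fun i _ => hdiff i, hDα]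
  have hsumco : (∑ i, ((DU i - Dr : ℝ) : EReal)) = (((∑ i, (DU i - Dr)) : ℝ) : EReal) :=
    erealCoeSum _ _
  rw [hsumco]
  rw [ge_iff_le, show ((s / (n:ℝ) : ℝ) : EReal) * (((P w : ℝ) : EReal) - ((Dr : ℝ) : EReal))
      - (((s / n) ^ 2 * (G / (2 * lam)) : ℝ) : EReal)
      = (((s / n) * (P w - Dr) - (s / n) ^ 2 * (G / (2 * lam)) : ℝ) : EReal) from by norm_cast,
    show ((1 / (n:ℝ) : ℝ) : EReal) * (((∑ i, (DU i - Dr)) : ℝ) : EReal)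
      = (((1 / n) * ∑ i, (DU i - Dr) : ℝ) : EReal) from by norm_cast]
  exact EReal.coe_le_coe_iff.mpr hmain
end

section
/- Let G, λ > 0, let n be a positive integer, and let (ε_t)_{t≥0} be a sequence of nonnegative reals such that for every t ≥ 1 and every s ∈ [0,1], ε_t ≤ (1 − s/n) ε_{t−1} + (s/n)² G/(2λ). Let t₀ = max(0, ⌈n log(2λn ε₀ / G)⌉). Then for every integer t ≥ t₀, ε_t ≤ 2G / (λ(2n + t − t₀)). -/
/-- deterministic recursion lemma for the dual sub-optimality sequence. -/
theorem sdca_recursion_lemma (G lam : ℝ) (hG : 0 < G) (hlam : 0 < lam)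
    (n : ℕ) (hn : 0 < n) (ε : ℕ → ℝ) (hε_nonneg : ∀ t, 0 ≤ ε t)
    (hrec : ∀ t : ℕ, 1 ≤ t → ∀ s ∈ Set.Icc (0:ℝ) 1,
      ε t ≤ (1 - s / n) * ε (t - 1) + (s / n) ^ 2 * (G / (2 * lam)))
    (t₀ : ℕ) (ht₀ : t₀ = (⌈(n : ℝ) * Real.log (2 * lam * n * ε 0 / G)⌉).toNat) :
    ∀ t : ℕ, t₀ ≤ t → ε t ≤ 2 * G / (lam * (2 * n + t - t₀)) := by
  have hn' : (0:ℝ) < n := by exact_mod_cast hn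
  have hn1 : (1:ℝ) ≤ n := by exact_mod_cast hn
  have hq : (0:ℝ) ≤ 1 - 1/n := by
    have : 1/(n:ℝ) ≤ 1 := by
      rw [div_le_one hn']; exact hn1
    linarith
  -- geometric decay bound
  have key : ∀ t : ℕ, ε t ≤ (1 - 1/n)^t * ε 0 + G/(2*lam*n) := by
    intro t
    induction t with
    | zero =>
      simp only [pow_zero, one_mul]
      have : 0 < G/(2*lam*n) := by positivity
      linarith
    | succ t ih =>
      have h1 := hrec (t+1) (by omega) 1 (by norm_num)
      simp only [Nat.add_sub_cancel] at h1
      have h2 : (1 - 1/(n:ℝ)) * ε t ≤ (1 - 1/n) * ((1 - 1/n)^t * ε 0 + G/(2*lam*n)) :=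
        mul_le_mul_of_nonneg_left ih hq
      have h3 : (1 - 1/(n:ℝ)) * ((1 - 1/n)^t * ε 0 + G/(2*lam*n)) + (1/n)^2 * (G/(2*lam))
          = (1 - 1/n)^(t+1) * ε 0 + G/(2*lam*n) := by
        rw [pow_succ]
        ring
      calc ε (t+1) ≤ (1 - 1/(n:ℝ)) * ε t + (1/n)^2 * (G/(2*lam)) := by
            simpa using h1
        _ ≤ (1 - 1/(n:ℝ)) * ((1 - 1/n)^t * ε 0 + G/(2*lam*n)) + (1/n)^2 * (G/(2*lam)) := by
            linarith
        _ = (1 - 1/n)^(t+1) * ε 0 + G/(2*lam*n) := h3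
  -- base bound at t₀
  have hbase : ε t₀ ≤ G / (lam * n) := by
    have hdecay : ((1:ℝ) - 1/n)^t₀ * ε 0 ≤ G/(2*lam*n) := by
      rcases eq_or_lt_of_le (hε_nonneg 0) with h0 | h0
      · rw [← h0, mul_zero]; positivity
      · -- ε 0 > 0
        have hX : 0 < 2 * lam * n * ε 0 / G := by positivity
        have ht₀' : (n:ℝ) * Real.log (2 * lam * n * ε 0 / G) ≤ t₀ := by
          rw [ht₀]
          calc (n:ℝ) * Real.log (2 * lam * n * ε 0 / G)
              ≤ (⌈(n : ℝ) * Real.log (2 * lam * n * ε 0 / G)⌉ : ℝ) := Int.le_ceil _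
            _ ≤ ((⌈(n : ℝ) * Real.log (2 * lam * n * ε 0 / G)⌉).toNat : ℝ) := by
                exact_mod_cast Int.self_le_toNat _
        have hexp1 : ((1:ℝ) - 1/n) ≤ Real.exp (-(1/n)) := by
          have := Real.add_one_le_exp (-(1/(n:ℝ)))
          linarith
        have hpow : ((1:ℝ) - 1/n)^t₀ ≤ Real.exp (-(1/n))^t₀ :=
          pow_le_pow_left₀ hq hexp1 t₀
        have hexp2 : Real.exp (-(1/(n:ℝ)))^t₀ = Real.exp (-(t₀/n)) := by
          rw [← Real.exp_nat_mul]; ring_nf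
        have hlog : Real.exp (-((t₀:ℝ)/n)) ≤ G / (2 * lam * n * ε 0) := by
          have h4 : -((t₀:ℝ)/n) ≤ -Real.log (2 * lam * n * ε 0 / G) := by
            rw [neg_le_neg_iff, le_div_iff₀ hn']
            nlinarith [ht₀']
          calc Real.exp (-((t₀:ℝ)/n)) ≤ Real.exp (-Real.log (2 * lam * n * ε 0 / G)) :=
                Real.exp_le_exp.mpr h4
            _ = (2 * lam * n * ε 0 / G)⁻¹ := by rw [Real.exp_neg, Real.exp_log hX]
            _ = G / (2 * lam * n * ε 0) := by rw [inv_div]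
        calc ((1:ℝ) - 1/n)^t₀ * ε 0 ≤ (G / (2 * lam * n * ε 0)) * ε 0 := by
              apply mul_le_mul_of_nonneg_right _ (le_of_lt h0)
              calc ((1:ℝ) - 1/n)^t₀ ≤ Real.exp (-(1/n))^t₀ := hpow
                _ = Real.exp (-(t₀/n)) := hexp2
                _ ≤ G / (2 * lam * n * ε 0) := hlog
          _ = G/(2*lam*n) := by field_simp
    have := key t₀
    have heq : G/(2*lam*n) + G/(2*lam*n) = G/(lam*n) := by field_simp; ring
    linarith
  -- main induction
  intro t ht
  induction t, ht using Nat.le_induction with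
  | base =>
    have heq : 2 * (n:ℝ) + t₀ - t₀ = 2 * n := by ring
    rw [heq]
    have : 2 * G / (lam * (2 * (n:ℝ))) = G / (lam * n) := by field_simp
    rw [this]; exact hbase
  | succ t ht ih =>
    set a : ℝ := 2 * n + t - t₀ with ha_def
    have htt : (t₀:ℝ) ≤ t := by exact_mod_cast ht
    have ha2 : (2:ℝ) ≤ a := by simp only [ha_def]; linarith
    have ha0 : (0:ℝ) < a := by linarith
    have ha2n : 2 * (n:ℝ) ≤ a := by simp only [ha_def]; linarith
    have hs : (2 * (n:ℝ) / a) ∈ Set.Icc (0:ℝ) 1 := by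
      constructor
      · positivity
      · rw [div_le_one ha0]; linarith
    have h := hrec (t+1) (by omega) (2 * n / a) hs
    simp only [Nat.add_sub_cancel] at h
    have hsn : (2 * (n:ℝ) / a) / n = 2 / a := by
      field_simp
    rw [hsn] at h
    have hq2 : (0:ℝ) ≤ 1 - 2/a := by
      have : 2/a ≤ 1 := by rw [div_le_one ha0]; exact ha2
      linarith
    have h2 : (1 - 2/a) * ε t ≤ (1 - 2/a) * (2*G/(lam*a)) :=
      mul_le_mul_of_nonneg_left ih hq2
    have h3 : (1 - 2/a) * (2*G/(lam*a)) + (2/a)^2 * (G/(2*lam)) = 2*G*(a-1)/(lam*a^2) := by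
      field_simp
      ring
    have h4 : 2*G*(a-1)/(lam*a^2) ≤ 2*G/(lam*(a+1)) := by
      rw [div_le_div_iff₀ (by positivity) (by positivity)]
      nlinarith [sq_nonneg a]
    have hcast : 2 * (n:ℝ) + ((t+1 : ℕ):ℝ) - t₀ = a + 1 := by
      push_cast
      simp only [ha_def]
      ring
    rw [hcast]
    calc ε (t+1) ≤ (1 - 2/a) * ε t + (2/a)^2 * (G/(2*lam)) := h
      _ ≤ (1 - 2/a) * (2*G/(lam*a)) + (2/a)^2 * (G/(2*lam)) := by linarith
      _ = 2*G*(a-1)/(lam*a^2) := h3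
      _ ≤ 2*G/(lam*(a+1)) := h4
end

section
/- Consider Prox-SDCA with Option I updates. Assume each φ_i is (1/γ)-smooth with respect to ‖·‖_P (equivalently, each φ_i* is γ-strongly convex with respect to ‖·‖_D), g is 1-strongly convex with respect to ‖·‖_{P'}, φ_i ≥ 0 for all i, (1/n)∑_i φ_i(0) ≤ 1, and ‖X_i‖ ≤ R for all i. Then for any ε_P > 0, if the number of iterations satisfies T ≥ (n + R²/(λγ)) · log((n + R²/(λγ))/ε_P), the expected duality gap satisfies E[P(w^{(T)}) − D(α^{(T)})] ≤ ε_P, where the expectation is over the i.i.d. uniformly random coordinate indices i_1,…,i_T used by the algorithm. -/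
section NormAux
variable {m : ℕ} {NP ND : (Fin m → ℝ) → ℝ}

theorem m_pos (hNP_eq_zero : ∀ x : Fin m → ℝ, NP x = 0 ↔ x = 0)
    (hND : ∀ z, IsLUB {r : ℝ | ∃ x : Fin m → ℝ, NP x = 1 ∧ r = ∑ j, z j * x j} (ND z))
    (hm : m = 0) : False := by
  subst hm
  have h := hND 0
  have hempty : {r : ℝ | ∃ x : Fin 0 → ℝ, NP x = 1 ∧ r = ∑ j, (0:Fin 0 → ℝ) j * x j} = ∅ := by
    ext r
    simp only [Set.mem_setOf_eq, Set.mem_empty_iff_false, iff_false]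
    rintro ⟨x, hx1, -⟩
    have : x = 0 := Subsingleton.elim x 0
    rw [this] at hx1
    rw [(hNP_eq_zero 0).mpr rfl] at hx1
    exact one_ne_zero hx1.symm
  rw [hempty] at h
  have := h.2 (show (ND 0 - 1) ∈ upperBounds (∅ : Set ℝ) by
    intro r hr; exact absurd hr (Set.notMem_empty r))
  linarith

theorem sphere_nonempty (hNP_nonneg : ∀ x : Fin m → ℝ, 0 ≤ NP x)
    (hNP_eq_zero : ∀ x : Fin m → ℝ, NP x = 0 ↔ x = 0)
    (hNP_smul : ∀ (c : ℝ) (x : Fin m → ℝ), NP (c • x) = |c| * NP x)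
    (hm : 0 < m) : ∃ x : Fin m → ℝ, NP x = 1 := by
  classical
  set e : Fin m → ℝ := fun j => if j = ⟨0, hm⟩ then 1 else 0 with he
  have hne : e ≠ 0 := by
    intro h
    have := congrFun h ⟨0, hm⟩
    simp [he] at this
  have hpos : 0 < NP e := lt_of_le_of_ne (hNP_nonneg e) (fun h => hne ((hNP_eq_zero e).mp h.symm))
  refine ⟨(NP e)⁻¹ • e, ?_⟩
  rw [hNP_smul, abs_of_pos (inv_pos.mpr hpos), inv_mul_cancel₀ (ne_of_gt hpos)]

theorem pairing_le_unit
    (hND : ∀ z, IsLUB {r : ℝ | ∃ x : Fin m → ℝ, NP x = 1 ∧ r = ∑ j, z j * x j} (ND z))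
    (z x : Fin m → ℝ) (hx : NP x = 1) : ∑ j, z j * x j ≤ ND z :=
  (hND z).1 ⟨x, hx, rfl⟩

theorem NP_neg_unit (hNP_smul : ∀ (c : ℝ) (x : Fin m → ℝ), NP (c • x) = |c| * NP x)
    {x : Fin m → ℝ} (hx : NP x = 1) : NP (-x) = 1 := by
  have := hNP_smul (-1) x
  simp only [neg_one_smul, abs_neg, abs_one, one_mul] at this
  rw [this, hx]

theorem ND_nonneg (hNP_nonneg : ∀ x : Fin m → ℝ, 0 ≤ NP x)
    (hNP_eq_zero : ∀ x : Fin m → ℝ, NP x = 0 ↔ x = 0)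
    (hNP_smul : ∀ (c : ℝ) (x : Fin m → ℝ), NP (c • x) = |c| * NP x)
    (hND : ∀ z, IsLUB {r : ℝ | ∃ x : Fin m → ℝ, NP x = 1 ∧ r = ∑ j, z j * x j} (ND z))
    (z : Fin m → ℝ) : 0 ≤ ND z := by
  rcases Nat.eq_zero_or_pos m with hm | hm
  · exact absurd hm (fun h => m_pos hNP_eq_zero hND h)
  obtain ⟨x, hx⟩ := sphere_nonempty hNP_nonneg hNP_eq_zero hNP_smul hm
  have h1 := pairing_le_unit hND z x hx
  have h3 := pairing_le_unit hND z (-x) (NP_neg_unit hNP_smul hx)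
  simp only [Pi.neg_apply, mul_neg, Finset.sum_neg_distrib] at h3
  linarith

theorem pairing_le (hNP_nonneg : ∀ x : Fin m → ℝ, 0 ≤ NP x)
    (hNP_eq_zero : ∀ x : Fin m → ℝ, NP x = 0 ↔ x = 0)
    (hNP_smul : ∀ (c : ℝ) (x : Fin m → ℝ), NP (c • x) = |c| * NP x)
    (hND : ∀ z, IsLUB {r : ℝ | ∃ x : Fin m → ℝ, NP x = 1 ∧ r = ∑ j, z j * x j} (ND z))
    (z x : Fin m → ℝ) : ∑ j, z j * x j ≤ ND z * NP x := by
  rcases eq_or_ne x 0 with hx | hx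
  · subst hx
    simp [(hNP_eq_zero 0).mpr rfl]
  · have hpos : 0 < NP x := lt_of_le_of_ne (hNP_nonneg x) (fun h => hx ((hNP_eq_zero x).mp h.symm))
    have hux : NP ((NP x)⁻¹ • x) = 1 := by
      rw [hNP_smul, abs_of_pos (inv_pos.mpr hpos), inv_mul_cancel₀ (ne_of_gt hpos)]
    have h := pairing_le_unit hND z _ hux
    have h2 : ∑ j, z j * ((NP x)⁻¹ • x) j = (NP x)⁻¹ * ∑ j, z j * x j := by
      rw [Finset.mul_sum]; congr 1; ext j; simp [Pi.smul_apply]; ring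
    rw [h2] at h
    calc ∑ j, z j * x j = NP x * ((NP x)⁻¹ * ∑ j, z j * x j) := by
          field_simp
      _ ≤ NP x * ND z := mul_le_mul_of_nonneg_left h (le_of_lt hpos)
      _ = ND z * NP x := mul_comm _ _

theorem ND_near
    (hND : ∀ z, IsLUB {r : ℝ | ∃ x : Fin m → ℝ, NP x = 1 ∧ r = ∑ j, z j * x j} (ND z))
    (z : Fin m → ℝ) {ε : ℝ} (hε : 0 < ε) :
    ∃ x : Fin m → ℝ, NP x = 1 ∧ ND z - ε ≤ ∑ j, z j * x j := by
  by_contra h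
  push_neg at h
  have : ND z ≤ ND z - ε := (hND z).2 (by rintro r ⟨x, hx, rfl⟩; exact le_of_lt (h x hx))
  linarith

theorem ND_neg (hNP_smul : ∀ (c : ℝ) (x : Fin m → ℝ), NP (c • x) = |c| * NP x)
    (hND : ∀ z, IsLUB {r : ℝ | ∃ x : Fin m → ℝ, NP x = 1 ∧ r = ∑ j, z j * x j} (ND z))
    (z : Fin m → ℝ) : ND (-z) = ND z := by
  have key : ∀ z1 : Fin m → ℝ, ND (-z1) ≤ ND z1 := by
    intro z1
    apply (hND (-z1)).2
    rintro r ⟨x, hx, rfl⟩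
    have h := pairing_le_unit hND z1 (-x) (NP_neg_unit hNP_smul hx)
    simp only [Pi.neg_apply, mul_neg, Finset.sum_neg_distrib] at h ⊢
    calc ∑ j, -z1 j * x j = -∑ j, z1 j * x j := by
          rw [← Finset.sum_neg_distrib]; congr 1; ext j; ring
      _ ≤ ND z1 := by
          have := pairing_le_unit hND z1 (-x) (NP_neg_unit hNP_smul hx)
          simp only [Pi.neg_apply, mul_neg] at this
          calc -∑ j, z1 j * x j = ∑ j, z1 j * (-x j) := by
                rw [← Finset.sum_neg_distrib]; congr 1; ext j; ring
            _ ≤ ND z1 := by simpa using this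
  have h2 := key (-z)
  rw [neg_neg] at h2
  exact le_antisymm (key z) h2

theorem ND_smul_le
    (hNP_nonneg : ∀ x : Fin m → ℝ, 0 ≤ NP x)
    (hNP_eq_zero : ∀ x : Fin m → ℝ, NP x = 0 ↔ x = 0)
    (hNP_smul : ∀ (c : ℝ) (x : Fin m → ℝ), NP (c • x) = |c| * NP x)
    (hND : ∀ z, IsLUB {r : ℝ | ∃ x : Fin m → ℝ, NP x = 1 ∧ r = ∑ j, z j * x j} (ND z))
    {c : ℝ} (hc : 0 ≤ c) (z : Fin m → ℝ) : ND (c • z) ≤ c * ND z := by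
  apply (hND (c • z)).2
  rintro r ⟨x, hx, rfl⟩
  have h1 := pairing_le_unit hND z x hx
  have e : ∑ j, (c • z) j * x j = c * ∑ j, z j * x j := by
    rw [Finset.mul_sum]; congr 1; ext j; simp [Pi.smul_apply]; ring
  rw [e]
  exact mul_le_mul_of_nonneg_left h1 hc

theorem ND_triangle
    (hND : ∀ z, IsLUB {r : ℝ | ∃ x : Fin m → ℝ, NP x = 1 ∧ r = ∑ j, z j * x j} (ND z))
    (z1 z2 : Fin m → ℝ) : ND (z1 + z2) ≤ ND z1 + ND z2 := by
  apply (hND (z1 + z2)).2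
  rintro r ⟨x, hx, rfl⟩
  have h1 := pairing_le_unit hND z1 x hx
  have h2 := pairing_le_unit hND z2 x hx
  have h3 : ∑ j, (z1 + z2) j * x j = (∑ j, z1 j * x j) + ∑ j, z2 j * x j := by
    rw [← Finset.sum_add_distrib]; congr 1; ext j; simp [add_mul]
  linarith [h3]

end NormAux

section ConjAux
variable {m : ℕ} {NP ND : (Fin m → ℝ) → ℝ}

/-- convexity + quadratic upper bound forces the linear map to be a subgradient -/
theorem subgrad {f : (Fin m → ℝ) → ℝ} {s : (Fin m → ℝ) → (Fin m → ℝ)} {C : ℝ}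
    (hNP_nonneg : ∀ x : Fin m → ℝ, 0 ≤ NP x)
    (hNP_smul : ∀ (c : ℝ) (x : Fin m → ℝ), NP (c • x) = |c| * NP x)
    (hC : 0 ≤ C)
    (hconv : ConvexOn ℝ Set.univ f)
    (hsm : ∀ a b, f a ≤ f b + (∑ j, s b j * (a j - b j)) + C * NP (a - b) ^ 2)
    (a b : Fin m → ℝ) : f b + (∑ j, s b j * (a j - b j)) ≤ f a := by
  set K := NP (a - b) ^ 2 with hK
  have hK0 : 0 ≤ K := sq_nonneg _
  have key : ∀ t : ℝ, 0 < t → t ≤ 1 →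
      f b + (∑ j, s b j * (a j - b j)) ≤ f a + C * t * K := by
    intro t ht ht1
    set y := b + t • (b - a) with hy
    have hyb : ∀ j, y j - b j = t * (b j - a j) := by
      intro j
      simp only [hy, Pi.add_apply, Pi.smul_apply, Pi.sub_apply, smul_eq_mul]
      ring
    have h1 : f y ≤ f b - t * (∑ j, s b j * (a j - b j)) + C * t ^ 2 * K := by
      have := hsm y b
      have e1 : ∑ j, s b j * (y j - b j) = -(t * ∑ j, s b j * (a j - b j)) := by
        rw [Finset.mul_sum, ← Finset.sum_neg_distrib]
        congr 1; ext j; rw [hyb j]; ring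
      have e2 : NP (y - b) ^ 2 = t ^ 2 * K := by
        have : y - b = t • (b - a) := by ext j; simp [hyb j]
        rw [this, hNP_smul, abs_of_pos ht]
        have : NP (b - a) = NP (a - b) := by
          have := hNP_smul (-1) (a - b)
          simp only [neg_one_smul, abs_neg, abs_one, one_mul] at this
          rw [show b - a = -(a - b) by ring, this]
        rw [this, hK]; ring
      rw [e1, e2] at this
      linarith
    have hcomb : (t / (1 + t)) • a + (1 / (1 + t)) • y = b := by
      ext j
      have h1t : (1 : ℝ) + t ≠ 0 := by linarith
      simp only [Pi.add_apply, Pi.smul_apply, smul_eq_mul, hy, Pi.sub_apply]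
      field_simp
      ring
    have h2 : f b ≤ (t / (1 + t)) * f a + (1 / (1 + t)) * f y := by
      have := hconv.2 (Set.mem_univ a) (Set.mem_univ y)
        (by positivity : (0:ℝ) ≤ t / (1 + t)) (by positivity : (0:ℝ) ≤ 1 / (1 + t))
        (by have h1t : (1:ℝ) + t ≠ 0 := by linarith
            field_simp
            ring)
      rw [hcomb] at this
      simpa using this
    have h1t : (0 : ℝ) < 1 + t := by linarith
    have h3 : (1 + t) * f b ≤ t * f a + f y := by
      have := mul_le_mul_of_nonneg_left h2 (le_of_lt h1t)
      calc (1 + t) * f b ≤ (1 + t) * ((t / (1 + t)) * f a + (1 / (1 + t)) * f y) := this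
        _ = t * f a + f y := by
            have h1t' : (1:ℝ) + t ≠ 0 := by linarith
            field_simp
    have h4 : t * (f b + ∑ j, s b j * (a j - b j)) ≤ t * (f a + C * t * K) := by
      nlinarith [h3, h1]
    exact le_of_mul_le_mul_left (by linarith [h4]) ht
  refine le_of_forall_pos_le_add ?_
  intro ε hε
  have htpos : 0 < min 1 (ε / (C * K + 1)) := by
    apply lt_min one_pos
    positivity
  have := key _ htpos (min_le_left _ _)
  have hbound : C * min 1 (ε / (C * K + 1)) * K ≤ ε := by
    have h1 : min 1 (ε / (C * K + 1)) ≤ ε / (C * K + 1) := min_le_right _ _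
    have h2 : 0 < C * K + 1 := by positivity
    have h3 : C * min 1 (ε / (C * K + 1)) * K ≤ C * (ε / (C * K + 1)) * K := by
      apply mul_le_mul_of_nonneg_right _ hK0
      exact mul_le_mul_of_nonneg_left h1 hC
    have h4 : C * (ε / (C * K + 1)) * K = ε * (C * K) / (C * K + 1) := by ring
    have h5 : ε * (C * K) / (C * K + 1) ≤ ε := by
      rw [div_le_iff₀ h2]
      nlinarith [mul_nonneg hC hK0]
    linarith
  linarith

/-- Fenchel–Young equality at gradient points -/
theorem fy_eq {f : (Fin m → ℝ) → ℝ} {s : (Fin m → ℝ) → (Fin m → ℝ)}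
    (hsub : ∀ a b, f b + (∑ j, s b j * (a j - b j)) ≤ f a)
    (b : Fin m → ℝ) :
    (⨆ x : Fin m → ℝ, ((∑ j, x j * s b j - f x : ℝ) : EReal))
      = (((∑ j, b j * s b j - f b : ℝ) : EReal)) := by
  apply le_antisymm
  · apply iSup_le
    intro x
    rw [EReal.coe_le_coe_iff]
    have := hsub x b
    have e : ∑ j, s b j * (x j - b j) = (∑ j, x j * s b j) - ∑ j, b j * s b j := by
      rw [← Finset.sum_sub_distrib]; congr 1; ext j; ring
    linarith [e ▸ this]
  · exact le_iSup (fun x => ((∑ j, x j * s b j - f x : ℝ) : EReal)) b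

/-- quadratic lower bound for the conjugate, from smoothness -/
theorem conj_quad {f : (Fin m → ℝ) → ℝ} {s : (Fin m → ℝ) → (Fin m → ℝ)} {γ : ℝ}
    (hNP_nonneg : ∀ x : Fin m → ℝ, 0 ≤ NP x)
    (hNP_eq_zero : ∀ x : Fin m → ℝ, NP x = 0 ↔ x = 0)
    (hNP_smul : ∀ (c : ℝ) (x : Fin m → ℝ), NP (c • x) = |c| * NP x)
    (hND : ∀ z, IsLUB {r : ℝ | ∃ x : Fin m → ℝ, NP x = 1 ∧ r = ∑ j, z j * x j} (ND z))
    (hγ : 0 < γ)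
    (hsm : ∀ a b, f a ≤ f b + (∑ j, s b j * (a j - b j)) + (1 / (2 * γ)) * NP (a - b) ^ 2)
    (b v : Fin m → ℝ) :
    (((∑ j, b j * v j - f b + γ / 2 * ND (v - s b) ^ 2 : ℝ) : EReal))
      ≤ ⨆ x : Fin m → ℝ, ((∑ j, x j * v j - f x : ℝ) : EReal) := by
  set z := v - s b with hz
  set c := ND z with hc
  have hc0 : 0 ≤ c := ND_nonneg (ND := ND) hNP_nonneg hNP_eq_zero hNP_smul hND z
  have key : ∀ ε : ℝ, 0 < ε →
      (((∑ j, b j * v j - f b + γ / 2 * c ^ 2 - γ * c * ε : ℝ) : EReal))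
        ≤ ⨆ x : Fin m → ℝ, ((∑ j, x j * v j - f x : ℝ) : EReal) := by
    intro ε hε
    obtain ⟨x, hx1, hx2⟩ := ND_near hND z hε
    set h : Fin m → ℝ := (γ * c) • x with hh
    refine le_trans ?_ (le_iSup (fun x => ((∑ j, x j * v j - f x : ℝ) : EReal)) (b + h))
    rw [EReal.coe_le_coe_iff]
    have hfb : f (b + h) ≤ f b + (∑ j, s b j * h j) + (1 / (2 * γ)) * NP h ^ 2 := by
      have hfb0 := hsm (b + h) b
      simp only [Pi.add_apply, add_sub_cancel_left] at hfb0
      exact hfb0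
    have hNPh : NP h = γ * c := by
      rw [hh, hNP_smul, hx1, abs_of_nonneg (by positivity), mul_one]
    have hpair : ∑ j, h j * z j ≥ γ * c * (c - ε) := by
      have : ∑ j, h j * z j = (γ * c) * ∑ j, z j * x j := by
        rw [Finset.mul_sum]; congr 1; ext j; simp [hh]; ring
      rw [this]
      exact mul_le_mul_of_nonneg_left hx2 (by positivity)
    have expand : ∑ j, (b + h) j * v j - f (b + h)
        ≥ ∑ j, b j * v j - f b + (∑ j, h j * z j) - (1 / (2 * γ)) * (γ * c) ^ 2 := by
      have e1 : ∑ j, (b + h) j * v j = (∑ j, b j * v j) + ∑ j, h j * v j := by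
        rw [← Finset.sum_add_distrib]; congr 1; ext j; simp [add_mul]
      have e2 : ∑ j, h j * z j = (∑ j, h j * v j) - ∑ j, s b j * h j := by
        rw [← Finset.sum_sub_distrib]; congr 1; ext j; simp [hz]; ring
      rw [e1, ← hNPh]
      linarith [hfb, e2]
    have : (1 / (2 * γ)) * (γ * c) ^ 2 = γ / 2 * c ^ 2 := by field_simp
    rw [this] at expand
    have hring : γ * c * (c - ε) = γ * c ^ 2 - γ * c * ε := by ring
    nlinarith [expand, hpair]
  -- pass to the limit ε → 0
  set S := ⨆ x : Fin m → ℝ, ((∑ j, x j * v j - f x : ℝ) : EReal) with hS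
  set target := ∑ j, b j * v j - f b + γ / 2 * c ^ 2 with htarget
  have key2 : ∀ ε : ℝ, 0 < ε → ((target - ε : ℝ) : EReal) ≤ S := by
    intro ε hε
    have h1 := key (ε / (γ * c + 1)) (by positivity)
    refine le_trans ?_ h1
    rw [EReal.coe_le_coe_iff]
    have h2 : (0:ℝ) < γ * c + 1 := by positivity
    have h3 : γ * c * (ε / (γ * c + 1)) ≤ ε := by
      rw [mul_div_assoc', div_le_iff₀ h2]
      nlinarith [mul_nonneg (mul_nonneg hγ.le hc0) hε.le]
    linarith
  by_cases hST : S = ⊤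
  · rw [hST]; exact le_top
  · have hSbot : S ≠ ⊥ := by
      intro hb
      have := key2 1 one_pos
      rw [hb, le_bot_iff] at this
      exact (EReal.coe_ne_bot _) this
    have hr : S = ((S.toReal : ℝ) : EReal) := (EReal.coe_toReal hST hSbot).symm
    rw [hr, EReal.coe_le_coe_iff]
    refine le_of_forall_pos_le_add ?_
    intro ε hε
    have h4 := key2 ε hε
    rw [hr, EReal.coe_le_coe_iff] at h4
    linarith

/-- strong-convexity-type bound for the conjugate along a segment whose endpoint
is a gradient point -/
theorem conj_combo {f : (Fin m → ℝ) → ℝ} {s : (Fin m → ℝ) → (Fin m → ℝ)} {γ : ℝ}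
    (hNP_nonneg : ∀ x : Fin m → ℝ, 0 ≤ NP x)
    (hNP_eq_zero : ∀ x : Fin m → ℝ, NP x = 0 ↔ x = 0)
    (hNP_smul : ∀ (c : ℝ) (x : Fin m → ℝ), NP (c • x) = |c| * NP x)
    (hND : ∀ z, IsLUB {r : ℝ | ∃ x : Fin m → ℝ, NP x = 1 ∧ r = ∑ j, z j * x j} (ND z))
    (hγ : 0 < γ)
    (hsm : ∀ a b, f a ≤ f b + (∑ j, s b j * (a j - b j)) + (1 / (2 * γ)) * NP (a - b) ^ 2)
    (hsub : ∀ a b, f b + (∑ j, s b j * (a j - b j)) ≤ f a)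
    (b v : Fin m → ℝ) {A t : ℝ}
    (hA : (⨆ x : Fin m → ℝ, ((∑ j, x j * v j - f x : ℝ) : EReal)) ≤ ((A : ℝ) : EReal))
    (ht0 : 0 ≤ t) (ht1 : t ≤ 1) :
    (⨆ x : Fin m → ℝ, ((∑ j, x j * ((1 - t) • v + t • s b) j - f x : ℝ) : EReal))
      ≤ (((1 - t) * A + t * (∑ j, b j * s b j - f b)
          - γ / 2 * (t * (1 - t)) * ND (v - s b) ^ 2 : ℝ) : EReal) := by
  apply iSup_le
  intro x
  rw [EReal.coe_le_coe_iff]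
  set X := ND (v - s x) with hX
  set Y := ND (s b - s x) with hY
  set Z := ND (v - s b) with hZ
  have hX0 : 0 ≤ X := ND_nonneg hNP_nonneg hNP_eq_zero hNP_smul hND _
  have hY0 : 0 ≤ Y := ND_nonneg hNP_nonneg hNP_eq_zero hNP_smul hND _
  have hZ0 : 0 ≤ Z := ND_nonneg hNP_nonneg hNP_eq_zero hNP_smul hND _
  have h1 : ∑ j, x j * v j - f x + γ / 2 * X ^ 2 ≤ A := by
    have := le_trans (conj_quad hNP_nonneg hNP_eq_zero hNP_smul hND hγ hsm x v) hA
    rwa [EReal.coe_le_coe_iff] at this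
  have h2 : ∑ j, x j * s b j - f x + γ / 2 * Y ^ 2 ≤ ∑ j, b j * s b j - f b := by
    have h2a := conj_quad hNP_nonneg hNP_eq_zero hNP_smul hND hγ hsm x (s b)
    rw [fy_eq hsub b] at h2a
    rwa [EReal.coe_le_coe_iff] at h2a
  have hZXY : Z ≤ X + Y := by
    have e : v - s b = (v - s x) + -(s b - s x) := by ring
    calc Z = ND ((v - s x) + -(s b - s x)) := by rw [hZ, ← e]
      _ ≤ ND (v - s x) + ND (-(s b - s x)) := ND_triangle hND _ _
      _ = X + Y := by rw [ND_neg hNP_smul hND]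
  have hquad : t * (1 - t) * Z ^ 2 ≤ (1 - t) * X ^ 2 + t * Y ^ 2 := by
    have hZ2 : Z ^ 2 ≤ (X + Y) ^ 2 := by nlinarith
    nlinarith [sq_nonneg ((1 - t) * X - t * Y), mul_nonneg ht0 (sub_nonneg.mpr ht1)]
  have hsplit : ∑ j, x j * ((1 - t) • v + t • s b) j - f x
      = (1 - t) * (∑ j, x j * v j - f x) + t * (∑ j, x j * s b j - f x) := by
    have e : ∑ j, x j * ((1 - t) • v + t • s b) j
        = (1 - t) * (∑ j, x j * v j) + t * (∑ j, x j * s b j) := by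
      rw [Finset.mul_sum, Finset.mul_sum, ← Finset.sum_add_distrib]
      congr 1; ext j
      simp only [Pi.add_apply, Pi.smul_apply, smul_eq_mul]
      ring
    rw [e]; ring
  rw [hsplit]
  nlinarith [h1, h2, hquad, mul_le_mul_of_nonneg_left hquad (le_of_lt (half_pos hγ))]

end ConjAux

section GAux
variable {m : ℕ} {NP ND : (Fin m → ℝ) → ℝ} {g : (Fin m → ℝ) → ℝ}
  {Ggrad : (Fin m → ℝ) → (Fin m → ℝ)}

/-- quadratic decay around the maximizer of a strongly concave function -/
theorem gstar_decay
    (hgsc : ∀ (w₁ w₂ : Fin m → ℝ) (t : ℝ), 0 ≤ t → t ≤ 1 →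
      g (t • w₁ + (1 - t) • w₂) ≤ t * g w₁ + (1 - t) * g w₂
        - (t * (1 - t) / 2) * NP (w₁ - w₂) ^ 2)
    (hGgrad : ∀ (v w' : Fin m → ℝ),
      (∑ j, w' j * v j) - g w' ≤ (∑ j, Ggrad v j * v j) - g (Ggrad v))
    (v w : Fin m → ℝ) :
    (∑ j, w j * v j) - g w + 1 / 2 * NP (w - Ggrad v) ^ 2
      ≤ (∑ j, Ggrad v j * v j) - g (Ggrad v) := by
  set W := Ggrad v with hW
  set N := NP (w - W) ^ 2 with hN
  have hN0 : 0 ≤ N := sq_nonneg _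
  have key : ∀ t : ℝ, 0 < t → t ≤ 1 →
      (∑ j, w j * v j) - g w + (1 - t) / 2 * N ≤ (∑ j, W j * v j) - g W := by
    intro t ht ht1
    have h1 := hGgrad v (t • w + (1 - t) • W)
    have h2 := hgsc w W t (le_of_lt ht) ht1
    have h3 : ∑ j, (t • w + (1 - t) • W) j * v j
        = t * (∑ j, w j * v j) + (1 - t) * ∑ j, W j * v j := by
      rw [Finset.mul_sum, Finset.mul_sum, ← Finset.sum_add_distrib]
      congr 1; ext j
      simp only [Pi.add_apply, Pi.smul_apply, smul_eq_mul]
      ring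
    rw [h3] at h1
    rw [← hW] at h1
    rw [← hN] at h2
    have h4 : t * ((∑ j, w j * v j) - g w + (1 - t) / 2 * N)
        ≤ t * ((∑ j, W j * v j) - g W) := by nlinarith [h1, h2]
    exact le_of_mul_le_mul_left h4 ht
  refine le_of_forall_pos_le_add ?_
  intro ε hε
  have htpos : 0 < min 1 (2 * ε / (N + 1)) := lt_min one_pos (by positivity)
  have h5 := key _ htpos (min_le_left _ _)
  have h6 : min 1 (2 * ε / (N + 1)) / 2 * N ≤ ε := by
    have hmin : min 1 (2 * ε / (N + 1)) ≤ 2 * ε / (N + 1) := min_le_right _ _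
    have hN1 : (0:ℝ) < N + 1 := by linarith
    have : min 1 (2 * ε / (N + 1)) * N ≤ (2 * ε / (N + 1)) * N :=
      mul_le_mul_of_nonneg_right hmin hN0
    have h7 : (2 * ε / (N + 1)) * N ≤ 2 * ε := by
      rw [div_mul_eq_mul_div, div_le_iff₀ hN1]
      nlinarith
    linarith
  nlinarith [h5, h6]

/-- `g*` is `1`-smooth w.r.t. the dual norm when `g` is `1`-strongly convex -/
theorem gstar_smooth
    (hNP_nonneg : ∀ x : Fin m → ℝ, 0 ≤ NP x)
    (hNP_eq_zero : ∀ x : Fin m → ℝ, NP x = 0 ↔ x = 0)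
    (hNP_smul : ∀ (c : ℝ) (x : Fin m → ℝ), NP (c • x) = |c| * NP x)
    (hND : ∀ z, IsLUB {r : ℝ | ∃ x : Fin m → ℝ, NP x = 1 ∧ r = ∑ j, z j * x j} (ND z))
    (hgsc : ∀ (w₁ w₂ : Fin m → ℝ) (t : ℝ), 0 ≤ t → t ≤ 1 →
      g (t • w₁ + (1 - t) • w₂) ≤ t * g w₁ + (1 - t) * g w₂
        - (t * (1 - t) / 2) * NP (w₁ - w₂) ^ 2)
    (hGgrad : ∀ (v w' : Fin m → ℝ),
      (∑ j, w' j * v j) - g w' ≤ (∑ j, Ggrad v j * v j) - g (Ggrad v))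
    (v δ : Fin m → ℝ) :
    (∑ j, Ggrad (v + δ) j * (v + δ) j) - g (Ggrad (v + δ))
      ≤ ((∑ j, Ggrad v j * v j) - g (Ggrad v)) + (∑ j, Ggrad v j * δ j)
        + 1 / 2 * ND δ ^ 2 := by
  set W := Ggrad v with hW
  set W' := Ggrad (v + δ) with hW'
  have h1 := gstar_decay hgsc hGgrad v W'
  have h2 : ∑ j, W' j * (v + δ) j = (∑ j, W' j * v j) + ∑ j, W' j * δ j := by
    rw [← Finset.sum_add_distrib]; congr 1; ext j
    simp only [Pi.add_apply]; ring
  have h3 : ∑ j, W' j * δ j = (∑ j, W j * δ j) + ∑ j, (W' - W) j * δ j := by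
    rw [← Finset.sum_add_distrib]; congr 1; ext j
    simp only [Pi.sub_apply]; ring
  have h4 : ∑ j, (W' - W) j * δ j ≤ ND δ * NP (W' - W) := by
    have := pairing_le hNP_nonneg hNP_eq_zero hNP_smul hND δ (W' - W)
    calc ∑ j, (W' - W) j * δ j = ∑ j, δ j * (W' - W) j := by
          congr 1; ext j; ring
      _ ≤ ND δ * NP (W' - W) := this
  have h5 : ND δ * NP (W' - W) ≤ 1 / 2 * NP (W' - W) ^ 2 + 1 / 2 * ND δ ^ 2 := by
    nlinarith [sq_nonneg (ND δ - NP (W' - W))]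
  rw [h2]
  linarith [h1, h3, h4, h5]

end GAux

theorem ereal_coe_sum {ι : Type*} (s : Finset ι) (f : ι → ℝ) :
    ((∑ i ∈ s, f i : ℝ) : EReal) = ∑ i ∈ s, ((f i : ℝ) : EReal) := by
  induction s using Finset.cons_induction with
  | empty => simp
  | cons a s ha ih => rw [Finset.sum_cons, Finset.sum_cons, EReal.coe_add, ih]
set_option maxHeartbeats 1600000 in
/-- Theorem 1, first part: for (1/γ)-smooth losses, Prox-SDCA with
Option I updates reaches expected duality gap `E[P(w^(T)) − D(α^(T))] ≤ ε_P` after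
`T ≥ (n + R²/(λγ)) log((n + R²/(λγ))/ε_P)` iterations.  The expectation is the
average over all sequences of the i.i.d. uniform coordinate indices. -/
theorem prox_sdca_smooth_duality_gap (d k n : ℕ) (hn : 0 < n)
    (lam γ R εP : ℝ) (hlam : 0 < lam) (hγ : 0 < γ) (hR : 0 ≤ R) (hεP : 0 < εP)
    -- ‖·‖_P, a norm on ℝ^k, and its dual norm ‖·‖_D:
    (NP : (Fin k → ℝ) → ℝ)
    (hNP_nonneg : ∀ x, 0 ≤ NP x)
    (hNP_eq_zero : ∀ x, NP x = 0 ↔ x = 0)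
    (hNP_add : ∀ x y, NP (x + y) ≤ NP x + NP y)
    (hNP_smul : ∀ (c : ℝ) (x : Fin k → ℝ), NP (c • x) = |c| * NP x)
    (ND : (Fin k → ℝ) → ℝ)
    (hND : ∀ z, IsLUB {r : ℝ | ∃ x : Fin k → ℝ, NP x = 1 ∧ r = ∑ j, z j * x j} (ND z))
    -- ‖·‖_{P'}, a norm on ℝ^d, and its dual norm ‖·‖_{D'}:
    (NP' : (Fin d → ℝ) → ℝ)
    (hNP'_nonneg : ∀ x, 0 ≤ NP' x)
    (hNP'_eq_zero : ∀ x, NP' x = 0 ↔ x = 0)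
    (hNP'_add : ∀ x y, NP' (x + y) ≤ NP' x + NP' y)
    (hNP'_smul : ∀ (c : ℝ) (x : Fin d → ℝ), NP' (c • x) = |c| * NP' x)
    (ND' : (Fin d → ℝ) → ℝ)
    (hND' : ∀ z, IsLUB {r : ℝ | ∃ x : Fin d → ℝ, NP' x = 1 ∧ r = ∑ j, z j * x j} (ND' z))
    -- data matrices, with operator norms bounded by R:
    (X : Fin n → Matrix (Fin d) (Fin k) ℝ)
    (hXR : ∀ i (z : Fin k → ℝ), ND' ((X i).mulVec z) ≤ R * ND z)
    -- the losses: convex, nonnegative, (1/γ)-smooth w.r.t. ‖·‖_P, small at 0: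
    (φ : Fin n → (Fin k → ℝ) → ℝ) (hφconv : ∀ i, ConvexOn ℝ Set.univ (φ i))
    (φgrad : Fin n → (Fin k → ℝ) → (Fin k → ℝ))
    (hφsmooth : ∀ i a b, φ i a ≤ φ i b + (∑ j, φgrad i b j * (a j - b j))
        + (1 / (2 * γ)) * NP (a - b) ^ 2)
    (hφnonneg : ∀ i a, 0 ≤ φ i a)
    (hφzero : (1 / n) * ∑ i, φ i 0 ≤ 1)
    -- the regularizer: convex, 1-strongly convex w.r.t. ‖·‖_{P'}, normalized:
    (g : (Fin d → ℝ) → ℝ) (hgconv : ConvexOn ℝ Set.univ g)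
    (hgsc : ∀ (w₁ w₂ : Fin d → ℝ) (t : ℝ), 0 ≤ t → t ≤ 1 →
      g (t • w₁ + (1 - t) • w₂) ≤ t * g w₁ + (1 - t) * g w₂
        - (t * (1 - t) / 2) * NP' (w₁ - w₂) ^ 2)
    (hgzero : g 0 = 0) (hgnonneg : ∀ w, 0 ≤ g w)
    -- conjugates of the losses:
    (fconj : Fin n → (Fin k → ℝ) → EReal)
    (hfconj : ∀ i z, fconj i z = ⨆ x : Fin k → ℝ, ((∑ j, x j * z j - φ i x : ℝ) : EReal))
    -- `Ggrad v = ∇g*(v)`, the maximizer of `w ↦ wᵀv − g(w)` (so that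
    -- `g*(v) = Ggrad v ᵀ v − g (Ggrad v)`):
    (Ggrad : (Fin d → ℝ) → (Fin d → ℝ))
    (hGgrad : ∀ (v w' : Fin d → ℝ),
      (∑ j, w' j * v j) - g w' ≤ (∑ j, Ggrad v j * v j) - g (Ggrad v))
    -- primal and dual objectives:
    (vmap : (Fin n → Fin k → ℝ) → (Fin d → ℝ))
    (hvmap : ∀ β, vmap β = (1 / (lam * n)) • ∑ i, (X i).mulVec (β i))
    (P : (Fin d → ℝ) → ℝ)
    (hP : ∀ w, P w = (1 / n) * ∑ i, φ i ((X i).transpose.mulVec w) + lam * g w)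
    (D : (Fin n → Fin k → ℝ) → EReal)
    (hD : ∀ β, D β = ((1 / n : ℝ) : EReal) * (∑ i, -(fconj i (-(β i))))
        - ((lam * ((∑ j, Ggrad (vmap β) j * vmap β j) - g (Ggrad (vmap β))) : ℝ) : EReal))
    -- the Prox-SDCA trajectory: `αseq ω t` is the dual iterate after `t` steps
    -- when the random coordinate indices are `ω 0, ω 1, …`:
    (αseq : (ℕ → Fin n) → ℕ → (Fin n → Fin k → ℝ))
    (hinit : ∀ ω, αseq ω 0 = 0)
    (hadapt : ∀ ω ω' t, (∀ s < t, ω s = ω' s) → αseq ω t = αseq ω' t)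
    -- Option I: the increment of column `ω t` maximizes the proximal dual objective:
    (obj : (ℕ → Fin n) → ℕ → (Fin k → ℝ) → EReal)
    (hobj : ∀ ω t Δ, obj ω t Δ = -(fconj (ω t) (-(αseq ω t (ω t) + Δ)))
        - (((∑ j, Ggrad (vmap (αseq ω t)) j * (X (ω t)).mulVec Δ j)
          + (1 / (2 * lam * n)) * ND' ((X (ω t)).mulVec Δ) ^ 2 : ℝ) : EReal))
    (hupdate : ∀ ω t, ∃ Δ : Fin k → ℝ,
      αseq ω (t + 1) = Function.update (αseq ω t) (ω t) (αseq ω t (ω t) + Δ) ∧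
      ∀ Δ' : Fin k → ℝ, obj ω t Δ' ≤ obj ω t Δ) :
    -- conclusion: after T iterations the expected duality gap is at most ε_P
    ∀ T : ℕ,
      ((n : ℝ) + R ^ 2 / (lam * γ)) * Real.log (((n : ℝ) + R ^ 2 / (lam * γ)) / εP)
        ≤ (T : ℝ) →
      ((1 / (n : ℝ) ^ T : ℝ) : EReal) * ∑ σ : Fin T → Fin n,
          (((P (Ggrad (vmap (αseq (fun t => if h : t < T then σ ⟨t, h⟩ else ⟨0, hn⟩) T))) : ℝ) : EReal)
            - D (αseq (fun t => if h : t < T then σ ⟨t, h⟩ else ⟨0, hn⟩) T))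
        ≤ ((εP : ℝ) : EReal) := by
  intro T hT
  -- positive dimensions (else the dual-norm hypotheses are contradictory)
  rcases Nat.eq_zero_or_pos k with hk0 | hk
  · exact absurd hk0 (fun h => m_pos hNP_eq_zero hND h)
  rcases Nat.eq_zero_or_pos d with hd0 | hd
  · exact absurd hd0 (fun h => m_pos hNP'_eq_zero hND' h)
  have hnR : (0:ℝ) < n := Nat.cast_pos.mpr hn
  have hnR1 : (1:ℝ) ≤ n := by exact_mod_cast hn
  -- local abbreviations
  obtain ⟨Fv, hFv⟩ : ∃ F : (Fin n → Fin k → ℝ) → Fin n → ℝ,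
      ∀ β i, F β i = (fconj i (-(β i))).toReal := ⟨_, fun β i => rfl⟩
  obtain ⟨gstar, hgstar⟩ : ∃ G : (Fin d → ℝ) → ℝ,
      ∀ v, G v = (∑ j, Ggrad v j * v j) - g (Ggrad v) := ⟨_, fun v => rfl⟩
  obtain ⟨Drv, hDrv⟩ : ∃ Dv : (Fin n → Fin k → ℝ) → ℝ,
      ∀ β, Dv β = (1 / n) * (∑ i, -(Fv β i)) - lam * gstar (vmap β) := ⟨_, fun β => rfl⟩
  obtain ⟨Φ, hΦ⟩ : ∃ Ph : (Fin n → Fin k → ℝ) → Fin n → ℝ,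
      ∀ β i, Ph β i = Fv β i + φ i ((X i).transpose.mulVec (Ggrad (vmap β)))
        + ∑ j, ((X i).transpose.mulVec (Ggrad (vmap β))) j * β i j := ⟨_, fun β i => rfl⟩
  obtain ⟨exts, hexts⟩ : ∃ E : (t : ℕ) → (Fin t → Fin n) → ℕ → Fin n,
      ∀ t σ, E t σ = fun s => if h : s < t then σ ⟨s, h⟩ else ⟨0, hn⟩ := ⟨_, fun t σ => rfl⟩
  -- basic conjugate facts
  have hFY : ∀ i (z c : Fin k → ℝ), ((∑ j, c j * z j - φ i c : ℝ) : EReal) ≤ fconj i z := by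
    intro i z c
    rw [hfconj]
    exact le_iSup (fun x => ((∑ j, x j * z j - φ i x : ℝ) : EReal)) c
  have hfconj_ne_bot : ∀ i z, fconj i z ≠ ⊥ := by
    intro i z h
    have := hFY i z 0
    rw [h, le_bot_iff] at this
    exact EReal.coe_ne_bot _ this
  have hfconj0 : ∀ i, fconj i 0 ≤ (0 : EReal) := by
    intro i
    rw [hfconj]
    apply iSup_le
    intro x
    have h1 : ∑ j, x j * (0 : Fin k → ℝ) j - φ i x ≤ 0 := by
      simp only [Pi.zero_apply, mul_zero, Finset.sum_const_zero, zero_sub, neg_nonpos]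
      exact hφnonneg i x
    exact_mod_cast EReal.coe_le_coe_iff.mpr h1
  have hsub : ∀ i (a b : Fin k → ℝ), φ i b + (∑ j, φgrad i b j * (a j - b j)) ≤ φ i a :=
    fun i => subgrad hNP_nonneg hNP_smul (by positivity) (hφconv i) (hφsmooth i)
  -- finiteness along the trajectory
  have hINV : ∀ (ω : ℕ → Fin n) (t : ℕ) (i : Fin n), fconj i (-(αseq ω t i)) ≠ ⊤ := by
    intro ω t
    induction t with
    | zero =>
      intro i
      rw [hinit]
      simp only [Pi.zero_apply, neg_zero]
      intro htop
      have h := hfconj0 i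
      rw [htop, top_le_iff] at h
      exact EReal.zero_ne_top h
    | succ t ih =>
      obtain ⟨Δ, hΔ1, hΔ2⟩ := hupdate ω t
      intro i
      rw [hΔ1]
      by_cases hi : i = ω t
      · subst hi
        rw [Function.update_self]
        intro htop
        have h0 := hΔ2 0
        rw [hobj ω t 0, hobj ω t Δ, htop] at h0
        simp only [add_zero] at h0
        have hc := EReal.coe_toReal (ih (ω t)) (hfconj_ne_bot (ω t) _)
        rw [← hc] at h0
        rw [EReal.neg_top, EReal.bot_sub, ← EReal.coe_neg, ← EReal.coe_sub, le_bot_iff] at h0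
        exact EReal.coe_ne_bot _ h0
      · rw [Function.update_of_ne hi]
        exact ih i
  have hcoeF : ∀ (ω : ℕ → Fin n) (t : ℕ) (i : Fin n),
      fconj i (-(αseq ω t i)) = ((Fv (αseq ω t) i : ℝ) : EReal) := by
    intro ω t i
    rw [hFv]
    exact (EReal.coe_toReal (hINV ω t i) (hfconj_ne_bot _ _)).symm
  -- pairing identities
  have hpairX : ∀ (M : Matrix (Fin d) (Fin k) ℝ) (w : Fin d → ℝ) (z : Fin k → ℝ),
      ∑ j, w j * M.mulVec z j = ∑ j, M.transpose.mulVec w j * z j := by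
    intro M w z
    simp only [Matrix.mulVec, dotProduct, Matrix.transpose_apply, Finset.mul_sum,
      Finset.sum_mul]
    rw [Finset.sum_comm]
    exact Finset.sum_congr rfl fun j _ => Finset.sum_congr rfl fun l _ => by ring
  have hvpair : ∀ (β : Fin n → Fin k → ℝ) (w' : Fin d → ℝ),
      lam * ∑ j, w' j * vmap β j
        = (1 / n) * ∑ i, ∑ j, ((X i).transpose.mulVec w') j * β i j := by
    intro β w'
    rw [hvmap]
    have e2 : ∑ j, w' j * ((1 / (lam * (n:ℝ))) • ∑ i, (X i).mulVec (β i)) j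
        = (1 / (lam * (n:ℝ))) * ∑ j, w' j * (∑ i, (X i).mulVec (β i)) j := by
      rw [Finset.mul_sum]
      refine Finset.sum_congr rfl fun j _ => ?_
      simp only [Pi.smul_apply, smul_eq_mul]
      ring
    have e3 : ∑ j, w' j * (∑ i, (X i).mulVec (β i)) j
        = ∑ i, ∑ j, ((X i).transpose.mulVec w') j * β i j := by
      have e4 : ∑ j, w' j * (∑ i, (X i).mulVec (β i)) j
          = ∑ j, ∑ i, w' j * (X i).mulVec (β i) j := by
        refine Finset.sum_congr rfl fun j _ => ?_
        rw [Finset.sum_apply, Finset.mul_sum]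
      rw [e4, Finset.sum_comm]
      exact Finset.sum_congr rfl fun i _ => hpairX (X i) w' (β i)
    rw [e2, e3]
    have hl : lam ≠ 0 := ne_of_gt hlam
    have hnne : (n:ℝ) ≠ 0 := ne_of_gt hnR
    field_simp
  -- the dual objective is real along the trajectory
  have hDcoe : ∀ (β : Fin n → Fin k → ℝ), (∀ i, fconj i (-(β i)) ≠ ⊤) →
      D β = ((Drv β : ℝ) : EReal) := by
    intro β hfin
    rw [hD β, hDrv β, ← hgstar (vmap β)]
    have e : ∀ i : Fin n, -(fconj i (-(β i))) = ((-(Fv β i) : ℝ) : EReal) := by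
      intro i
      rw [hFv, EReal.coe_neg, EReal.coe_toReal (hfin i) (hfconj_ne_bot _ _)]
    rw [Finset.sum_congr rfl fun i _ => e i, ← ereal_coe_sum, ← EReal.coe_mul, ← EReal.coe_sub]
  -- weak duality
  have hwd : ∀ (β : Fin n → Fin k → ℝ), (∀ i, fconj i (-(β i)) ≠ ⊤) →
      ∀ w', Drv β ≤ P w' := by
    intro β hfin w'
    have hF : ∀ i, -(Fv β i) ≤ φ i ((X i).transpose.mulVec w')
        + ∑ j, ((X i).transpose.mulVec w') j * β i j := by
      intro i
      have h1 := hFY i (-(β i)) ((X i).transpose.mulVec w')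
      have h2 : fconj i (-(β i)) = (((Fv β i : ℝ)) : EReal) := by
        rw [hFv]
        exact (EReal.coe_toReal (hfin i) (hfconj_ne_bot _ _)).symm
      rw [h2, EReal.coe_le_coe_iff] at h1
      have e : ∑ j, ((X i).transpose.mulVec w') j * (-(β i)) j
          = -∑ j, ((X i).transpose.mulVec w') j * β i j := by
        rw [← Finset.sum_neg_distrib]
        exact Finset.sum_congr rfl fun j _ => by simp
      rw [e] at h1
      linarith
    have hsum : ∑ i, -(Fv β i) ≤ (∑ i, φ i ((X i).transpose.mulVec w'))
        + ∑ i, ∑ j, ((X i).transpose.mulVec w') j * β i j := by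
      rw [← Finset.sum_add_distrib]
      exact Finset.sum_le_sum fun i _ => hF i
    have hg : ∑ j, w' j * vmap β j - g w' ≤ gstar (vmap β) := by
      rw [hgstar]
      exact hGgrad _ w'
    have hv := hvpair β w'
    rw [hDrv, hP]
    have h3 := mul_le_mul_of_nonneg_left hsum (by positivity : (0:ℝ) ≤ 1 / n)
    rw [mul_add] at h3
    have h4 := mul_le_mul_of_nonneg_left hg hlam.le
    rw [mul_sub] at h4
    linarith

  -- the duality-gap identity
  have hgap : ∀ (β : Fin n → Fin k → ℝ),
      P (Ggrad (vmap β)) - Drv β = (1 / n) * ∑ i, Φ β i := by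
    intro β
    have hnegF : ∑ i, -(Fv β i) = -(∑ i, Fv β i) := by rw [← Finset.sum_neg_distrib]
    have hΦsum : ∑ i, Φ β i = ((∑ i, Fv β i)
        + ∑ i, φ i ((X i).transpose.mulVec (Ggrad (vmap β))))
        + ∑ i, ∑ j, ((X i).transpose.mulVec (Ggrad (vmap β))) j * β i j := by
      rw [Finset.sum_congr rfl fun i _ => hΦ β i, Finset.sum_add_distrib, Finset.sum_add_distrib]
    have hv := hvpair β (Ggrad (vmap β))
    have hgs := hgstar (vmap β)
    rw [hP, hDrv, hΦsum, hnegF, hgs]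
    linear_combination hv
  -- the step size
  set s : ℝ := lam * γ * n / (R ^ 2 + lam * γ * n) with hs_def
  have hden : (0:ℝ) < R ^ 2 + lam * γ * n := by positivity
  have hs0 : 0 < s := by positivity
  have hs1 : s ≤ 1 := by
    rw [hs_def, div_le_one hden]
    nlinarith [sq_nonneg R]
  -- the key per-step inequality
  have hkey : ∀ (ω : ℕ → Fin n) (t : ℕ),
      Drv (αseq ω t) + (s / n) * Φ (αseq ω t) (ω t) ≤ Drv (αseq ω (t + 1)) := by
    intro ω t
    obtain ⟨Δ, hΔ1, hΔ2⟩ := hupdate ω t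
    have hND'0 : ∀ z, 0 ≤ ND' z := ND_nonneg hNP'_nonneg hNP'_eq_zero hNP'_smul hND'
    have hND0 : ∀ z, 0 ≤ ND z := ND_nonneg hNP_nonneg hNP_eq_zero hNP_smul hND
    -- update formulas
    have hup : αseq ω (t+1) (ω t) = αseq ω t (ω t) + Δ := by
      rw [hΔ1, Function.update_self]
    have hupne : ∀ i', i' ≠ ω t → αseq ω (t+1) i' = αseq ω t i' := by
      intro i' h
      rw [hΔ1, Function.update_of_ne h]
    -- v-update
    have hvi : vmap (αseq ω (t+1))
        = vmap (αseq ω t) + (1 / (lam * (n:ℝ))) • (X (ω t)).mulVec Δ := by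
      rw [hvmap (αseq ω (t+1)), hvmap (αseq ω t), hΔ1]
      have e : ∀ i', (X i').mulVec (Function.update (αseq ω t) (ω t)
            (αseq ω t (ω t) + Δ) i')
          = (X i').mulVec (αseq ω t i') + (if i' = ω t then (X (ω t)).mulVec Δ else 0) := by
        intro i'
        by_cases h : i' = ω t
        · subst h
          rw [Function.update_self, Matrix.mulVec_add, if_pos rfl]
        · rw [Function.update_of_ne h, if_neg h, add_zero]
      rw [Finset.sum_congr rfl fun i' _ => e i', Finset.sum_add_distrib,
        Finset.sum_ite_eq' Finset.univ (ω t) (fun _ => (X (ω t)).mulVec Δ)]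
      simp only [Finset.mem_univ, if_true]
      rw [smul_add]
    -- smoothness of g*
    have hgsm : lam * gstar (vmap (αseq ω (t+1))) ≤ lam * gstar (vmap (αseq ω t))
        + (1/(n:ℝ)) * (∑ j, Ggrad (vmap (αseq ω t)) j * (X (ω t)).mulVec Δ j)
        + (1/(n:ℝ)) * ((1 / (2 * lam * (n:ℝ))) * ND' ((X (ω t)).mulVec Δ) ^ 2) := by
      have h1 := gstar_smooth hNP'_nonneg hNP'_eq_zero hNP'_smul hND' hgsc hGgrad
        (vmap (αseq ω t)) ((1 / (lam * (n:ℝ))) • (X (ω t)).mulVec Δ)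
      rw [← hvi, ← hgstar (vmap (αseq ω (t+1))), ← hgstar (vmap (αseq ω t))] at h1
      have e2 : ∑ j, Ggrad (vmap (αseq ω t)) j
            * ((1 / (lam * (n:ℝ))) • (X (ω t)).mulVec Δ) j
          = (1 / (lam * (n:ℝ))) * ∑ j, Ggrad (vmap (αseq ω t)) j * (X (ω t)).mulVec Δ j := by
        rw [Finset.mul_sum]
        refine Finset.sum_congr rfl fun j _ => ?_
        simp only [Pi.smul_apply, smul_eq_mul]
        ring
      rw [e2] at h1
      have e3 : ND' ((1 / (lam * (n:ℝ))) • (X (ω t)).mulVec Δ)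
          ≤ (1 / (lam * (n:ℝ))) * ND' ((X (ω t)).mulVec Δ) :=
        ND_smul_le hNP'_nonneg hNP'_eq_zero hNP'_smul hND' (by positivity) _
      have e4 : ND' ((1 / (lam * (n:ℝ))) • (X (ω t)).mulVec Δ) ^ 2
          ≤ ((1 / (lam * (n:ℝ))) * ND' ((X (ω t)).mulVec Δ)) ^ 2 :=
        pow_le_pow_left₀ (hND'0 _) e3 2
      have h2 := mul_le_mul_of_nonneg_left h1 hlam.le
      rw [mul_add, mul_add] at h2
      have h3 : lam * (1/2 * ND' ((1 / (lam * (n:ℝ))) • (X (ω t)).mulVec Δ) ^ 2)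
          ≤ (1/(n:ℝ)) * ((1 / (2 * lam * (n:ℝ))) * ND' ((X (ω t)).mulVec Δ) ^ 2) := by
        calc lam * (1/2 * ND' ((1 / (lam * (n:ℝ))) • (X (ω t)).mulVec Δ) ^ 2)
            ≤ lam * (1/2 * ((1 / (lam * (n:ℝ))) * ND' ((X (ω t)).mulVec Δ)) ^ 2) := by
              nlinarith [e4, hlam]
          _ = (1/(n:ℝ)) * ((1 / (2 * lam * (n:ℝ))) * ND' ((X (ω t)).mulVec Δ) ^ 2) := by
              field_simp
      have h4 : lam * ((1 / (lam * (n:ℝ)))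
            * ∑ j, Ggrad (vmap (αseq ω t)) j * (X (ω t)).mulVec Δ j)
          = (1/(n:ℝ)) * ∑ j, Ggrad (vmap (αseq ω t)) j * (X (ω t)).mulVec Δ j := by
        field_simp
      linarith [h2, h3, h4]
    -- F-sum splitting
    have hsumF : ∑ i', -(Fv (αseq ω (t+1)) i') = (∑ i', -(Fv (αseq ω t) i'))
        + (Fv (αseq ω t) (ω t) - Fv (αseq ω (t+1)) (ω t)) := by
      have e : ∀ i', -(Fv (αseq ω (t+1)) i') = -(Fv (αseq ω t) i')
          + (if i' = ω t then Fv (αseq ω t) (ω t) - Fv (αseq ω (t+1)) (ω t) else 0) := by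
        intro i'
        by_cases h : i' = ω t
        · subst h
          rw [if_pos rfl]
          ring
        · rw [if_neg h]
          have : Fv (αseq ω (t+1)) i' = Fv (αseq ω t) i' := by
            rw [hFv, hFv, hupne i' h]
          rw [this]
          ring
      rw [Finset.sum_congr rfl fun i' _ => e i', Finset.sum_add_distrib,
        Finset.sum_ite_eq' Finset.univ (ω t)
          (fun _ => Fv (αseq ω t) (ω t) - Fv (αseq ω (t+1)) (ω t))]
      simp only [Finset.mem_univ, if_true]
    have hDsplit : Drv (αseq ω (t+1)) = Drv (αseq ω t)
        + (1/(n:ℝ)) * (Fv (αseq ω t) (ω t) - Fv (αseq ω (t+1)) (ω t))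
        - (lam * gstar (vmap (αseq ω (t+1))) - lam * gstar (vmap (αseq ω t))) := by
      rw [hDrv, hDrv, hsumF]
      ring
    -- real value of the chosen update's objective
    have hobjreal : obj ω t Δ = (((-(Fv (αseq ω (t+1)) (ω t))
        - ((∑ j, Ggrad (vmap (αseq ω t)) j * (X (ω t)).mulVec Δ j)
          + (1 / (2 * lam * (n:ℝ))) * ND' ((X (ω t)).mulVec Δ) ^ 2) : ℝ)) : EReal) := by
      rw [hobj, show αseq ω t (ω t) + Δ = αseq ω (t+1) (ω t) from hup.symm,
        hcoeF ω (t+1) (ω t), ← EReal.coe_neg, ← EReal.coe_sub]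
    -- the comparison update
    have hcomb : -(αseq ω t (ω t) + s • (-(φgrad (ω t) ((X (ω t)).transpose.mulVec
          (Ggrad (vmap (αseq ω t))))) - αseq ω t (ω t)))
        = (1 - s) • (-(αseq ω t (ω t)))
          + s • φgrad (ω t) ((X (ω t)).transpose.mulVec (Ggrad (vmap (αseq ω t)))) := by
      funext j
      simp only [Pi.neg_apply, Pi.add_apply, Pi.smul_apply, Pi.sub_apply, smul_eq_mul]
      ring
    have hA : (⨆ x : Fin k → ℝ,
          ((∑ j, x j * (-(αseq ω t (ω t))) j - φ (ω t) x : ℝ) : EReal))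
        ≤ ((Fv (αseq ω t) (ω t) : ℝ) : EReal) := by
      rw [← hfconj]
      exact le_of_eq (hcoeF ω t (ω t))
    have hcc := conj_combo hNP_nonneg hNP_eq_zero hNP_smul hND hγ (hφsmooth (ω t))
      (hsub (ω t)) ((X (ω t)).transpose.mulVec (Ggrad (vmap (αseq ω t))))
      (-(αseq ω t (ω t))) hA hs0.le hs1
    have hfc_comb : fconj (ω t) ((1 - s) • (-(αseq ω t (ω t)))
          + s • φgrad (ω t) ((X (ω t)).transpose.mulVec (Ggrad (vmap (αseq ω t)))))
        ≤ ((((1 - s) * Fv (αseq ω t) (ω t)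
          + s * (∑ j, ((X (ω t)).transpose.mulVec (Ggrad (vmap (αseq ω t)))) j
              * φgrad (ω t) ((X (ω t)).transpose.mulVec (Ggrad (vmap (αseq ω t)))) j
            - φ (ω t) ((X (ω t)).transpose.mulVec (Ggrad (vmap (αseq ω t)))))
          - γ / 2 * (s * (1 - s)) * ND (-(αseq ω t (ω t))
              - φgrad (ω t) ((X (ω t)).transpose.mulVec (Ggrad (vmap (αseq ω t))))) ^ 2 : ℝ))
          : EReal) := by
      rw [hfconj]
      exact hcc
    -- lower bound for the objective at the comparison update
    have hobjc := hΔ2 (s • (-(φgrad (ω t) ((X (ω t)).transpose.mulVec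
      (Ggrad (vmap (αseq ω t))))) - αseq ω t (ω t)))
    rw [hobj ω t, hcomb, hobjreal] at hobjc
    have hchain : -(((1 - s) * Fv (αseq ω t) (ω t)
          + s * (∑ j, ((X (ω t)).transpose.mulVec (Ggrad (vmap (αseq ω t)))) j
              * φgrad (ω t) ((X (ω t)).transpose.mulVec (Ggrad (vmap (αseq ω t)))) j
            - φ (ω t) ((X (ω t)).transpose.mulVec (Ggrad (vmap (αseq ω t)))))
          - γ / 2 * (s * (1 - s)) * ND (-(αseq ω t (ω t))
              - φgrad (ω t) ((X (ω t)).transpose.mulVec (Ggrad (vmap (αseq ω t))))) ^ 2))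
        - ((∑ j, Ggrad (vmap (αseq ω t)) j * (X (ω t)).mulVec (s • (-(φgrad (ω t)
              ((X (ω t)).transpose.mulVec (Ggrad (vmap (αseq ω t)))))
              - αseq ω t (ω t))) j)
          + (1 / (2 * lam * (n:ℝ))) * ND' ((X (ω t)).mulVec (s • (-(φgrad (ω t)
              ((X (ω t)).transpose.mulVec (Ggrad (vmap (αseq ω t)))))
              - αseq ω t (ω t)))) ^ 2)
        ≤ -(Fv (αseq ω (t+1)) (ω t))
          - ((∑ j, Ggrad (vmap (αseq ω t)) j * (X (ω t)).mulVec Δ j)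
            + (1 / (2 * lam * (n:ℝ))) * ND' ((X (ω t)).mulVec Δ) ^ 2) := by
      rw [← EReal.coe_le_coe_iff]
      refine le_trans ?_ hobjc
      rw [EReal.coe_sub, EReal.coe_neg]
      exact EReal.sub_le_sub (EReal.neg_le_neg_iff.mpr hfc_comb) (le_refl _)
    -- linear part of the comparison update
    have hlin : ∑ j, Ggrad (vmap (αseq ω t)) j * (X (ω t)).mulVec (s • (-(φgrad (ω t)
          ((X (ω t)).transpose.mulVec (Ggrad (vmap (αseq ω t)))))
          - αseq ω t (ω t))) j
        = s * (-(∑ j, ((X (ω t)).transpose.mulVec (Ggrad (vmap (αseq ω t)))) j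
              * φgrad (ω t) ((X (ω t)).transpose.mulVec (Ggrad (vmap (αseq ω t)))) j)
          - ∑ j, ((X (ω t)).transpose.mulVec (Ggrad (vmap (αseq ω t)))) j
              * αseq ω t (ω t) j) := by
      rw [Matrix.mulVec_smul]
      have e1 : ∑ j, Ggrad (vmap (αseq ω t)) j * (s • (X (ω t)).mulVec (-(φgrad (ω t)
            ((X (ω t)).transpose.mulVec (Ggrad (vmap (αseq ω t)))))
            - αseq ω t (ω t))) j
          = s * ∑ j, Ggrad (vmap (αseq ω t)) j * (X (ω t)).mulVec (-(φgrad (ω t)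
            ((X (ω t)).transpose.mulVec (Ggrad (vmap (αseq ω t)))))
            - αseq ω t (ω t)) j := by
        rw [Finset.mul_sum]
        refine Finset.sum_congr rfl fun j _ => ?_
        simp only [Pi.smul_apply, smul_eq_mul]
        ring
      rw [e1, hpairX]
      have e2 : ∑ j, ((X (ω t)).transpose.mulVec (Ggrad (vmap (αseq ω t)))) j
            * (-(φgrad (ω t) ((X (ω t)).transpose.mulVec (Ggrad (vmap (αseq ω t)))))
              - αseq ω t (ω t)) j
          = -(∑ j, ((X (ω t)).transpose.mulVec (Ggrad (vmap (αseq ω t)))) j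
              * φgrad (ω t) ((X (ω t)).transpose.mulVec (Ggrad (vmap (αseq ω t)))) j)
            - ∑ j, ((X (ω t)).transpose.mulVec (Ggrad (vmap (αseq ω t)))) j
              * αseq ω t (ω t) j := by
        rw [← Finset.sum_neg_distrib, ← Finset.sum_sub_distrib]
        refine Finset.sum_congr rfl fun j _ => ?_
        simp only [Pi.sub_apply, Pi.neg_apply]
        ring
      rw [e2]
    -- symmetric norm arguments
    have hargsym : (-(αseq ω t (ω t)) - φgrad (ω t) ((X (ω t)).transpose.mulVec
          (Ggrad (vmap (αseq ω t)))))
        = -(φgrad (ω t) ((X (ω t)).transpose.mulVec (Ggrad (vmap (αseq ω t))))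
          + αseq ω t (ω t)) := by
      funext j
      simp only [Pi.sub_apply, Pi.neg_apply, Pi.add_apply]
      ring
    have hargsym2 : (-(φgrad (ω t) ((X (ω t)).transpose.mulVec
          (Ggrad (vmap (αseq ω t))))) - αseq ω t (ω t))
        = -(φgrad (ω t) ((X (ω t)).transpose.mulVec (Ggrad (vmap (αseq ω t))))
          + αseq ω t (ω t)) := by
      funext j
      simp only [Pi.sub_apply, Pi.neg_apply, Pi.add_apply]
      ring
    have hndsym : ND (-(αseq ω t (ω t)) - φgrad (ω t) ((X (ω t)).transpose.mulVec
          (Ggrad (vmap (αseq ω t)))))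
        = ND (φgrad (ω t) ((X (ω t)).transpose.mulVec (Ggrad (vmap (αseq ω t))))
          + αseq ω t (ω t)) := by
      rw [hargsym, ND_neg hNP_smul hND]
    rw [hndsym] at hchain
    -- quadratic part of the comparison update
    have hquad : ND' ((X (ω t)).mulVec (s • (-(φgrad (ω t)
          ((X (ω t)).transpose.mulVec (Ggrad (vmap (αseq ω t)))))
          - αseq ω t (ω t))))
        ≤ s * (R * ND (φgrad (ω t) ((X (ω t)).transpose.mulVec
            (Ggrad (vmap (αseq ω t)))) + αseq ω t (ω t))) := by
      calc ND' ((X (ω t)).mulVec (s • (-(φgrad (ω t)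
            ((X (ω t)).transpose.mulVec (Ggrad (vmap (αseq ω t)))))
            - αseq ω t (ω t))))
          ≤ R * ND (s • (-(φgrad (ω t) ((X (ω t)).transpose.mulVec
              (Ggrad (vmap (αseq ω t))))) - αseq ω t (ω t))) := hXR (ω t) _
        _ ≤ R * (s * ND (-(φgrad (ω t) ((X (ω t)).transpose.mulVec
              (Ggrad (vmap (αseq ω t))))) - αseq ω t (ω t))) :=
            mul_le_mul_of_nonneg_left
              (ND_smul_le hNP_nonneg hNP_eq_zero hNP_smul hND hs0.le _) hR
        _ = s * (R * ND (φgrad (ω t) ((X (ω t)).transpose.mulVec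
              (Ggrad (vmap (αseq ω t)))) + αseq ω t (ω t))) := by
            rw [hargsym2, ND_neg hNP_smul hND]
            ring
    have hquad2 : ND' ((X (ω t)).mulVec (s • (-(φgrad (ω t)
          ((X (ω t)).transpose.mulVec (Ggrad (vmap (αseq ω t)))))
          - αseq ω t (ω t)))) ^ 2
        ≤ (s * (R * ND (φgrad (ω t) ((X (ω t)).transpose.mulVec
            (Ggrad (vmap (αseq ω t)))) + αseq ω t (ω t)))) ^ 2 :=
      pow_le_pow_left₀ (hND'0 _) hquad 2
    have h5 := mul_le_mul_of_nonneg_left hquad2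
      (by positivity : (0:ℝ) ≤ 1 / (2 * lam * (n:ℝ)))
    -- the exact coefficient cancellation
    have hcoeff : γ / 2 * (s * (1 - s)) = (1 / (2 * lam * (n:ℝ))) * (s^2 * R^2) := by
      rw [hs_def]
      field_simp
      ring
    have h6 : γ / 2 * (s * (1 - s)) * ND (φgrad (ω t) ((X (ω t)).transpose.mulVec
          (Ggrad (vmap (αseq ω t)))) + αseq ω t (ω t)) ^ 2
        = (1 / (2 * lam * (n:ℝ))) * (s^2 * R^2) * ND (φgrad (ω t)
          ((X (ω t)).transpose.mulVec (Ggrad (vmap (αseq ω t))))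
          + αseq ω t (ω t)) ^ 2 := by
      rw [hcoeff]
    -- combine into the per-coordinate inequality
    have hKEYreal : s * Φ (αseq ω t) (ω t)
        ≤ Fv (αseq ω t) (ω t) - Fv (αseq ω (t+1)) (ω t)
          - ((∑ j, Ggrad (vmap (αseq ω t)) j * (X (ω t)).mulVec Δ j)
            + (1 / (2 * lam * (n:ℝ))) * ND' ((X (ω t)).mulVec Δ) ^ 2) := by
      rw [hΦ]
      nlinarith [hchain, hlin, h5, h6]
    -- conclude
    have h7 := mul_le_mul_of_nonneg_left hKEYreal (by positivity : (0:ℝ) ≤ 1 / (n:ℝ))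
    rw [hDsplit]
    have h8 : (s / (n:ℝ)) * Φ (αseq ω t) (ω t)
        = (1/(n:ℝ)) * (s * Φ (αseq ω t) (ω t)) := by ring
    rw [h8]
    nlinarith [h7, hgsm]
  -- the reference primal value
  have hPnn : ∀ w, 0 ≤ P w := by
    intro w
    rw [hP]
    have h1 : 0 ≤ ∑ i, φ i ((X i).transpose.mulVec w) :=
      Finset.sum_nonneg fun i _ => hφnonneg i _
    have := hgnonneg w
    positivity
  have hPbdd : BddBelow (Set.range P) := ⟨0, by rintro r ⟨w, rfl⟩; exact hPnn w⟩
  set Pstar : ℝ := ⨅ w, P w with hPstar_def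
  have hPstar_le : ∀ w', Pstar ≤ P w' := fun w' => ciInf_le hPbdd w'
  have hPstar1 : Pstar ≤ 1 := by
    refine le_trans (hPstar_le 0) ?_
    rw [hP]
    simp only [Matrix.mulVec_zero, hgzero, mul_zero, add_zero]
    exact hφzero
  have hDrP : ∀ (ω : ℕ → Fin n) (t : ℕ), Drv (αseq ω t) ≤ Pstar :=
    fun ω t => le_ciInf (hwd (αseq ω t) (hINV ω t))
  have hDr0 : 0 ≤ Drv (0 : Fin n → Fin k → ℝ) := by
    have hF0 : ∀ i : Fin n, Fv (0 : Fin n → Fin k → ℝ) i ≤ 0 := by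
      intro i
      rw [hFv]
      simp only [Pi.zero_apply, neg_zero]
      have h1 := EReal.toReal_le_toReal (hfconj0 i) (hfconj_ne_bot i 0) (by simp)
      simpa using h1
    have hv0 : vmap (0 : Fin n → Fin k → ℝ) = 0 := by
      rw [hvmap]
      simp
    have hg1 : gstar 0 ≤ 0 := by
      rw [hgstar]
      simp only [Pi.zero_apply, mul_zero, Finset.sum_const_zero, zero_sub, neg_nonpos]
      exact hgnonneg _
    have hg2 : 0 ≤ gstar 0 := by
      rw [hgstar]
      have h := hGgrad 0 0
      simpa [hgzero] using h
    rw [hDrv, hv0, le_antisymm hg1 hg2, mul_zero, sub_zero]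
    apply mul_nonneg (by positivity)
    exact Finset.sum_nonneg fun i _ => by linarith [hF0 i]
  -- expectation sums
  obtain ⟨Sd, hSd⟩ : ∃ S : ℕ → ℝ,
      ∀ t, S t = ∑ σ : Fin t → Fin n, Drv (αseq (exts t σ) t) := ⟨_, fun t => rfl⟩
  obtain ⟨Gp, hGp⟩ : ∃ G : ℕ → ℝ, ∀ t, G t = ∑ σ : Fin t → Fin n,
      (P (Ggrad (vmap (αseq (exts t σ) t))) - Drv (αseq (exts t σ) t)) := ⟨_, fun t => rfl⟩
  have hcard : ∀ t : ℕ, (Fintype.card (Fin t → Fin n) : ℝ) = (n:ℝ) ^ t := by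
    intro t
    rw [Fintype.card_fun]
    simp
  -- prefix coherence
  have hprefix : ∀ (t : ℕ) (σ : Fin t → Fin n) (i : Fin n),
      αseq (exts (t+1) (Fin.snoc σ i)) t = αseq (exts t σ) t := by
    intro t σ i
    apply hadapt
    intro s' hs'
    rw [hexts, hexts]
    simp [Fin.snoc, hs', Nat.lt_succ_of_lt hs']
  have hlast : ∀ (t : ℕ) (σ : Fin t → Fin n) (i : Fin n), exts (t+1) (Fin.snoc σ i) t = i := by
    intro t σ i
    rw [hexts]
    simp [Fin.snoc]
  have hsum_snoc : ∀ (t : ℕ) (f : (Fin (t+1) → Fin n) → ℝ),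
      ∑ σ' : Fin (t+1) → Fin n, f σ' = ∑ σ : Fin t → Fin n, ∑ i : Fin n, f (Fin.snoc σ i) := by
    intro t f
    rw [← Equiv.sum_comp (Fin.snocEquiv (fun _ => Fin n)) f]
    have e : ∀ q : Fin n × (Fin t → Fin n),
        f ((Fin.snocEquiv (fun _ => Fin n)) q) = f (Fin.snoc q.2 q.1) := by
      intro q
      rfl
    rw [Finset.sum_congr rfl fun q _ => e q, Fintype.sum_prod_type]
    rw [Finset.sum_comm]
  -- the expected-dual recursion
  have hrec : ∀ t : ℕ, (n:ℝ) * Sd t + s * Gp t ≤ Sd (t+1) := by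
    intro t
    have hterm : ∀ (σ : Fin t → Fin n) (i : Fin n),
        Drv (αseq (exts t σ) t) + (s / n) * Φ (αseq (exts t σ) t) i
          ≤ Drv (αseq (exts (t+1) (Fin.snoc σ i)) (t+1)) := by
      intro σ i
      have h := hkey (exts (t+1) (Fin.snoc σ i)) t
      rwa [hprefix t σ i, hlast t σ i] at h
    have hinner : ∀ σ : Fin t → Fin n,
        (n:ℝ) * Drv (αseq (exts t σ) t)
            + s * (P (Ggrad (vmap (αseq (exts t σ) t))) - Drv (αseq (exts t σ) t))
          ≤ ∑ i : Fin n, Drv (αseq (exts (t+1) (Fin.snoc σ i)) (t+1)) := by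
      intro σ
      have h1 : ∑ i : Fin n, (Drv (αseq (exts t σ) t) + (s / n) * Φ (αseq (exts t σ) t) i)
          ≤ ∑ i : Fin n, Drv (αseq (exts (t+1) (Fin.snoc σ i)) (t+1)) :=
        Finset.sum_le_sum fun i _ => hterm σ i
      have h2 : ∑ i : Fin n, (Drv (αseq (exts t σ) t) + (s / n) * Φ (αseq (exts t σ) t) i)
          = (n:ℝ) * Drv (αseq (exts t σ) t) + (s / n) * ∑ i, Φ (αseq (exts t σ) t) i := by
        rw [Finset.sum_add_distrib, Finset.sum_const, Finset.card_univ, Fintype.card_fin,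
          ← Finset.mul_sum]
        simp [nsmul_eq_mul]
      have h3 : (s / n) * ∑ i, Φ (αseq (exts t σ) t) i
          = s * (P (Ggrad (vmap (αseq (exts t σ) t))) - Drv (αseq (exts t σ) t)) := by
        rw [hgap]
        field_simp
      rw [h2, h3] at h1
      exact h1
    calc (n:ℝ) * Sd t + s * Gp t
        = ∑ σ : Fin t → Fin n, ((n:ℝ) * Drv (αseq (exts t σ) t)
            + s * (P (Ggrad (vmap (αseq (exts t σ) t))) - Drv (αseq (exts t σ) t))) := by
          rw [hSd, hGp, Finset.sum_add_distrib, Finset.mul_sum, Finset.mul_sum]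
      _ ≤ ∑ σ : Fin t → Fin n, ∑ i : Fin n, Drv (αseq (exts (t+1) (Fin.snoc σ i)) (t+1)) :=
          Finset.sum_le_sum fun σ _ => hinner σ
      _ = Sd (t+1) := by rw [hSd, hsum_snoc t]
  -- geometric decay of the dual suboptimality
  obtain ⟨ε, hε⟩ : ∃ e : ℕ → ℝ, ∀ t, e t = (n:ℝ) ^ t * Pstar - Sd t := ⟨_, fun t => rfl⟩
  have hGpge : ∀ t, ε t ≤ Gp t := by
    intro t
    rw [hε, hGp]
    have h1 : (n:ℝ) ^ t * Pstar - Sd t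
        = ∑ σ : Fin t → Fin n, (Pstar - Drv (αseq (exts t σ) t)) := by
      rw [Finset.sum_sub_distrib, Finset.sum_const, Finset.card_univ, hSd, ← hcard t]
      simp [nsmul_eq_mul]
    rw [h1]
    refine Finset.sum_le_sum fun σ _ => ?_
    have h2 := hPstar_le (Ggrad (vmap (αseq (exts t σ) t)))
    linarith
  have hεstep : ∀ t, ε (t+1) ≤ ((n:ℝ) - s) * ε t := by
    intro t
    have h1 := hrec t
    have h2 := hGpge t
    rw [hε] at h2
    have h3 := mul_le_mul_of_nonneg_left h2 (le_of_lt hs0)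
    rw [hε, hε, pow_succ]
    nlinarith [h1, h3]
  have hε0 : ε 0 ≤ 1 := by
    rw [hε, pow_zero, one_mul, hSd]
    have h1 : ∀ σ : Fin 0 → Fin n, Drv (αseq (exts 0 σ) 0) = Drv (0 : Fin n → Fin k → ℝ) :=
      fun σ => by rw [hinit]
    rw [Finset.sum_congr rfl (fun σ _ => h1 σ), Finset.sum_const, Finset.card_univ]
    have h2 : Fintype.card (Fin 0 → Fin n) = 1 := by
      rw [Fintype.card_fun]
      simp
    rw [h2, one_smul]
    linarith [hDr0, hPstar1]
  have hns : (0:ℝ) ≤ (n:ℝ) - s := by linarith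
  have hεT : ∀ t : ℕ, ε t ≤ ((n:ℝ) - s) ^ t := by
    intro t
    induction t with
    | zero => simpa using hε0
    | succ t ih =>
      calc ε (t+1) ≤ ((n:ℝ) - s) * ε t := hεstep t
        _ ≤ ((n:ℝ) - s) * ((n:ℝ) - s) ^ t := mul_le_mul_of_nonneg_left ih hns
        _ = ((n:ℝ) - s) ^ (t+1) := by rw [pow_succ]; ring
  -- the final gap bound
  have hSdub : Sd (T+1) ≤ (n:ℝ) ^ (T+1) * Pstar := by
    rw [hSd]
    calc ∑ σ : Fin (T+1) → Fin n, Drv (αseq (exts (T+1) σ) (T+1))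
        ≤ ∑ σ : Fin (T+1) → Fin n, Pstar :=
          Finset.sum_le_sum fun σ _ => hDrP (exts (T+1) σ) (T+1)
      _ = (n:ℝ) ^ (T+1) * Pstar := by
          rw [Finset.sum_const, Finset.card_univ, ← hcard (T+1)]
          simp [nsmul_eq_mul]
  have hGapT : s * Gp T ≤ (n:ℝ) * ((n:ℝ) - s) ^ T := by
    have h1 := hrec T
    have h2 := hεT T
    rw [hε] at h2
    have h3 := mul_le_mul_of_nonneg_left h2 (le_of_lt hnR)
    have e : (n:ℝ) ^ (T+1) = (n:ℝ) ^ T * n := pow_succ _ _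
    nlinarith [h1, hSdub, h3, e]
  -- numerical conclusion
  set C : ℝ := (n:ℝ) + R ^ 2 / (lam * γ) with hC_def
  have hC1 : (1:ℝ) ≤ C := by
    rw [hC_def]
    have : 0 ≤ R ^ 2 / (lam * γ) := by positivity
    linarith
  have hC0 : (0:ℝ) < C := by linarith
  have hCs : C = (n:ℝ) / s := by
    rw [hC_def, hs_def]
    field_simp
    ring
  have hfinal : (1 / (n:ℝ) ^ T) * Gp T ≤ εP := by
    have hpow : ((n:ℝ) - s) ^ T / (n:ℝ) ^ T = (1 - 1/C) ^ T := by
      rw [← div_pow]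
      congr 1
      rw [hCs]
      field_simp
    have hexp : (1 - 1/C) ^ T ≤ Real.exp (-(T / C)) := by
      have h1 : 1 - 1/C ≤ Real.exp (-(1/C)) := by
        have := Real.add_one_le_exp (-(1/C))
        linarith
      have h2 : (0:ℝ) ≤ 1 - 1/C := by
        have : 1/C ≤ 1 := by
          rw [div_le_one hC0]; exact hC1
        linarith
      calc (1 - 1/C) ^ T ≤ Real.exp (-(1/C)) ^ T := pow_le_pow_left₀ h2 h1 T
        _ = Real.exp (-(T / C)) := by
            rw [← Real.exp_nat_mul]
            congr 1
            rw [mul_neg, mul_one_div]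
    have hlog : Real.exp (-(T / C)) ≤ εP / C := by
      have h1 : Real.log (C / εP) ≤ T / C := by
        rw [le_div_iff₀ hC0]
        calc Real.log (C / εP) * C = C * Real.log (C / εP) := mul_comm _ _
          _ ≤ T := hT
      have h2 : Real.exp (-(T / C)) ≤ Real.exp (-(Real.log (C / εP))) :=
        Real.exp_le_exp.mpr (by linarith)
      have h3 : Real.exp (-(Real.log (C / εP))) = εP / C := by
        rw [Real.exp_neg, Real.exp_log (by positivity)]
        field_simp
      linarith [h2, h3.le, h3.ge]
    have hGpT : Gp T ≤ (n:ℝ) ^ T * εP := by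
      have h1 : Gp T ≤ ((n:ℝ) / s) * ((n:ℝ) - s) ^ T := by
        rw [div_mul_eq_mul_div, le_div_iff₀ hs0]
        nlinarith [hGapT]
      have h2 : ((n:ℝ)/s) * ((n:ℝ) - s) ^ T = C * (((n:ℝ) - s) ^ T / (n:ℝ) ^ T) * (n:ℝ) ^ T := by
        rw [hCs]
        field_simp
      have h3 : C * (((n:ℝ) - s) ^ T / (n:ℝ) ^ T) ≤ εP := by
        rw [hpow]
        calc C * (1 - 1/C) ^ T ≤ C * Real.exp (-(T/C)) :=
              mul_le_mul_of_nonneg_left hexp (le_of_lt hC0)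
          _ ≤ C * (εP / C) := mul_le_mul_of_nonneg_left hlog (le_of_lt hC0)
          _ = εP := by field_simp
      calc Gp T ≤ C * (((n:ℝ) - s) ^ T / (n:ℝ) ^ T) * (n:ℝ) ^ T := h2 ▸ h1
        _ ≤ εP * (n:ℝ) ^ T := by
            apply mul_le_mul_of_nonneg_right h3
            positivity
        _ = (n:ℝ) ^ T * εP := mul_comm _ _
    rw [div_mul_eq_mul_div, one_mul, div_le_iff₀ (by positivity : (0:ℝ) < (n:ℝ)^T)]
    calc Gp T ≤ (n:ℝ) ^ T * εP := hGpT
      _ = εP * (n:ℝ) ^ T := mul_comm _ _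
  -- convert the conclusion to real numbers
  have hext_eq : ∀ σ : Fin T → Fin n,
      (fun t => if h : t < T then σ ⟨t, h⟩ else ⟨0, hn⟩) = exts T σ :=
    fun σ => (hexts T σ).symm
  simp only [hext_eq]
  have hterm : ∀ σ : Fin T → Fin n,
      ((P (Ggrad (vmap (αseq (exts T σ) T))) : ℝ) : EReal) - D (αseq (exts T σ) T)
        = (((P (Ggrad (vmap (αseq (exts T σ) T))) - Drv (αseq (exts T σ) T) : ℝ)) : EReal) := by
    intro σ
    rw [hDcoe _ (hINV (exts T σ) T), ← EReal.coe_sub]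
  rw [Finset.sum_congr rfl (fun σ _ => hterm σ), ← ereal_coe_sum, ← EReal.coe_mul]
  rw [EReal.coe_le_coe_iff]
  calc (1 / (n:ℝ) ^ T) * ∑ σ : Fin T → Fin n,
        (P (Ggrad (vmap (αseq (exts T σ) T))) - Drv (αseq (exts T σ) T))
      = (1 / (n:ℝ) ^ T) * Gp T := by rw [hGp]
    _ ≤ εP := hfinal
end

section
/- Consider Prox-SDCA with Option I updates, under the same assumptions as in the smooth-loss theorem: each φ_i is (1/γ)-smooth with respect to ‖·‖_P, g is 1-strongly convex with respect to ‖·‖_{P'}, φ_i ≥ 0, (1/n)∑_i φ_i(0) ≤ 1, and ‖X_i‖ ≤ R. Let 0 ≤ T₀ < T. If T₀ ≥ (n + R²/(λγ)) · log( (n + R²/(λγ)) / ((T − T₀) ε_P) ), then the expected average duality gap satisfies E[ (1/(T−T₀)) ∑_{t=T₀+1}^{T} (P(w^{(t−1)}) − D(α^{(t−1)})) ] ≤ ε_P, where the expectation is over the i.i.d. uniformly random indices used by the algorithm. -/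
open Finset

private lemma aux_lim {a b c : ℝ} (hc : 0 ≤ c)
    (h : ∀ ε : ℝ, 0 < ε → ε ≤ 1 → a ≤ b + c * ε) : a ≤ b := by
  by_contra hab
  push_neg at hab
  have hc1 : 0 < c + 1 := by linarith
  set ε := min 1 ((a - b) / (2 * (c + 1))) with hε
  have hε0 : 0 < ε := lt_min one_pos (div_pos (by linarith) (by linarith))
  have hε1 : ε ≤ 1 := min_le_left _ _
  have h2 : ε ≤ (a - b) / (2 * (c + 1)) := min_le_right _ _
  have := h ε hε0 hε1
  have hcε : c * ε ≤ c * ((a - b) / (2 * (c + 1))) := mul_le_mul_of_nonneg_left h2 hc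
  have hlt : c * ((a - b) / (2 * (c + 1))) < a - b := by
    rw [div_eq_mul_inv]
    rw [show c * ((a - b) * (2 * (c + 1))⁻¹) = (a - b) * (c * (2 * (c + 1))⁻¹) by ring]
    have : c * (2 * (c + 1))⁻¹ < 1 := by
      rw [mul_inv_lt_iff₀ (by positivity)]
      linarith
    nlinarith [sub_pos.2 hab]
  linarith

private lemma aux_coe_sum {ι : Type*} [DecidableEq ι] (s : Finset ι) (f : ι → ℝ) :
    ((∑ i ∈ s, f i : ℝ) : EReal) = ∑ i ∈ s, ((f i : ℝ) : EReal) := by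
  induction s using Finset.induction with
  | empty => simp
  | insert a s h ih => rw [Finset.sum_insert h, Finset.sum_insert h, EReal.coe_add, ih]

private lemma aux_update_sum {ι κ : Type*} [Fintype ι] [Fintype κ] [DecidableEq ι]
    (i : ι) (F : (ι → κ) → ℝ) :
    ∑ σ : ι → κ, ∑ j : κ, F (Function.update σ i j)
      = (Fintype.card κ : ℝ) * ∑ σ : ι → κ, F σ := by
  have hG : Function.Involutive
      (fun p : (ι → κ) × κ => (Function.update p.1 i p.2, p.1 i)) := by
    intro p
    simp [Function.update_idem, Function.update_self, Function.update_eq_self]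
  have := Fintype.sum_bijective _ hG.bijective
    (fun p : (ι → κ) × κ => F (Function.update p.1 i p.2))
    (fun p : (ι → κ) × κ => F p.1) (fun p => rfl)
  rw [Fintype.sum_prod_type, Fintype.sum_prod_type] at this
  rw [this]
  simp [Finset.sum_const, mul_comm, Finset.mul_sum]

private lemma aux_pairing {m : ℕ} (N Nd : (Fin m → ℝ) → ℝ)
    (hz : ∀ x, N x = 0 ↔ x = 0)
    (hsmul : ∀ (c : ℝ) x, N (c • x) = |c| * N x)
    (hnn : ∀ x, 0 ≤ N x)
    (hlub : ∀ z, IsLUB {r : ℝ | ∃ x : Fin m → ℝ, N x = 1 ∧ r = ∑ j, z j * x j} (Nd z))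
    (z x : Fin m → ℝ) : ∑ j, z j * x j ≤ Nd z * N x := by
  rcases eq_or_ne x 0 with rfl | hx
  · simp [(hz 0).2 rfl]
  · have hpos : 0 < N x := lt_of_le_of_ne (hnn x) (fun h => hx ((hz x).1 h.symm))
    have hmem : (∑ j, z j * ((N x)⁻¹ • x) j) ∈
        {r : ℝ | ∃ x : Fin m → ℝ, N x = 1 ∧ r = ∑ j, z j * x j} := by
      refine ⟨(N x)⁻¹ • x, ?_, rfl⟩
      rw [hsmul, abs_of_pos (by positivity), inv_mul_cancel₀ (ne_of_gt hpos)]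
    have hle := (hlub z).1 hmem
    have : ∑ j, z j * ((N x)⁻¹ • x) j = (N x)⁻¹ * ∑ j, z j * x j := by
      rw [Finset.mul_sum]; exact Finset.sum_congr rfl (fun j _ => by
        simp only [Pi.add_apply, Pi.sub_apply, Pi.smul_apply, Pi.neg_apply, smul_eq_mul]; ring)
    rw [this] at hle
    calc ∑ j, z j * x j = N x * ((N x)⁻¹ * ∑ j, z j * x j) := by
          field_simp
      _ ≤ N x * Nd z := mul_le_mul_of_nonneg_left hle (le_of_lt hpos)
      _ = Nd z * N x := mul_comm _ _

private lemma aux_nd_smul {m : ℕ} (N Nd : (Fin m → ℝ) → ℝ)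
    (hlub : ∀ z, IsLUB {r : ℝ | ∃ x : Fin m → ℝ, N x = 1 ∧ r = ∑ j, z j * x j} (Nd z))
    {c : ℝ} (hc : 0 < c) (z : Fin m → ℝ) : Nd (c • z) = c * Nd z := by
  refine (hlub (c • z)).unique ?_
  constructor
  · rintro r ⟨x, hx, rfl⟩
    have h1 : ∑ j, (c • z) j * x j = c * ∑ j, z j * x j := by
      rw [Finset.mul_sum]; exact Finset.sum_congr rfl (fun j _ => by
        simp only [Pi.add_apply, Pi.sub_apply, Pi.smul_apply, Pi.neg_apply, smul_eq_mul]; ring)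
    rw [h1]
    exact mul_le_mul_of_nonneg_left ((hlub z).1 ⟨x, hx, rfl⟩) (le_of_lt hc)
  · intro y hy
    have : Nd z ≤ y / c := by
      apply (hlub z).2
      rintro r ⟨x, hx, rfl⟩
      have hmem : c * ∑ j, z j * x j ∈
          {r : ℝ | ∃ x : Fin m → ℝ, N x = 1 ∧ r = ∑ j, (c • z) j * x j} := by
        refine ⟨x, hx, ?_⟩
        rw [Finset.mul_sum]; exact Finset.sum_congr rfl (fun j _ => by
          simp only [Pi.add_apply, Pi.sub_apply, Pi.smul_apply, Pi.neg_apply, smul_eq_mul]; ring)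
      have := hy hmem
      rw [le_div_iff₀ hc]; linarith [this]
    calc c * Nd z ≤ c * (y / c) := mul_le_mul_of_nonneg_left this (le_of_lt hc)
      _ = y := by field_simp

private lemma aux_nd_nonneg {m : ℕ} (N Nd : (Fin m → ℝ) → ℝ)
    (hsmul : ∀ (c : ℝ) x, N (c • x) = |c| * N x)
    (hlub : ∀ z, IsLUB {r : ℝ | ∃ x : Fin m → ℝ, N x = 1 ∧ r = ∑ j, z j * x j} (Nd z))
    (hex : ∃ x, N x = 1) (z : Fin m → ℝ) : 0 ≤ Nd z := by
  obtain ⟨x, hx⟩ := hex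
  have h1 := (hlub z).1 ⟨x, hx, rfl⟩
  have hx' : N ((-1 : ℝ) • x) = 1 := by rw [hsmul]; simp [hx]
  have h2 := (hlub z).1 ⟨(-1 : ℝ) • x, hx', rfl⟩
  have : ∑ j, z j * ((-1 : ℝ) • x) j = -∑ j, z j * x j := by
    rw [← Finset.sum_neg_distrib]
    exact Finset.sum_congr rfl (fun j _ => by simp [Pi.smul_apply])
  rw [this] at h2
  linarith


set_option maxHeartbeats 2000000 in
/-- Theorem 1, second part: for (1/γ)-smooth losses, if
`T₀ ≥ (n + R²/(λγ)) log((n + R²/(λγ))/((T − T₀)ε_P))` then the expected average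
duality gap over iterations `T₀+1,…,T` of Prox-SDCA (Option I) is at most `ε_P`.
The expectation is the average over all sequences of the i.i.d. uniform
coordinate indices. -/
theorem prox_sdca_smooth_average_duality_gap (d k n : ℕ) (hn : 0 < n)
    (lam γ R εP : ℝ) (hlam : 0 < lam) (hγ : 0 < γ) (hR : 0 ≤ R) (hεP : 0 < εP)
    -- ‖·‖_P, a norm on ℝ^k, and its dual norm ‖·‖_D:
    (NP : (Fin k → ℝ) → ℝ)
    (hNP_nonneg : ∀ x, 0 ≤ NP x)
    (hNP_eq_zero : ∀ x, NP x = 0 ↔ x = 0)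
    (hNP_add : ∀ x y, NP (x + y) ≤ NP x + NP y)
    (hNP_smul : ∀ (c : ℝ) (x : Fin k → ℝ), NP (c • x) = |c| * NP x)
    (ND : (Fin k → ℝ) → ℝ)
    (hND : ∀ z, IsLUB {r : ℝ | ∃ x : Fin k → ℝ, NP x = 1 ∧ r = ∑ j, z j * x j} (ND z))
    -- ‖·‖_{P'}, a norm on ℝ^d, and its dual norm ‖·‖_{D'}:
    (NP' : (Fin d → ℝ) → ℝ)
    (hNP'_nonneg : ∀ x, 0 ≤ NP' x)
    (hNP'_eq_zero : ∀ x, NP' x = 0 ↔ x = 0)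
    (hNP'_add : ∀ x y, NP' (x + y) ≤ NP' x + NP' y)
    (hNP'_smul : ∀ (c : ℝ) (x : Fin d → ℝ), NP' (c • x) = |c| * NP' x)
    (ND' : (Fin d → ℝ) → ℝ)
    (hND' : ∀ z, IsLUB {r : ℝ | ∃ x : Fin d → ℝ, NP' x = 1 ∧ r = ∑ j, z j * x j} (ND' z))
    -- data matrices, with operator norms bounded by R:
    (X : Fin n → Matrix (Fin d) (Fin k) ℝ)
    (hXR : ∀ i (z : Fin k → ℝ), ND' ((X i).mulVec z) ≤ R * ND z)
    -- the losses: convex, nonnegative, (1/γ)-smooth w.r.t. ‖·‖_P, small at 0: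
    (φ : Fin n → (Fin k → ℝ) → ℝ) (hφconv : ∀ i, ConvexOn ℝ Set.univ (φ i))
    (φgrad : Fin n → (Fin k → ℝ) → (Fin k → ℝ))
    (hφsmooth : ∀ i a b, φ i a ≤ φ i b + (∑ j, φgrad i b j * (a j - b j))
        + (1 / (2 * γ)) * NP (a - b) ^ 2)
    (hφnonneg : ∀ i a, 0 ≤ φ i a)
    (hφzero : (1 / n) * ∑ i, φ i 0 ≤ 1)
    -- the regularizer: convex, 1-strongly convex w.r.t. ‖·‖_{P'}, normalized:
    (g : (Fin d → ℝ) → ℝ) (hgconv : ConvexOn ℝ Set.univ g)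
    (hgsc : ∀ (w₁ w₂ : Fin d → ℝ) (t : ℝ), 0 ≤ t → t ≤ 1 →
      g (t • w₁ + (1 - t) • w₂) ≤ t * g w₁ + (1 - t) * g w₂
        - (t * (1 - t) / 2) * NP' (w₁ - w₂) ^ 2)
    (hgzero : g 0 = 0) (hgnonneg : ∀ w, 0 ≤ g w)
    -- conjugates of the losses:
    (fconj : Fin n → (Fin k → ℝ) → EReal)
    (hfconj : ∀ i z, fconj i z = ⨆ x : Fin k → ℝ, ((∑ j, x j * z j - φ i x : ℝ) : EReal))
    -- `Ggrad v = ∇g*(v)`, the maximizer of `w ↦ wᵀv − g(w)` (so that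
    -- `g*(v) = Ggrad v ᵀ v − g (Ggrad v)`):
    (Ggrad : (Fin d → ℝ) → (Fin d → ℝ))
    (hGgrad : ∀ (v w' : Fin d → ℝ),
      (∑ j, w' j * v j) - g w' ≤ (∑ j, Ggrad v j * v j) - g (Ggrad v))
    -- primal and dual objectives:
    (vmap : (Fin n → Fin k → ℝ) → (Fin d → ℝ))
    (hvmap : ∀ β, vmap β = (1 / (lam * n)) • ∑ i, (X i).mulVec (β i))
    (P : (Fin d → ℝ) → ℝ)
    (hP : ∀ w, P w = (1 / n) * ∑ i, φ i ((X i).transpose.mulVec w) + lam * g w)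
    (D : (Fin n → Fin k → ℝ) → EReal)
    (hD : ∀ β, D β = ((1 / n : ℝ) : EReal) * (∑ i, -(fconj i (-(β i))))
        - ((lam * ((∑ j, Ggrad (vmap β) j * vmap β j) - g (Ggrad (vmap β))) : ℝ) : EReal))
    -- the Prox-SDCA trajectory: `αseq ω t` is the dual iterate after `t` steps
    -- when the random coordinate indices are `ω 0, ω 1, …`:
    (αseq : (ℕ → Fin n) → ℕ → (Fin n → Fin k → ℝ))
    (hinit : ∀ ω, αseq ω 0 = 0)
    (hadapt : ∀ ω ω' t, (∀ s < t, ω s = ω' s) → αseq ω t = αseq ω' t)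
    -- Option I: the increment of column `ω t` maximizes the proximal dual objective:
    (obj : (ℕ → Fin n) → ℕ → (Fin k → ℝ) → EReal)
    (hobj : ∀ ω t Δ, obj ω t Δ = -(fconj (ω t) (-(αseq ω t (ω t) + Δ)))
        - (((∑ j, Ggrad (vmap (αseq ω t)) j * (X (ω t)).mulVec Δ j)
          + (1 / (2 * lam * n)) * ND' ((X (ω t)).mulVec Δ) ^ 2 : ℝ) : EReal))
    (hupdate : ∀ ω t, ∃ Δ : Fin k → ℝ,
      αseq ω (t + 1) = Function.update (αseq ω t) (ω t) (αseq ω t (ω t) + Δ) ∧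
      ∀ Δ' : Fin k → ℝ, obj ω t Δ' ≤ obj ω t Δ) :
    -- conclusion: the expected average duality gap over iterations T₀+1,…,T is ≤ ε_P
    ∀ T₀ T : ℕ, T₀ < T →
      ((n : ℝ) + R ^ 2 / (lam * γ))
          * Real.log (((n : ℝ) + R ^ 2 / (lam * γ)) / (((T : ℝ) - (T₀ : ℝ)) * εP))
        ≤ (T₀ : ℝ) →
      ((1 / (n : ℝ) ^ T : ℝ) : EReal) * ∑ σ : Fin T → Fin n,
          (((1 / ((T : ℝ) - (T₀ : ℝ)) : ℝ) : EReal) * ∑ t ∈ Finset.Icc (T₀ + 1) T,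
            (((P (Ggrad (vmap (αseq (fun s => if h : s < T then σ ⟨s, h⟩ else ⟨0, hn⟩) (t - 1)))) : ℝ) : EReal)
              - D (αseq (fun s => if h : s < T then σ ⟨s, h⟩ else ⟨0, hn⟩) (t - 1))))
        ≤ ((εP : ℝ) : EReal) := by
  -- basic positivity
  have hnR : (0 : ℝ) < n := by exact_mod_cast hn
  have hn1 : (1 : ℝ) ≤ n := by exact_mod_cast hn
  -- dimensions are positive
  have hkpos : 0 < k := by
    rcases Nat.eq_zero_or_pos k with hk | hk
    · exfalso
      subst hk
      have hub : (ND 0 - 1) ∈ upperBounds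
          {r : ℝ | ∃ x : Fin 0 → ℝ, NP x = 1 ∧ r = ∑ j, (0 : Fin 0 → ℝ) j * x j} := by
        rintro r ⟨x, hx, rfl⟩
        exfalso
        have hx0 : x = 0 := Subsingleton.elim x 0
        rw [hx0, (hNP_eq_zero 0).2 rfl] at hx
        norm_num at hx
      have := (hND 0).2 hub
      linarith
    · exact hk
  have hdpos : 0 < d := by
    rcases Nat.eq_zero_or_pos d with hd | hd
    · exfalso
      subst hd
      have hub : (ND' 0 - 1) ∈ upperBounds
          {r : ℝ | ∃ x : Fin 0 → ℝ, NP' x = 1 ∧ r = ∑ j, (0 : Fin 0 → ℝ) j * x j} := by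
        rintro r ⟨x, hx, rfl⟩
        exfalso
        have hx0 : x = 0 := Subsingleton.elim x 0
        rw [hx0, (hNP'_eq_zero 0).2 rfl] at hx
        norm_num at hx
      have := (hND' 0).2 hub
      linarith
    · exact hd
  -- unit vectors exist
  have hexP : ∃ x : Fin k → ℝ, NP x = 1 := by
    have hone : (fun _ : Fin k => (1 : ℝ)) ≠ 0 := by
      intro h
      have := congrFun h ⟨0, hkpos⟩
      norm_num at this
    have hpos : 0 < NP (fun _ => (1 : ℝ)) :=
      lt_of_le_of_ne (hNP_nonneg _) (fun h => hone ((hNP_eq_zero _).1 h.symm))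
    refine ⟨(NP (fun _ => (1 : ℝ)))⁻¹ • (fun _ => (1 : ℝ)), ?_⟩
    rw [hNP_smul, abs_of_pos (by positivity), inv_mul_cancel₀ (ne_of_gt hpos)]
  have hexP' : ∃ x : Fin d → ℝ, NP' x = 1 := by
    have hone : (fun _ : Fin d => (1 : ℝ)) ≠ 0 := by
      intro h
      have := congrFun h ⟨0, hdpos⟩
      norm_num at this
    have hpos : 0 < NP' (fun _ => (1 : ℝ)) :=
      lt_of_le_of_ne (hNP'_nonneg _) (fun h => hone ((hNP'_eq_zero _).1 h.symm))
    refine ⟨(NP' (fun _ => (1 : ℝ)))⁻¹ • (fun _ => (1 : ℝ)), ?_⟩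
    rw [hNP'_smul, abs_of_pos (by positivity), inv_mul_cancel₀ (ne_of_gt hpos)]
  -- norm consequences
  have pairP := aux_pairing NP ND hNP_eq_zero hNP_smul hNP_nonneg hND
  have pairP' := aux_pairing NP' ND' hNP'_eq_zero hNP'_smul hNP'_nonneg hND'
  have ndsmul : ∀ {c : ℝ}, 0 < c → ∀ z, ND (c • z) = c * ND z :=
    fun hc z => aux_nd_smul NP ND hND hc z
  have nd'smul : ∀ {c : ℝ}, 0 < c → ∀ z, ND' (c • z) = c * ND' z :=
    fun hc z => aux_nd_smul NP' ND' hND' hc z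
  have ndnn : ∀ z, 0 ≤ ND z := aux_nd_nonneg NP ND hNP_smul hND hexP
  have nd'nn : ∀ z, 0 ≤ ND' z := aux_nd_nonneg NP' ND' hNP'_smul hND' hexP'
  have approxD : ∀ (z : Fin k → ℝ) (ε : ℝ), 0 < ε →
      ∃ x, NP x = 1 ∧ ND z - ε < ∑ j, z j * x j := by
    intro z ε hε
    have h := (lt_isLUB_iff (hND z)).1 (show ND z - ε < ND z by linarith)
    obtain ⟨c, ⟨x, hx, rfl⟩, hc⟩ := h
    exact ⟨x, hx, hc⟩

  -- transpose/dot identity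
  have dotT : ∀ (M : Matrix (Fin d) (Fin k) ℝ) (w : Fin d → ℝ) (y : Fin k → ℝ),
      ∑ j, w j * M.mulVec y j = ∑ j, M.transpose.mulVec w j * y j := by
    intro M w y
    calc ∑ j, w j * M.mulVec y j
        = ∑ j, ∑ l, w j * (M j l * y l) := by
          refine Finset.sum_congr rfl fun j _ => ?_
          simp [Matrix.mulVec, dotProduct, Finset.mul_sum]
      _ = ∑ l, ∑ j, w j * (M j l * y l) := Finset.sum_comm
      _ = ∑ l, M.transpose.mulVec w l * y l := by
          refine Finset.sum_congr rfl fun l _ => ?_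
          simp only [Matrix.mulVec, dotProduct, Matrix.transpose_apply,
            Finset.sum_mul]
          exact Finset.sum_congr rfl fun j _ => by ring
  -- conjugate basics
  have fconj_lb : ∀ i z (x : Fin k → ℝ),
      ((∑ j, x j * z j - φ i x : ℝ) : EReal) ≤ fconj i z := by
    intro i z x
    rw [hfconj]
    exact le_iSup (fun x : Fin k → ℝ => ((∑ j, x j * z j - φ i x : ℝ) : EReal)) x
  have fconj_le : ∀ i z (p : ℝ), (∀ x, ∑ j, x j * z j - φ i x ≤ p) →
      fconj i z ≤ (p : EReal) := by
    intro i z p h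
    rw [hfconj]
    exact iSup_le fun x => EReal.coe_le_coe_iff.2 (h x)
  have fconj_ne_bot : ∀ i z, ((-φ i 0 : ℝ) : EReal) ≤ fconj i z := by
    intro i z
    have := fconj_lb i z 0
    simpa using this
  -- (1/γ)-smoothness gives the gradient inequality
  have gradIneq : ∀ i (a x : Fin k → ℝ),
      ∑ j, φgrad i a j * (x j - a j) ≤ φ i x - φ i a := by
    intro i a x
    set v : Fin k → ℝ := fun j => x j - a j with hv
    have hSv : ∑ j, φgrad i a j * (x j - a j) = ∑ j, φgrad i a j * v j := rfl
    rw [hSv]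
    refine aux_lim (c := NP v ^ 2 / (2 * γ)) (by positivity) ?_
    intro t ht ht1
    -- convexity between a and x
    have hconv := (hφconv i).2 (Set.mem_univ a) (Set.mem_univ x)
      (by linarith : (0:ℝ) ≤ 1 - t) (le_of_lt ht) (by ring)
    have hpt1 : (1 - t) • a + t • x = a + t • v := by
      funext j; simp only [Pi.add_apply, Pi.sub_apply, Pi.smul_apply, smul_eq_mul]; ring
    rw [hpt1] at hconv
    -- midpoint convexity
    have hmid := (hφconv i).2 (Set.mem_univ (a + t • v)) (Set.mem_univ (a - t • v))
      (by norm_num : (0:ℝ) ≤ (1:ℝ)/2) (by norm_num : (0:ℝ) ≤ (1:ℝ)/2) (by norm_num)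
    have hpt2 : ((1:ℝ)/2) • (a + t • v) + ((1:ℝ)/2) • (a - t • v) = a := by
      funext j; simp only [Pi.add_apply, Pi.sub_apply, Pi.smul_apply, Pi.neg_apply, smul_eq_mul]; ring
    rw [hpt2] at hmid
    -- smoothness at a - t•v
    have hsm := hφsmooth i (a - t • v) a
    have e1 : ∑ j, φgrad i a j * ((a - t • v) j - a j) = -(t * ∑ j, φgrad i a j * v j) := by
      rw [Finset.mul_sum, ← Finset.sum_neg_distrib]
      refine Finset.sum_congr rfl fun j _ => ?_
      simp only [Pi.add_apply, Pi.sub_apply, Pi.smul_apply, Pi.neg_apply, smul_eq_mul]; ring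
    have e2 : NP ((a - t • v) - a) = t * NP v := by
      have : (a - t • v) - a = (-t) • v := by
        funext j; simp only [Pi.add_apply, Pi.sub_apply, Pi.smul_apply, Pi.neg_apply, smul_eq_mul]; ring
      rw [this, hNP_smul, abs_neg, abs_of_pos ht]
    rw [e1, e2] at hsm
    -- combine
    simp only [smul_eq_mul] at hconv hmid
    set S := ∑ j, φgrad i a j * v j with hS
    have hsq : (1 / (2*γ)) * (t * NP v)^2 = NP v ^ 2 / (2 * γ) * t^2 := by
      field_simp
    rw [hsq] at hsm
    have hup : φ i a + t * S - NP v ^ 2 / (2 * γ) * t^2 ≤ φ i (a + t • v) := by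
      linarith [hmid, hsm]
    have hfin : t * S ≤ t * ((φ i x - φ i a) + NP v ^ 2 / (2 * γ) * t) := by
      nlinarith [hconv, hup]
    have := le_of_mul_le_mul_left hfin ht
    linarith
  -- Fenchel–Young upper bound at a gradient point
  have ub_grad : ∀ i (a x : Fin k → ℝ),
      ∑ j, x j * φgrad i a j - φ i x ≤ ∑ j, φgrad i a j * a j - φ i a := by
    intro i a x
    have h := gradIneq i a x
    have e1 : ∑ j, φgrad i a j * (x j - a j)
        = ∑ j, x j * φgrad i a j - ∑ j, φgrad i a j * a j := by
      rw [← Finset.sum_sub_distrib]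
      exact Finset.sum_congr rfl fun j _ => by ring
    rw [e1] at h
    linarith
  -- strong convexity of the conjugate (key estimate)
  have conjSC : ∀ i (z₁ z₂ : Fin k → ℝ) (p₁ p₂ s : ℝ), 0 ≤ s → s ≤ 1 →
      (∀ x, ∑ j, x j * z₁ j - φ i x ≤ p₁) →
      (∀ x, ∑ j, x j * z₂ j - φ i x ≤ p₂) →
      ∀ x, ∑ j, x j * ((1-s) • z₁ + s • z₂) j - φ i x
        ≤ (1-s)*p₁ + s*p₂ - γ*s*(1-s)/2 * ND (z₁ - z₂)^2 := by
    intro i z₁ z₂ p₁ p₂ s hs0 hs1 h₁ h₂ x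
    set q : Fin k → ℝ := z₁ - z₂ with hq
    set r : ℝ := ND q with hr
    have hrnn : 0 ≤ r := ndnn q
    have hcnn : 0 ≤ s*(1-s)*γ*r :=
      mul_nonneg (mul_nonneg (mul_nonneg hs0 (by linarith)) (le_of_lt hγ)) hrnn
    refine aux_lim (c := s*(1-s)*γ*r) hcnn ?_
    intro ε hε hε1
    obtain ⟨xh, hxh1, hxh2⟩ := approxD q ε hε
    set δ : Fin k → ℝ := (γ * r) • xh with hδ
    have hNPδ : NP δ = γ * r := by
      rw [hδ, hNP_smul, abs_of_nonneg (by positivity), hxh1, mul_one]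
    -- the two conjugate bounds
    have h1 := h₁ (x + s • δ)
    have h2 := h₂ (x - (1-s) • δ)
    -- smoothness at x
    have sm1 := hφsmooth i (x + s • δ) x
    have sm2 := hφsmooth i (x - (1-s) • δ) x
    -- sum expansions
    have e1 : ∑ j, (x + s • δ) j * z₁ j
        = ∑ j, x j * z₁ j + s * ∑ j, δ j * z₁ j := by
      rw [Finset.mul_sum, ← Finset.sum_add_distrib]
      exact Finset.sum_congr rfl fun j _ => by
        simp only [Pi.add_apply, Pi.sub_apply, Pi.smul_apply, Pi.neg_apply, smul_eq_mul]; ring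
    have e2 : ∑ j, (x - (1-s) • δ) j * z₂ j
        = ∑ j, x j * z₂ j - (1-s) * ∑ j, δ j * z₂ j := by
      rw [Finset.mul_sum, ← Finset.sum_sub_distrib]
      exact Finset.sum_congr rfl fun j _ => by
        simp only [Pi.add_apply, Pi.sub_apply, Pi.smul_apply, Pi.neg_apply, smul_eq_mul]; ring
    have e3 : ∑ j, φgrad i x j * ((x + s • δ) j - x j) = s * ∑ j, φgrad i x j * δ j := by
      rw [Finset.mul_sum]
      exact Finset.sum_congr rfl fun j _ => by
        simp only [Pi.add_apply, Pi.sub_apply, Pi.smul_apply, Pi.neg_apply, smul_eq_mul]; ring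
    have e4 : ∑ j, φgrad i x j * ((x - (1-s) • δ) j - x j)
        = -((1-s) * ∑ j, φgrad i x j * δ j) := by
      rw [Finset.mul_sum, ← Finset.sum_neg_distrib]
      exact Finset.sum_congr rfl fun j _ => by
        simp only [Pi.add_apply, Pi.sub_apply, Pi.smul_apply, Pi.neg_apply, smul_eq_mul]; ring
    have e5 : NP ((x + s • δ) - x) = s * (γ * r) := by
      have hx5 : (x + s • δ) - x = s • δ := by
        funext j; simp [Pi.smul_apply, smul_eq_mul]
      rw [hx5, hNP_smul, abs_of_nonneg hs0, hNPδ]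
    have e6 : NP ((x - (1-s) • δ) - x) = (1-s) * (γ * r) := by
      have hx6 : (x - (1-s) • δ) - x = (-(1-s)) • δ := by
        funext j; simp only [Pi.add_apply, Pi.sub_apply, Pi.smul_apply, Pi.neg_apply, smul_eq_mul]; ring
      rw [hx6, hNP_smul, abs_neg, abs_of_nonneg (by linarith), hNPδ]
    have e7 : ∑ j, δ j * z₁ j - ∑ j, δ j * z₂ j = γ * r * ∑ j, q j * xh j := by
      rw [← Finset.sum_sub_distrib, Finset.mul_sum]
      exact Finset.sum_congr rfl fun j _ => by
        simp only [hδ, hq, Pi.add_apply, Pi.sub_apply, Pi.smul_apply, smul_eq_mul]; ring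
    have e8 : ∑ j, x j * ((1-s) • z₁ + s • z₂) j
        = (1-s) * ∑ j, x j * z₁ j + s * ∑ j, x j * z₂ j := by
      rw [Finset.mul_sum, Finset.mul_sum, ← Finset.sum_add_distrib]
      exact Finset.sum_congr rfl fun j _ => by
        simp only [Pi.add_apply, Pi.sub_apply, Pi.smul_apply, Pi.neg_apply, smul_eq_mul]; ring
    rw [e1] at h1
    rw [e2] at h2
    rw [e3, e5] at sm1
    rw [e4, e6] at sm2
    rw [e8]
    -- product bound for the dual-norm term
    have e9 : γ * r * (r - ε) ≤ ∑ j, δ j * z₁ j - ∑ j, δ j * z₂ j := by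
      rw [e7]
      exact mul_le_mul_of_nonneg_left (le_of_lt hxh2) (by positivity)
    have m1 : (1-s) * (∑ j, x j * z₁ j + s * ∑ j, δ j * z₁ j - φ i (x + s • δ))
        ≤ (1-s) * p₁ := mul_le_mul_of_nonneg_left h1 (by linarith)
    have m2 : s * (∑ j, x j * z₂ j - (1-s) * ∑ j, δ j * z₂ j - φ i (x - (1-s) • δ))
        ≤ s * p₂ := mul_le_mul_of_nonneg_left h2 hs0
    have m3 : (1-s) * (φ i (x + s • δ))
        ≤ (1-s) * (φ i x + s * ∑ j, φgrad i x j * δ j + (1 / (2*γ)) * (s * (γ*r))^2) :=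
      mul_le_mul_of_nonneg_left sm1 (by linarith)
    have m4 : s * (φ i (x - (1-s) • δ))
        ≤ s * (φ i x + -((1-s) * ∑ j, φgrad i x j * δ j) + (1 / (2*γ)) * ((1-s) * (γ*r))^2) :=
      mul_le_mul_of_nonneg_left sm2 hs0
    have m5 : s*(1-s) * (γ * r * (r - ε))
        ≤ s*(1-s) * (∑ j, δ j * z₁ j - ∑ j, δ j * z₂ j) :=
      mul_le_mul_of_nonneg_left e9 (mul_nonneg hs0 (by linarith))
    have hγ' : (1 / (2*γ)) * (s * (γ*r))^2 = s^2 * γ * r^2 / 2 := by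
      field_simp
    have hγ'' : (1 / (2*γ)) * ((1-s) * (γ*r))^2 = (1-s)^2 * γ * r^2 / 2 := by
      field_simp
    rw [hγ'] at m3
    rw [hγ''] at m4
    linarith [m1, m2, m3, m4, m5]

  -- lower bound for g via strong convexity at the maximizer
  have gLower : ∀ (v w' : Fin d → ℝ),
      g (Ggrad v) + (∑ j, w' j * v j - ∑ j, Ggrad v j * v j)
        + (1/2) * NP' (w' - Ggrad v)^2 ≤ g w' := by
    intro v w'
    refine aux_lim (c := (1/2) * NP' (w' - Ggrad v)^2) (by positivity) ?_
    intro t ht ht1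
    have h1 := hGgrad v (t • w' + (1-t) • Ggrad v)
    have h2 := hgsc w' (Ggrad v) t (le_of_lt ht) ht1
    have e1 : ∑ j, (t • w' + (1-t) • Ggrad v) j * v j
        = t * ∑ j, w' j * v j + (1-t) * ∑ j, Ggrad v j * v j := by
      rw [Finset.mul_sum, Finset.mul_sum, ← Finset.sum_add_distrib]
      exact Finset.sum_congr rfl fun j _ => by
        simp only [Pi.add_apply, Pi.smul_apply, smul_eq_mul]; ring
    rw [e1] at h1
    have hfin : t * (g (Ggrad v) + (∑ j, w' j * v j - ∑ j, Ggrad v j * v j)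
          + (1/2) * NP' (w' - Ggrad v)^2)
        ≤ t * (g w' + ((1/2) * NP' (w' - Ggrad v)^2) * t) := by
      nlinarith [h1, h2]
    have := le_of_mul_le_mul_left hfin ht
    linarith
  -- definitions of the real-valued dual objects
  set Gq : (Fin d → ℝ) → ℝ :=
    fun v => (∑ j, Ggrad v j * v j) - g (Ggrad v) with hGq
  have hGqv : ∀ v, Gq v = (∑ j, Ggrad v j * v j) - g (Ggrad v) := fun v => rfl
  set fR : Fin n → (Fin k → ℝ) → ℝ := fun i z => (fconj i z).toReal with hfR
  have hfRv : ∀ i z, fR i z = (fconj i z).toReal := fun i z => rfl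
  set Dr : (Fin n → Fin k → ℝ) → ℝ :=
    fun β => (1 / (n:ℝ)) * ∑ i, (-(fR i (-(β i)))) - lam * Gq (vmap β) with hDr
  have hDrv : ∀ β, Dr β
      = (1 / (n:ℝ)) * ∑ i, (-(fR i (-(β i)))) - lam * Gq (vmap β) := fun β => rfl
  set gcol : (Fin n → Fin k → ℝ) → Fin n → ℝ :=
    fun β i => fR i (-(β i)) + φ i ((X i).transpose.mulVec (Ggrad (vmap β)))
      + ∑ j, ((X i).transpose.mulVec (Ggrad (vmap β))) j * β i j with hgcol
  have hgcolv : ∀ β i, gcol β i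
      = fR i (-(β i)) + φ i ((X i).transpose.mulVec (Ggrad (vmap β)))
      + ∑ j, ((X i).transpose.mulVec (Ggrad (vmap β))) j * β i j := fun β i => rfl
  -- smoothness of the conjugate of g
  have Gsmooth : ∀ v δ, Gq (v + δ) ≤ Gq v + ∑ j, Ggrad v j * δ j + (1/2) * ND' δ ^ 2 := by
    intro v δ
    have hlow := gLower v (Ggrad (v + δ))
    have e1 : ∑ j, Ggrad (v+δ) j * (v + δ) j
        = ∑ j, Ggrad (v+δ) j * v j + ∑ j, Ggrad (v+δ) j * δ j := by
      rw [← Finset.sum_add_distrib]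
      exact Finset.sum_congr rfl fun j _ => by simp only [Pi.add_apply]; ring
    have e2 : ∑ j, Ggrad (v+δ) j * δ j
        = ∑ j, Ggrad v j * δ j + ∑ j, (Ggrad (v+δ) - Ggrad v) j * δ j := by
      rw [← Finset.sum_add_distrib]
      exact Finset.sum_congr rfl fun j _ => by simp only [Pi.sub_apply]; ring
    have hpair : ∑ j, (Ggrad (v+δ) - Ggrad v) j * δ j
        ≤ ND' δ * NP' (Ggrad (v+δ) - Ggrad v) := by
      have hcomm : ∑ j, (Ggrad (v+δ) - Ggrad v) j * δ j
          = ∑ j, δ j * (Ggrad (v+δ) - Ggrad v) j :=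
        Finset.sum_congr rfl fun j _ => by ring
      rw [hcomm]; exact pairP' δ (Ggrad (v+δ) - Ggrad v)
    have hsq : ND' δ * NP' (Ggrad (v+δ) - Ggrad v)
          - (1/2) * NP' (Ggrad (v+δ) - Ggrad v)^2 ≤ (1/2) * ND' δ^2 := by
      nlinarith [sq_nonneg (ND' δ - NP' (Ggrad (v+δ) - Ggrad v))]
    rw [hGqv, hGqv, e1]
    linarith [hlow, hpair, hsq, e2]
  -- effect of a coordinate update on vmap
  have vupdate : ∀ (β : Fin n → Fin k → ℝ) (i : Fin n) (Δ : Fin k → ℝ),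
      vmap (Function.update β i (β i + Δ)) = vmap β + (1 / (lam * n)) • (X i).mulVec Δ := by
    intro β i Δ
    rw [hvmap, hvmap]
    have hterm : ∀ j : Fin n, (X j).mulVec (Function.update β i (β i + Δ) j)
        = (X j).mulVec (β j) + (if j = i then (X i).mulVec Δ else 0) := by
      intro j
      by_cases hji : j = i
      · subst hji; simp [Function.update_self, Matrix.mulVec_add]
      · simp [Function.update_of_ne hji, hji]
    rw [Finset.sum_congr rfl (fun j _ => hterm j), Finset.sum_add_distrib]
    rw [Finset.sum_ite_eq' Finset.univ i (fun _ => (X i).mulVec Δ)]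
    simp [smul_add]
  -- pairing identity : lam * wᵀ v(β) = (1/n) ∑ᵢ aᵢᵀ βᵢ
  have wv_eq : ∀ (w : Fin d → ℝ) (β : Fin n → Fin k → ℝ),
      lam * ∑ j, w j * vmap β j
        = (1 / (n:ℝ)) * ∑ i, ∑ j, ((X i).transpose.mulVec w) j * β i j := by
    intro w β
    rw [hvmap]
    have e2 : ∑ j, w j * ((1 / (lam * (n:ℝ))) • ∑ i, (X i).mulVec (β i)) j
        = (1/(lam*(n:ℝ))) * ∑ i, ∑ j, w j * ((X i).mulVec (β i)) j := by
      rw [Finset.sum_comm, Finset.mul_sum]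
      refine Finset.sum_congr rfl fun j _ => ?_
      simp only [Pi.smul_apply, Finset.sum_apply, smul_eq_mul, Finset.mul_sum]
      refine Finset.sum_congr rfl fun i _ => by ring
    rw [e2, Finset.sum_congr rfl (fun i (_ : i ∈ Finset.univ) => dotT (X i) w (β i))]
    have : lam * ((1/(lam*(n:ℝ))) * ∑ i, ∑ l, ((X i).transpose.mulVec w) l * β i l)
        = (1 / (n:ℝ)) * ∑ i, ∑ l, ((X i).transpose.mulVec w) l * β i l := by
      field_simp
    rw [this]
  -- finiteness transfer for the conjugates
  have goodOf : ∀ (i : Fin n) (z : Fin k → ℝ) (b : ℝ), fconj i z ≤ (b : EReal) →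
      fconj i z = ((fR i z : ℝ) : EReal) := by
    intro i z b hub
    have hlb := fconj_ne_bot i z
    have hnt : fconj i z ≠ ⊤ := ne_top_of_le_ne_top (EReal.coe_ne_top b) hub
    have hnb : fconj i z ≠ ⊥ := by
      intro h
      rw [h, le_bot_iff] at hlb
      exact EReal.coe_ne_bot _ hlb
    rw [hfRv]
    exact (EReal.coe_toReal hnt hnb).symm
  have fR_ub : ∀ (i : Fin n) (z : Fin k → ℝ), fconj i z = ((fR i z : ℝ) : EReal) →
      ∀ x, ∑ j, x j * z j - φ i x ≤ fR i z := by
    intro i z hg x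
    have h := fconj_lb i z x
    rw [hg] at h
    exact EReal.coe_le_coe_iff.1 h
  have fconj0_le : ∀ i, fconj i (0 : Fin k → ℝ) ≤ ((0:ℝ) : EReal) := by
    intro i
    refine fconj_le i 0 0 (fun x => ?_)
    have : ∑ j, x j * (0 : Fin k → ℝ) j = 0 := by simp
    rw [this]
    linarith [hφnonneg i x]
  have good0 : ∀ i : Fin n, fconj i (-((0 : Fin n → Fin k → ℝ) i))
      = ((fR i (-((0 : Fin n → Fin k → ℝ) i)) : ℝ) : EReal) := by
    intro i
    have h0 : -((0 : Fin n → Fin k → ℝ) i) = (0 : Fin k → ℝ) := by simp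
    rw [h0]
    exact goodOf i 0 0 (fconj0_le i)
  -- D agrees with Dr on finite points
  have Dcoe : ∀ β, (∀ i, fconj i (-(β i)) = ((fR i (-(β i)) : ℝ) : EReal)) →
      D β = ((Dr β : ℝ) : EReal) := by
    intro β hG
    rw [hD]
    have e1 : ∀ i : Fin n, -(fconj i (-(β i))) = (((-(fR i (-(β i)))) : ℝ) : EReal) := by
      intro i; rw [hG i, EReal.coe_neg]
    rw [Finset.sum_congr rfl (fun i (_ : i ∈ Finset.univ) => e1 i), ← aux_coe_sum,
      ← EReal.coe_mul, ← EReal.coe_sub]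

  -- step size facts
  set s0 : ℝ := lam * γ * n / (R^2 + lam * γ * n) with hs0def
  have hden : (0:ℝ) < R^2 + lam * γ * n := by positivity
  have hdenne : (R^2 + lam * γ * (n:ℝ)) ≠ 0 := ne_of_gt hden
  have hlamne : lam ≠ 0 := ne_of_gt hlam
  have hnne : (n:ℝ) ≠ 0 := ne_of_gt hnR
  have hγne : γ ≠ 0 := ne_of_gt hγ
  have hs0pos : 0 < s0 := by rw [hs0def]; positivity
  have hs0le1 : s0 ≤ 1 := by
    rw [hs0def, div_le_one hden]
    nlinarith [sq_nonneg R]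
  have hs0bal : γ * (1 - s0) / 2 = s0 * R^2 / (2 * lam * n) := by
    rw [hs0def]
    field_simp
    ring
  -- THE KEY PER-STEP INEQUALITY
  have key : ∀ (ω : ℕ → Fin n) (t : ℕ),
      (∀ i, fconj i (-(αseq ω t i)) = ((fR i (-(αseq ω t i)) : ℝ) : EReal)) →
      (∀ i, fconj i (-(αseq ω (t+1) i)) = ((fR i (-(αseq ω (t+1) i)) : ℝ) : EReal)) ∧
      Dr (αseq ω t) + (s0 / n) * gcol (αseq ω t) (ω t) ≤ Dr (αseq ω (t+1)) := by
    intro ω t hGood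
    obtain ⟨Δ, hΔeq, hΔmax⟩ := hupdate ω t
    set α := αseq ω t with hα
    set i := ω t with hi
    set v := vmap α with hv
    set w := Ggrad v with hw
    set a : Fin k → ℝ := (X i).transpose.mulVec w with ha
    set u : Fin k → ℝ := -(φgrad i a) with hu
    set p₁ : ℝ := fR i (-(α i)) with hp₁
    set p₂ : ℝ := ∑ j, φgrad i a j * a j - φ i a with hp₂
    set Δc : Fin k → ℝ := s0 • (u - α i) with hΔc
    have hUB1 : ∀ x, ∑ j, x j * (-(α i)) j - φ i x ≤ p₁ := fR_ub i _ (hGood i)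
    have hUB2 : ∀ x, ∑ j, x j * (φgrad i a) j - φ i x ≤ p₂ := fun x => ub_grad i a x
    have hSC := conjSC i (-(α i)) (φgrad i a) p₁ p₂ s0 (le_of_lt hs0pos) hs0le1 hUB1 hUB2
    have hcombo : -(α i + Δc) = (1-s0) • (-(α i)) + s0 • (φgrad i a) := by
      funext j
      simp only [hΔc, hu, Pi.add_apply, Pi.sub_apply, Pi.neg_apply, Pi.smul_apply,
        smul_eq_mul]
      ring
    have hqeq : (-(α i)) - (φgrad i a) = u - α i := by
      funext j
      simp only [hu, Pi.sub_apply, Pi.neg_apply]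
      ring
    set RHS2 : ℝ := (1-s0)*p₁ + s0*p₂ - γ*s0*(1-s0)/2 * ND (u - α i)^2 with hRHS2
    have hfc_cand : fconj i (-(α i + Δc)) ≤ (RHS2 : EReal) := by
      rw [hcombo]
      refine fconj_le i _ RHS2 (fun x => ?_)
      have hx := hSC x
      rw [hqeq] at hx
      rw [hRHS2]
      exact hx
    have hreal : ∀ Δ' : Fin k → ℝ, obj ω t Δ' = -(fconj i (-(α i + Δ')))
        - ((∑ j, w j * (X i).mulVec Δ' j
          + (1 / (2 * lam * n)) * ND' ((X i).mulVec Δ') ^ 2 : ℝ) : EReal) := by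
      intro Δ'
      rw [hobj, ← hα, ← hi, ← hv, ← hw]
    set realΔ : ℝ := ∑ j, w j * (X i).mulVec Δ j
        + (1 / (2 * lam * n)) * ND' ((X i).mulVec Δ) ^ 2 with hrealΔ
    set realc : ℝ := ∑ j, w j * (X i).mulVec Δc j
        + (1 / (2 * lam * n)) * ND' ((X i).mulVec Δc) ^ 2 with hrealc
    set c₀ : ℝ := -RHS2 - realc with hc₀
    have hobjc : (c₀ : EReal) ≤ obj ω t Δc := by
      rw [hreal Δc, ← hrealc, hc₀, EReal.coe_sub]
      have h1 : ((-RHS2 : ℝ) : EReal) ≤ -(fconj i (-(α i + Δc))) := by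
        rw [EReal.coe_neg]
        exact EReal.neg_le_neg_iff.2 hfc_cand
      exact EReal.sub_le_sub h1 (le_refl _)
    have hobjΔ : (c₀ : EReal) ≤ obj ω t Δ := le_trans hobjc (hΔmax Δc)
    rw [hreal Δ, ← hrealΔ] at hobjΔ
    have hle2 : ((c₀ + realΔ : ℝ) : EReal) ≤ -(fconj i (-(α i + Δ))) := by
      rw [EReal.coe_add]
      exact (EReal.le_sub_iff_add_le (Or.inl (EReal.coe_ne_bot _))
        (Or.inl (EReal.coe_ne_top _))).1 hobjΔ
    have hub_new : fconj i (-(α i + Δ)) ≤ ((-(c₀ + realΔ) : ℝ) : EReal) := by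
      rw [EReal.coe_neg]
      exact EReal.le_neg_of_le_neg hle2
    have hnew_eq : fconj i (-(α i + Δ)) = ((fR i (-(α i + Δ)) : ℝ) : EReal) :=
      goodOf i _ _ hub_new
    have hreal_new : c₀ ≤ -(fR i (-(α i + Δ))) - realΔ := by
      rw [hnew_eq, ← EReal.coe_neg] at hle2
      have := EReal.coe_le_coe_iff.1 hle2
      linarith
    have hGoodNew : ∀ i', fconj i' (-(αseq ω (t+1) i'))
        = ((fR i' (-(αseq ω (t+1) i')) : ℝ) : EReal) := by
      intro i'
      rw [hΔeq]
      by_cases hii : i' = i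
      · subst hii
        rw [Function.update_self]
        exact hnew_eq
      · rw [Function.update_of_ne hii]
        exact hGood i'
    -- candidate real computations
    have hndc : ND' ((X i).mulVec Δc) = s0 * ND' ((X i).mulVec (u - α i)) := by
      rw [hΔc, Matrix.mulVec_smul]
      exact nd'smul hs0pos _
    have hnd2 : ND' ((X i).mulVec Δc)^2 ≤ s0^2 * R^2 * ND (u - α i)^2 := by
      rw [hndc, mul_pow]
      have h1 : ND' ((X i).mulVec (u - α i))^2 ≤ (R * ND (u - α i))^2 :=
        pow_le_pow_left₀ (nd'nn _) (hXR i _) 2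
      calc s0^2 * ND' ((X i).mulVec (u - α i))^2
          ≤ s0^2 * (R * ND (u - α i))^2 := mul_le_mul_of_nonneg_left h1 (sq_nonneg s0)
        _ = s0^2 * R^2 * ND (u - α i)^2 := by ring
    have hdotc : ∑ j, w j * (X i).mulVec Δc j
        = s0 * (∑ j, a j * u j - ∑ j, a j * α i j) := by
      rw [dotT, ← ha]
      rw [← Finset.sum_sub_distrib, Finset.mul_sum]
      exact Finset.sum_congr rfl fun j _ => by
        simp only [hΔc, Pi.smul_apply, Pi.sub_apply, smul_eq_mul]; ring
    have hq2n : (0:ℝ) ≤ 1/(2*lam*(n:ℝ)) := by positivity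
    have hrealc_le : realc ≤ s0 * ∑ j, a j * u j - s0 * ∑ j, a j * α i j
        + (1/(2*lam*(n:ℝ))) * (s0^2 * R^2 * ND (u - α i)^2) := by
      rw [hrealc, hdotc]
      have h2 := mul_le_mul_of_nonneg_left hnd2 hq2n
      linarith
    have hau : ∑ j, a j * u j = -∑ j, φgrad i a j * a j := by
      rw [← Finset.sum_neg_distrib]
      exact Finset.sum_congr rfl fun j _ => by
        simp only [hu, Pi.neg_apply]; ring
    have hgcol_i : gcol α i = p₁ + φ i a + ∑ j, a j * α i j := by
      rw [hgcolv, ← hv, ← hw, ← ha, ← hp₁]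
    have hbal2 : γ*s0*(1-s0)/2 * ND (u - α i)^2
        = (1/(2*lam*(n:ℝ))) * (s0^2 * R^2 * ND (u - α i)^2) := by
      have h3 : γ*s0*(1-s0)/2 = (1/(2*lam*(n:ℝ))) * (s0^2*R^2) := by
        calc γ*s0*(1-s0)/2 = s0 * (γ*(1-s0)/2) := by ring
          _ = s0 * (s0 * R^2 / (2*lam*n)) := by rw [hs0bal]
          _ = (1/(2*lam*(n:ℝ))) * (s0^2*R^2) := by ring
      calc γ*s0*(1-s0)/2 * ND (u - α i)^2
          = (γ*s0*(1-s0)/2) * ND (u - α i)^2 := by ring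
        _ = ((1/(2*lam*(n:ℝ))) * (s0^2*R^2)) * ND (u - α i)^2 := by rw [h3]
        _ = (1/(2*lam*(n:ℝ))) * (s0^2 * R^2 * ND (u - α i)^2) := by ring
    have hc₀p₁ : s0 * gcol α i ≤ c₀ + p₁ := by
      rw [hgcol_i, hc₀, hRHS2, hp₂]
      have h5 : s0 * (∑ j, a j * u j) = - (s0 * ∑ j, φgrad i a j * a j) := by
        rw [hau]; ring
      linarith [hrealc_le, hbal2, h5]
    -- effect on the g-conjugate part
    have hvnew : vmap (αseq ω (t+1)) = v + (1/(lam*(n:ℝ))) • (X i).mulVec Δ := by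
      rw [hΔeq, vupdate, ← hv]
    have hGnew : Gq (vmap (αseq ω (t+1)))
        ≤ Gq v + (1/(lam*(n:ℝ))) * ∑ j, w j * (X i).mulVec Δ j
          + (1/2) * ((1/(lam*(n:ℝ))) * ND' ((X i).mulVec Δ))^2 := by
      rw [hvnew]
      have h1 := Gsmooth v ((1/(lam*(n:ℝ))) • (X i).mulVec Δ)
      rw [← hw] at h1
      have e1 : ∑ j, w j * ((1/(lam*(n:ℝ))) • (X i).mulVec Δ) j
          = (1/(lam*(n:ℝ))) * ∑ j, w j * (X i).mulVec Δ j := by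
        rw [Finset.mul_sum]
        exact Finset.sum_congr rfl fun j _ => by
          simp only [Pi.smul_apply, smul_eq_mul]; ring
      have e2 : ND' ((1/(lam*(n:ℝ))) • (X i).mulVec Δ)
          = (1/(lam*(n:ℝ))) * ND' ((X i).mulVec Δ) :=
        nd'smul (by positivity) _
      rw [e1, e2] at h1
      exact h1
    have hGnew2 : lam * Gq (vmap (αseq ω (t+1)))
        ≤ lam * Gq v + (1/(n:ℝ)) * ∑ j, w j * (X i).mulVec Δ j
          + (1/(2*lam*(n:ℝ)^2)) * ND' ((X i).mulVec Δ)^2 := by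
      have h6 := mul_le_mul_of_nonneg_left hGnew (le_of_lt hlam)
      have e3 : lam * (Gq v + (1/(lam*(n:ℝ))) * ∑ j, w j * (X i).mulVec Δ j
          + (1/2) * ((1/(lam*(n:ℝ))) * ND' ((X i).mulVec Δ))^2)
          = lam * Gq v + (1/(n:ℝ)) * ∑ j, w j * (X i).mulVec Δ j
          + (1/(2*lam*(n:ℝ)^2)) * ND' ((X i).mulVec Δ)^2 := by
        field_simp
      rw [e3] at h6
      exact h6
    -- sum over coordinates
    have hsumupd : ∑ i', -(fR i' (-(αseq ω (t+1) i')))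
        = (∑ i', -(fR i' (-(α i')))) + (-(fR i (-(α i + Δ))) + p₁) := by
      have hterm : ∀ i' : Fin n, -(fR i' (-(Function.update α i (α i + Δ) i')))
          = -(fR i' (-(α i'))) + (if i' = i then -(fR i (-(α i + Δ))) + p₁ else 0) := by
        intro i'
        by_cases hii : i' = i
        · subst hii
          rw [Function.update_self, if_pos rfl, hp₁]
          ring
        · rw [Function.update_of_ne hii, if_neg hii, add_zero]
      rw [hΔeq, Finset.sum_congr rfl (fun i' (_ : i' ∈ Finset.univ) => hterm i'),
        Finset.sum_add_distrib, Finset.sum_ite_eq' Finset.univ i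
          (fun _ => -(fR i (-(α i + Δ))) + p₁)]
      simp
    refine ⟨hGoodNew, ?_⟩
    rw [hDrv (αseq ω (t+1)), hDrv α, hsumupd, ← hv]
    have hn0 : (0:ℝ) ≤ 1/(n:ℝ) := by positivity
    have m1 := mul_le_mul_of_nonneg_left hc₀p₁ hn0
    have m2 := mul_le_mul_of_nonneg_left hreal_new hn0
    rw [hrealΔ] at m2
    have e9 : (1/(n:ℝ)) * (-(fR i (-(α i + Δ)))
          - (∑ j, w j * (X i).mulVec Δ j
            + 1/(2*lam*(n:ℝ)) * ND' ((X i).mulVec Δ)^2))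
        = (1/(n:ℝ)) * (-(fR i (-(α i + Δ))))
          - (1/(n:ℝ)) * ∑ j, w j * (X i).mulVec Δ j
          - 1/(2*lam*(n:ℝ)^2) * ND' ((X i).mulVec Δ)^2 := by
      field_simp
      ring
    rw [e9] at m2
    have hmuldist : (1/(n:ℝ)) * ((∑ i', -(fR i' (-(α i')))) + (-(fR i (-(α i + Δ))) + p₁))
        = (1/(n:ℝ)) * (∑ i', -(fR i' (-(α i'))))
          + (1/(n:ℝ)) * (-(fR i (-(α i + Δ))) + p₁) := by ring
    rw [hmuldist]
    ring_nf at m1 m2 hGnew2 ⊢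
    linarith [m1, m2, hGnew2]

  -- all iterates have finite conjugate values
  have good_traj : ∀ (ω : ℕ → Fin n) (t : ℕ),
      ∀ i, fconj i (-(αseq ω t i)) = ((fR i (-(αseq ω t i)) : ℝ) : EReal) := by
    intro ω t
    induction t with
    | zero => rw [hinit]; exact good0
    | succ t ih => exact (key ω t ih).1
  -- duality gap formula
  have gap_eq : ∀ β, (∀ i, fconj i (-(β i)) = ((fR i (-(β i)) : ℝ) : EReal)) →
      P (Ggrad (vmap β)) - Dr β = (1/(n:ℝ)) * ∑ i, gcol β i := by
    intro β hG
    rw [hP, hDrv]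
    have hwv := wv_eq (Ggrad (vmap β)) β
    have hgG : lam * g (Ggrad (vmap β)) + lam * Gq (vmap β)
        = lam * ∑ j, Ggrad (vmap β) j * vmap β j := by
      rw [hGqv]; ring
    have hsplit : ∑ i, gcol β i
        = ∑ i, fR i (-(β i)) + ∑ i, φ i ((X i).transpose.mulVec (Ggrad (vmap β)))
          + ∑ i, ∑ j, ((X i).transpose.mulVec (Ggrad (vmap β))) j * β i j := by
      calc ∑ i, gcol β i
          = ∑ i, (fR i (-(β i)) + φ i ((X i).transpose.mulVec (Ggrad (vmap β)))
            + ∑ j, ((X i).transpose.mulVec (Ggrad (vmap β))) j * β i j) :=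
          Finset.sum_congr rfl fun i _ => hgcolv β i
        _ = _ := by rw [Finset.sum_add_distrib, Finset.sum_add_distrib]
    have hneg : ∑ i, -(fR i (-(β i))) = -∑ i, fR i (-(β i)) := Finset.sum_neg_distrib _
    rw [hneg, hsplit]
    ring_nf
    ring_nf at hwv hgG
    linarith [hwv, hgG]
  -- the per-coordinate gap terms are nonnegative
  have gcol_nonneg : ∀ β, (∀ i, fconj i (-(β i)) = ((fR i (-(β i)) : ℝ) : EReal)) →
      ∀ i, 0 ≤ gcol β i := by
    intro β hG i
    have h := fR_ub i _ (hG i) ((X i).transpose.mulVec (Ggrad (vmap β)))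
    have e1 : ∑ j, ((X i).transpose.mulVec (Ggrad (vmap β))) j * (-(β i)) j
        = -∑ j, ((X i).transpose.mulVec (Ggrad (vmap β))) j * β i j := by
      rw [← Finset.sum_neg_distrib]
      exact Finset.sum_congr rfl fun j _ => by simp only [Pi.neg_apply]; ring
    rw [e1] at h
    rw [hgcolv]
    linarith [hφnonneg i ((X i).transpose.mulVec (Ggrad (vmap β)))]
  -- weak duality
  have weak_dual : ∀ (w' : Fin d → ℝ) β,
      (∀ i, fconj i (-(β i)) = ((fR i (-(β i)) : ℝ) : EReal)) → Dr β ≤ P w' := by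
    intro w' β hG
    rw [hP, hDrv]
    have hA := hGgrad (vmap β) w'
    have hwv := wv_eq w' β
    have hBi : ∀ i : Fin n, -(∑ j, ((X i).transpose.mulVec w') j * β i j)
        - φ i ((X i).transpose.mulVec w') ≤ fR i (-(β i)) := by
      intro i
      have h := fR_ub i _ (hG i) ((X i).transpose.mulVec w')
      have e1 : ∑ j, ((X i).transpose.mulVec w') j * (-(β i)) j
          = -∑ j, ((X i).transpose.mulVec w') j * β i j := by
        rw [← Finset.sum_neg_distrib]
        exact Finset.sum_congr rfl fun j _ => by simp only [Pi.neg_apply]; ring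
      rw [e1] at h
      linarith
    have hsum := Finset.sum_le_sum (fun i (_ : i ∈ Finset.univ) => hBi i)
    have e2 : ∑ i, (-(∑ j, ((X i).transpose.mulVec w') j * β i j)
          - φ i ((X i).transpose.mulVec w'))
        = -(∑ i, ∑ j, ((X i).transpose.mulVec w') j * β i j)
          - ∑ i, φ i ((X i).transpose.mulVec w') := by
      rw [Finset.sum_sub_distrib, Finset.sum_neg_distrib]
    rw [e2] at hsum
    have hneg : ∑ i, -(fR i (-(β i))) = -∑ i, fR i (-(β i)) := Finset.sum_neg_distrib _
    rw [hneg]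
    have m1 := mul_le_mul_of_nonneg_left hsum (show (0:ℝ) ≤ 1/(n:ℝ) by positivity)
    have m2 := mul_le_mul_of_nonneg_left hA (le_of_lt hlam)
    rw [show (∑ j, Ggrad (vmap β) j * vmap β j - g (Ggrad (vmap β))) = Gq (vmap β) from
      (hGqv (vmap β)).symm] at m2
    ring_nf at m1 m2 hwv ⊢
    linarith [m1, m2, hwv]
  -- initial values
  have hP0 : P 0 ≤ 1 := by
    rw [hP]
    have e1 : ∀ i : Fin n, φ i ((X i).transpose.mulVec 0) = φ i 0 := by
      intro i; rw [Matrix.mulVec_zero]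
    rw [Finset.sum_congr rfl (fun i (_ : i ∈ Finset.univ) => e1 i), hgzero]
    simpa using hφzero
  have hfR0 : ∀ i : Fin n, fR i (-((0 : Fin n → Fin k → ℝ) i)) ≤ 0 := by
    intro i
    have h := good0 i
    have h2 := fconj0_le i
    have h0 : -((0 : Fin n → Fin k → ℝ) i) = (0 : Fin k → ℝ) := by simp
    rw [h0] at h ⊢
    rw [h] at h2
    exact_mod_cast h2
  have hvmap0 : vmap (0 : Fin n → Fin k → ℝ) = 0 := by
    rw [hvmap]
    simp
  have hGq0 : Gq (0 : Fin d → ℝ) = 0 := by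
    have h1 := hGgrad 0 0
    rw [hgzero] at h1
    have h1' : 0 ≤ Gq 0 := by
      rw [hGqv]
      have e0 : ∑ j, (0 : Fin d → ℝ) j * (0 : Fin d → ℝ) j = 0 := by simp
      rw [e0] at h1
      rw [show (∑ j, Ggrad (0:Fin d → ℝ) j * (0:Fin d → ℝ) j)
        = ∑ j, Ggrad (0:Fin d → ℝ) j * (0:Fin d → ℝ) j from rfl]
      linarith
    have h2 : Gq 0 ≤ 0 := by
      rw [hGqv]
      have e0 : ∑ j, Ggrad (0 : Fin d → ℝ) j * (0 : Fin d → ℝ) j = 0 := by simp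
      rw [e0]
      linarith [hgnonneg (Ggrad (0 : Fin d → ℝ))]
    linarith
  have hDr0 : 0 ≤ Dr (0 : Fin n → Fin k → ℝ) := by
    rw [hDrv, hvmap0, hGq0]
    have hsum : 0 ≤ ∑ i, -(fR i (-((0 : Fin n → Fin k → ℝ) i))) :=
      Finset.sum_nonneg (fun i _ => by linarith [hfR0 i])
    have h1 : (0:ℝ) ≤ 1/(n:ℝ) := by positivity
    have := mul_nonneg h1 hsum
    linarith

  -- ====================== probabilistic part ======================
  intro T₀ T hTT hcond
  have hTpos : (0:ℝ) < (T:ℝ) - (T₀:ℝ) := by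
    have : (T₀:ℝ) < T := by exact_mod_cast hTT
    linarith
  set C : ℝ := (n : ℝ) + R^2/(lam*γ) with hC
  have hRlg : (0:ℝ) ≤ R^2/(lam*γ) := by positivity
  have hC1 : 1 ≤ C := by rw [hC]; linarith
  have hCpos : 0 < C := lt_of_lt_of_le one_pos hC1
  have hCne : C ≠ 0 := ne_of_gt hCpos
  have hsC : s0 / (n:ℝ) = 1 / C := by
    rw [hs0def, hC]
    field_simp
    ring
  set ωf : (Fin T → Fin n) → ℕ → Fin n :=
    fun σ s => if h : s < T then σ ⟨s, h⟩ else ⟨0, hn⟩ with hωf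
  set A : ℕ → (Fin T → Fin n) → (Fin n → Fin k → ℝ) := fun t σ => αseq (ωf σ) t with hA
  set DD : ℕ → (Fin T → Fin n) → ℝ := fun t σ => Dr (A t σ) with hDD
  set GapR : ℕ → (Fin T → Fin n) → ℝ :=
    fun t σ => P (Ggrad (vmap (A t σ))) - Dr (A t σ) with hGapR
  have hgoodA : ∀ (t : ℕ) (σ : Fin T → Fin n),
      ∀ i, fconj i (-(A t σ i)) = ((fR i (-(A t σ i)) : ℝ) : EReal) := by
    intro t σ
    simp only [hA]
    exact good_traj _ _
  have hccard : Fintype.card (Fin T → Fin n) = n^T := by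
    rw [Fintype.card_fun, Fintype.card_fin, Fintype.card_fin]
  have h1s0n : 0 ≤ 1 - s0/(n:ℝ) := by
    have : s0/(n:ℝ) ≤ 1 := by
      rw [div_le_one hnR]; linarith [hs0le1, hn1]
    linarith
  -- one expected step
  have hstep : ∀ t, t < T →
      ∑ σ : Fin T → Fin n, DD t σ + (s0/(n:ℝ)) * ∑ σ : Fin T → Fin n, GapR t σ
        ≤ ∑ σ : Fin T → Fin n, DD (t+1) σ := by
    intro t ht
    have hcount := aux_update_sum (⟨t, ht⟩ : Fin T) (DD (t+1))
    rw [Fintype.card_fin] at hcount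
    have hσ : ∀ σ : Fin T → Fin n,
        (n:ℝ) * DD t σ + s0 * GapR t σ
          ≤ ∑ j, DD (t+1) (Function.update σ ⟨t, ht⟩ j) := by
      intro σ
      have hj : ∀ j : Fin n,
          DD t σ + (s0/(n:ℝ)) * gcol (A t σ) j
            ≤ DD (t+1) (Function.update σ ⟨t, ht⟩ j) := by
        intro j
        have hagree : αseq (ωf (Function.update σ ⟨t, ht⟩ j)) t = A t σ := by
          simp only [hA]
          apply hadapt
          intro s hs
          have hsT : s < T := lt_trans hs ht
          simp only [hωf]
          rw [dif_pos hsT, dif_pos hsT,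
            Function.update_of_ne (Fin.ne_of_val_ne (Nat.ne_of_lt hs))]
        have hidx : ωf (Function.update σ ⟨t, ht⟩ j) t = j := by
          simp only [hωf]
          rw [dif_pos ht, Function.update_self]
        have hk := (key (ωf (Function.update σ ⟨t, ht⟩ j)) t
          (good_traj (ωf (Function.update σ ⟨t, ht⟩ j)) t)).2
        rw [hagree, hidx] at hk
        calc DD t σ + (s0/(n:ℝ)) * gcol (A t σ) j
            = Dr (A t σ) + (s0/(n:ℝ)) * gcol (A t σ) j := by simp only [hDD]
          _ ≤ Dr (αseq (ωf (Function.update σ ⟨t, ht⟩ j)) (t+1)) := hk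
          _ = DD (t+1) (Function.update σ ⟨t, ht⟩ j) := by simp only [hDD, hA]
      have hsum := Finset.sum_le_sum (fun j (_ : j ∈ Finset.univ) => hj j)
      have hgap : GapR t σ = (1/(n:ℝ)) * ∑ j, gcol (A t σ) j := by
        simp only [hGapR]
        exact gap_eq (A t σ) (hgoodA t σ)
      have hL : ∑ j : Fin n, (DD t σ + (s0/(n:ℝ)) * gcol (A t σ) j)
          = (n:ℝ) * DD t σ + s0 * GapR t σ := by
        rw [Finset.sum_add_distrib, Finset.sum_const, ← Finset.mul_sum, hgap,
          Finset.card_univ, Fintype.card_fin, nsmul_eq_mul]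
        field_simp
      rw [hL] at hsum
      exact hsum
    have htot := Finset.sum_le_sum (fun σ (_ : σ ∈ Finset.univ) => hσ σ)
    rw [hcount, Finset.sum_add_distrib, ← Finset.mul_sum, ← Finset.mul_sum] at htot
    have h9 : (n:ℝ) * (∑ σ : Fin T → Fin n, DD t σ
          + (s0/(n:ℝ)) * ∑ σ : Fin T → Fin n, GapR t σ)
        = (n:ℝ) * ∑ σ : Fin T → Fin n, DD t σ
          + s0 * ∑ σ : Fin T → Fin n, GapR t σ := by
      field_simp
    have h10 : (n:ℝ) * (∑ σ : Fin T → Fin n, DD t σ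
          + (s0/(n:ℝ)) * ∑ σ : Fin T → Fin n, GapR t σ)
        ≤ (n:ℝ) * ∑ σ : Fin T → Fin n, DD (t+1) σ := by
      rw [h9]; exact htot
    exact le_of_mul_le_mul_left h10 hnR
  -- contraction towards the best reachable dual value
  have hne : Nonempty (Fin T → Fin n) := ⟨fun _ => ⟨0, hn⟩⟩
  obtain ⟨σstar, _, hmax⟩ := Finset.exists_max_image (Finset.univ : Finset (Fin T → Fin n))
    (DD T) Finset.univ_nonempty
  set Dβ : ℝ := DD T σstar with hDβ
  have hDβub : Dβ ≤ 1 := by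
    have h := weak_dual 0 (A T σstar) (hgoodA T σstar)
    have e : Dβ = Dr (A T σstar) := by simp only [hDβ, hDD]
    rw [e]
    linarith [hP0]
  have hgap_ge : ∀ t σ, Dβ - DD t σ ≤ GapR t σ := by
    intro t σ
    have h1 := weak_dual (Ggrad (vmap (A t σ))) (A T σstar) (hgoodA T σstar)
    have e : Dβ = Dr (A T σstar) := by simp only [hDβ, hDD]
    have e2 : DD t σ = Dr (A t σ) := by simp only [hDD]
    have e3 : GapR t σ = P (Ggrad (vmap (A t σ))) - Dr (A t σ) := by simp only [hGapR]
    rw [e, e2, e3]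
    linarith
  set E : ℕ → ℝ := fun m => ∑ σ : Fin T → Fin n, (Dβ - DD m σ) with hE
  have eE : ∀ m, E m = ((n:ℝ)^T) * Dβ - ∑ σ : Fin T → Fin n, DD m σ := by
    intro m
    simp only [hE]
    rw [Finset.sum_sub_distrib, Finset.sum_const, Finset.card_univ, hccard]
    rw [nsmul_eq_mul]
    push_cast
    ring
  have hcontr : ∀ t, t < T → E (t+1) ≤ (1 - s0/(n:ℝ)) * E t := by
    intro t ht
    have h1 := hstep t ht
    have h2' : E t ≤ ∑ σ : Fin T → Fin n, GapR t σ := by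
      simp only [hE]
      exact Finset.sum_le_sum (fun σ _ => hgap_ge t σ)
    have h3 := mul_le_mul_of_nonneg_left h2' (le_of_lt (div_pos hs0pos hnR))
    have h4 : E (t+1) = E t - ((∑ σ : Fin T → Fin n, DD (t+1) σ)
        - ∑ σ : Fin T → Fin n, DD t σ) := by
      rw [eE (t+1), eE t]; ring
    have hx : (1 - s0/(n:ℝ)) * E t = E t - (s0/(n:ℝ)) * E t := by ring
    rw [h4, hx]
    linarith [h1, h3]
  have hpow : ∀ m, m ≤ T₀ → E m ≤ (1 - s0/(n:ℝ))^m * E 0 := by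
    intro m
    induction m with
    | zero => intro _; simp
    | succ m ih =>
      intro hm
      have hmT : m < T := lt_of_lt_of_le (Nat.lt_of_lt_of_le (Nat.lt_succ_self m) hm)
        (le_of_lt hTT)
      have h1 := hcontr m hmT
      have h2 := ih (Nat.le_of_succ_le hm)
      calc E (m+1) ≤ (1 - s0/(n:ℝ)) * E m := h1
        _ ≤ (1 - s0/(n:ℝ)) * ((1 - s0/(n:ℝ))^m * E 0) :=
            mul_le_mul_of_nonneg_left h2 h1s0n
        _ = (1 - s0/(n:ℝ))^(m+1) * E 0 := by ring
  have hE0 : E 0 ≤ (n:ℝ)^T := by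
    have e2 : ∀ σ : Fin T → Fin n, Dβ - DD 0 σ ≤ 1 := by
      intro σ
      have h : DD 0 σ = Dr 0 := by
        simp only [hDD, hA]
        rw [hinit]
      rw [h]
      linarith [hDβub, hDr0]
    simp only [hE]
    calc ∑ σ : Fin T → Fin n, (Dβ - DD 0 σ) ≤ ∑ _σ : Fin T → Fin n, (1:ℝ) :=
        Finset.sum_le_sum (fun σ _ => e2 σ)
      _ = (n:ℝ)^T := by
        rw [Finset.sum_const, Finset.card_univ, hccard, nsmul_eq_mul]
        push_cast
        ring
  -- telescoping over the window
  have htele : (s0/(n:ℝ)) * ∑ t ∈ Finset.Ico T₀ T, ∑ σ : Fin T → Fin n, GapR t σ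
      ≤ (∑ σ : Fin T → Fin n, DD T σ) - ∑ σ : Fin T → Fin n, DD T₀ σ := by
    have hterm : ∀ t ∈ Finset.Ico T₀ T,
        (s0/(n:ℝ)) * ∑ σ : Fin T → Fin n, GapR t σ
          ≤ (∑ σ : Fin T → Fin n, DD (t+1) σ) - ∑ σ : Fin T → Fin n, DD t σ := by
      intro t htm
      obtain ⟨_, h2⟩ := Finset.mem_Ico.1 htm
      have := hstep t h2
      linarith
    calc (s0/(n:ℝ)) * ∑ t ∈ Finset.Ico T₀ T, ∑ σ : Fin T → Fin n, GapR t σ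
        = ∑ t ∈ Finset.Ico T₀ T, (s0/(n:ℝ)) * ∑ σ : Fin T → Fin n, GapR t σ :=
          Finset.mul_sum _ _ _
      _ ≤ ∑ t ∈ Finset.Ico T₀ T, ((fun m => ∑ σ : Fin T → Fin n, DD m σ) (t+1)
            - (fun m => ∑ σ : Fin T → Fin n, DD m σ) t) :=
          Finset.sum_le_sum hterm
      _ = (∑ σ : Fin T → Fin n, DD T σ) - ∑ σ : Fin T → Fin n, DD T₀ σ := by
          rw [Finset.sum_Ico_eq_sub _ (le_of_lt hTT),
            Finset.sum_range_sub (fun m => ∑ σ : Fin T → Fin n, DD m σ),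
            Finset.sum_range_sub (fun m => ∑ σ : Fin T → Fin n, DD m σ)]
          ring
  have hDTle : (∑ σ : Fin T → Fin n, DD T σ) - ∑ σ : Fin T → Fin n, DD T₀ σ ≤ E T₀ := by
    have h1 : ∑ σ : Fin T → Fin n, DD T σ ≤ ∑ _σ : Fin T → Fin n, Dβ :=
      Finset.sum_le_sum (fun σ _ => hmax σ (Finset.mem_univ σ))
    rw [Finset.sum_const, Finset.card_univ, hccard, nsmul_eq_mul] at h1
    rw [eE T₀]
    push_cast at h1
    linarith
  -- the total bound on the window sum
  have hWle : ∑ t ∈ Finset.Ico T₀ T, ∑ σ : Fin T → Fin n, GapR t σ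
      ≤ C * ((1 - 1/C)^T₀ * (n:ℝ)^T) := by
    have hp0 : (0:ℝ) ≤ (1 - s0/(n:ℝ))^T₀ := pow_nonneg h1s0n _
    have h2 : E T₀ ≤ (1 - s0/(n:ℝ))^T₀ * (n:ℝ)^T :=
      le_trans (hpow T₀ le_rfl) (mul_le_mul_of_nonneg_left hE0 hp0)
    have h3 : (s0/(n:ℝ)) * ∑ t ∈ Finset.Ico T₀ T, ∑ σ : Fin T → Fin n, GapR t σ
        ≤ (1 - s0/(n:ℝ))^T₀ * (n:ℝ)^T := by linarith [htele, hDTle]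
    rw [hsC] at h3
    calc ∑ t ∈ Finset.Ico T₀ T, ∑ σ : Fin T → Fin n, GapR t σ
        = C * ((1/C) * ∑ t ∈ Finset.Ico T₀ T, ∑ σ : Fin T → Fin n, GapR t σ) := by
          field_simp
      _ ≤ C * ((1 - 1/C)^T₀ * (n:ℝ)^T) := mul_le_mul_of_nonneg_left h3 (le_of_lt hCpos)
  -- numeric estimates
  have hexp1 : (1 - 1/C)^T₀ ≤ Real.exp (-((T₀:ℝ)/C)) := by
    have ha : 0 ≤ 1 - 1/C := by
      have : 1/C ≤ 1 := by rw [div_le_one hCpos]; exact hC1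
      linarith
    have hb : 1 - 1/C ≤ Real.exp (-(1/C)) := by
      have := Real.add_one_le_exp (-(1/C))
      linarith
    calc (1 - 1/C)^T₀ ≤ (Real.exp (-(1/C)))^T₀ := pow_le_pow_left₀ ha hb T₀
      _ = Real.exp (-((T₀:ℝ)/C)) := by
        rw [← Real.exp_nat_mul]
        congr 1
        field_simp
  have hlogle : Real.log (C / (((T:ℝ) - (T₀:ℝ)) * εP)) ≤ (T₀:ℝ)/C := by
    rw [le_div_iff₀ hCpos]
    linarith [hcond]
  have hfinal : C * Real.exp (-((T₀:ℝ)/C)) ≤ ((T:ℝ) - (T₀:ℝ)) * εP := by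
    have hx : (0:ℝ) < C / (((T:ℝ) - (T₀:ℝ)) * εP) := by positivity
    have h1 : C / (((T:ℝ) - (T₀:ℝ)) * εP) ≤ Real.exp ((T₀:ℝ)/C) := by
      calc C / (((T:ℝ) - (T₀:ℝ)) * εP)
          = Real.exp (Real.log (C / (((T:ℝ) - (T₀:ℝ)) * εP))) := (Real.exp_log hx).symm
        _ ≤ Real.exp ((T₀:ℝ)/C) := Real.exp_le_exp.2 hlogle
    have hepos : 0 < Real.exp ((T₀:ℝ)/C) := Real.exp_pos _
    have h2 : C ≤ Real.exp ((T₀:ℝ)/C) * (((T:ℝ) - (T₀:ℝ)) * εP) := by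
      rw [div_le_iff₀ (by positivity)] at h1
      linarith [h1]
    have h3 : Real.exp (-((T₀:ℝ)/C)) = (Real.exp ((T₀:ℝ)/C))⁻¹ := Real.exp_neg _
    rw [h3]
    calc C * (Real.exp ((T₀:ℝ)/C))⁻¹
        ≤ (Real.exp ((T₀:ℝ)/C) * (((T:ℝ) - (T₀:ℝ)) * εP)) * (Real.exp ((T₀:ℝ)/C))⁻¹ :=
          mul_le_mul_of_nonneg_right h2 (le_of_lt (inv_pos.2 hepos))
      _ = ((T:ℝ) - (T₀:ℝ)) * εP := by field_simp
  -- reindexing the window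
  have himg : Finset.Icc (T₀+1) T = Finset.image (fun t => t+1) (Finset.Ico T₀ T) := by
    ext x
    simp only [Finset.mem_Icc, Finset.mem_image, Finset.mem_Ico]
    constructor
    · rintro ⟨h1, h2⟩
      exact ⟨x - 1, ⟨by omega, by omega⟩, by omega⟩
    · rintro ⟨y, ⟨h1, h2⟩, rfl⟩
      omega
  have hreidx : ∀ σ : Fin T → Fin n,
      ∑ t ∈ Finset.Icc (T₀+1) T, GapR (t-1) σ = ∑ t ∈ Finset.Ico T₀ T, GapR t σ := by
    intro σ
    rw [himg, Finset.sum_image (fun a _ b _ h => by omega)]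
    exact Finset.sum_congr rfl fun t _ => rfl
  have hW : ∑ σ : Fin T → Fin n, ∑ t ∈ Finset.Icc (T₀+1) T, GapR (t-1) σ
      = ∑ t ∈ Finset.Ico T₀ T, ∑ σ : Fin T → Fin n, GapR t σ := by
    calc ∑ σ : Fin T → Fin n, ∑ t ∈ Finset.Icc (T₀+1) T, GapR (t-1) σ
        = ∑ σ : Fin T → Fin n, ∑ t ∈ Finset.Ico T₀ T, GapR t σ :=
          Finset.sum_congr rfl fun σ _ => hreidx σ
      _ = ∑ t ∈ Finset.Ico T₀ T, ∑ σ : Fin T → Fin n, GapR t σ := Finset.sum_comm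
  -- the real-valued main bound
  have hmain : (1/(n:ℝ)^T) * ∑ σ : Fin T → Fin n,
      ((1/((T:ℝ) - (T₀:ℝ))) * ∑ t ∈ Finset.Icc (T₀+1) T, GapR (t-1) σ) ≤ εP := by
    have e6 : ∑ σ : Fin T → Fin n,
        ((1/((T:ℝ) - (T₀:ℝ))) * ∑ t ∈ Finset.Icc (T₀+1) T, GapR (t-1) σ)
        = (1/((T:ℝ) - (T₀:ℝ)))
          * ∑ σ : Fin T → Fin n, ∑ t ∈ Finset.Icc (T₀+1) T, GapR (t-1) σ :=
      (Finset.mul_sum _ _ _).symm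
    rw [e6, hW]
    have c1 : (0:ℝ) ≤ (1/(n:ℝ)^T) * (1/((T:ℝ) - (T₀:ℝ))) := by positivity
    have hnTne : ((n:ℝ)^T) ≠ 0 := by positivity
    calc (1/(n:ℝ)^T) * ((1/((T:ℝ) - (T₀:ℝ)))
          * ∑ t ∈ Finset.Ico T₀ T, ∑ σ : Fin T → Fin n, GapR t σ)
        = ((1/(n:ℝ)^T) * (1/((T:ℝ) - (T₀:ℝ))))
          * ∑ t ∈ Finset.Ico T₀ T, ∑ σ : Fin T → Fin n, GapR t σ := by ring
      _ ≤ ((1/(n:ℝ)^T) * (1/((T:ℝ) - (T₀:ℝ)))) * (C * ((1 - 1/C)^T₀ * (n:ℝ)^T)) :=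
          mul_le_mul_of_nonneg_left hWle c1
      _ = (C * (1 - 1/C)^T₀) / ((T:ℝ) - (T₀:ℝ)) := by
          field_simp
      _ ≤ (C * Real.exp (-((T₀:ℝ)/C))) / ((T:ℝ) - (T₀:ℝ)) := by
          apply (div_le_div_iff_of_pos_right hTpos).2
          exact mul_le_mul_of_nonneg_left hexp1 (le_of_lt hCpos)
      _ ≤ εP := by
          rw [div_le_iff₀ hTpos]
          linarith [hfinal]
  -- bridge to EReal
  have hterm_eq : ∀ (σ : Fin T → Fin n), ∀ t ∈ Finset.Icc (T₀+1) T,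
      (((P (Ggrad (vmap (αseq (fun s => if h : s < T then σ ⟨s, h⟩ else ⟨0, hn⟩) (t - 1)))) : ℝ) : EReal)
        - D (αseq (fun s => if h : s < T then σ ⟨s, h⟩ else ⟨0, hn⟩) (t - 1)))
      = ((GapR (t-1) σ : ℝ) : EReal) := by
    intro σ t _
    rw [Dcoe (αseq (fun s => if h : s < T then σ ⟨s, h⟩ else ⟨0, hn⟩) (t - 1))
      (good_traj (fun s => if h : s < T then σ ⟨s, h⟩ else ⟨0, hn⟩) (t - 1)),
      ← EReal.coe_sub]
  calc ((1 / (n : ℝ) ^ T : ℝ) : EReal) * ∑ σ : Fin T → Fin n,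
        (((1 / ((T : ℝ) - (T₀ : ℝ)) : ℝ) : EReal) * ∑ t ∈ Finset.Icc (T₀ + 1) T,
          (((P (Ggrad (vmap (αseq (fun s => if h : s < T then σ ⟨s, h⟩ else ⟨0, hn⟩) (t - 1)))) : ℝ) : EReal)
            - D (αseq (fun s => if h : s < T then σ ⟨s, h⟩ else ⟨0, hn⟩) (t - 1))))
      = (((1/(n:ℝ)^T) * ∑ σ : Fin T → Fin n,
          ((1/((T:ℝ) - (T₀:ℝ))) * ∑ t ∈ Finset.Icc (T₀+1) T, GapR (t-1) σ) : ℝ) : EReal) := by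
        rw [EReal.coe_mul, aux_coe_sum]
        congr 1
        refine Finset.sum_congr rfl fun σ _ => ?_
        rw [EReal.coe_mul, aux_coe_sum]
        congr 1
        exact Finset.sum_congr rfl fun t ht => hterm_eq σ t ht
    _ ≤ ((εP : ℝ) : EReal) := EReal.coe_le_coe_iff.2 hmain
end
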